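/- arXiv:0903.3753 — 6 statements merged into one kernel-verified Lean document; each statement's English description precedes it below -/
import Mathlib

section
/- For integers k and n with 3 ≤ k ≤ n−1, α_k(n−1) = k + Σ_{j=3}^{k} (j−2) · α_k(n−j) + (k−1) · Σ_{j=0}^{n−k−1} α_k(j). -/
/-- All binary words of length `n` (`false` = 0, `true` = 1), listed in lexicographic order. -/
def allWords : ℕ → List (List Bool)
  | 0 => [[]]
  | n + 1 => (allWords n).flatMap (fun w => [w ++ [false], w ++ [true]])

/-- The skew of a binary word: number of 0s minus number of 1s. -/
def skew (w : List Bool) : ℤ := (w.map (fun b => if b then (-1 : ℤ) else 1)).sum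

/-- The discrepancy of a binary word: the maximum over all (nonempty) initial
segments of the absolute difference between the number of 0s and of 1s. -/
def disc (w : List Bool) : ℤ :=
  ((List.range w.length).map (fun M => |skew (w.take (M + 1))|)).foldr max 0

/-- `w` contains a run of `k` consecutive 0s. -/
def hasZeroRun (k : ℕ) (w : List Bool) : Prop := List.replicate k false <:+: w

instance (k : ℕ) : DecidablePred (hasZeroRun k) := fun _ => inferInstanceAs (Decidable (_ <:+: _))

/-- Number of binary words of length `n` containing no run of `k` consecutive 0s. -/
def alpha (k n : ℕ) : ℕ := ((allWords n).filter (fun w => !decide (hasZeroRun k w))).length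

/-- Sum of the skews of all binary words of length `n` containing no run of `k` consecutive 0s. -/
def beta (k n : ℕ) : ℤ :=
  (((allWords n).filter (fun w => !decide (hasZeroRun k w))).map skew).sum

/-- Strict lexicographic order on binary words, with 0 < 1. -/
def lexLt (u v : List Bool) : Prop := List.Lex (· < ·) u v

instance : DecidableRel lexLt := fun _ _ => inferInstanceAs (Decidable (List.Lex _ _ _))

/-- Weak lexicographic order on binary words. -/
def lexLe (u v : List Bool) : Prop := lexLt u v ∨ u = v

instance : DecidableRel lexLe := fun _ _ => inferInstanceAs (Decidable (_ ∨ _))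

/-- A binary Lyndon word: nonempty and strictly lexicographically smaller than
each of its nontrivial cyclic rotations. -/
def IsLyndon (w : List Bool) : Prop :=
  w ≠ [] ∧ ∀ i ∈ Finset.Ico 1 w.length, lexLt w (w.rotate i)

instance : DecidablePred IsLyndon := fun _ => inferInstanceAs (Decidable (_ ∧ _))

/-- `ell n k`: the concatenation, in lexicographic order, of all binary Lyndon words of
length `n` whose longest run of consecutive 0s has length exactly `k`. -/
def ell (n k : ℕ) : List Bool :=
  (List.insertionSort lexLe ((allWords n).filter (fun w =>
    decide (IsLyndon w) && decide (hasZeroRun k w) && !decide (hasZeroRun (k + 1) w)))).flatten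

/-- `LWord n`: the lexicographically least binary de Bruijn sequence of order `n`, i.e. the
concatenation, in lexicographic order, of all binary Lyndon words of length dividing `n`. -/
def LWord (n : ℕ) : List Bool :=
  (List.insertionSort lexLe (((List.range (n + 1)).flatMap allWords).filter
    (fun w => decide (IsLyndon w) && decide (w.length ∣ n)))).flatten

/-- The number of occurrences of `0^k` as a subword of `w`. -/
def occCount (k : ℕ) (w : List Bool) : ℕ :=
  ((List.range (w.length + 1)).filter
    (fun i => decide (List.replicate k false <+: w.drop i))).length

-- infix/suffix lemmas
lemma concat_inj' {α} {u s v t : List α} {a b : α} (h : u ++ s ++ (v ++ [b]) = t ++ [a]) :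
    u ++ s ++ v = t ∧ b = a := by
  have h2 : (u ++ s ++ v) ++ [b] = t ++ [a] := by rw [← h]; simp
  rw [← List.concat_eq_append, ← List.concat_eq_append] at h2
  exact List.concat_inj.mp h2

lemma infix_concat_iff {α} {s t : List α} {a : α} :
    s <:+: t ++ [a] ↔ s <:+: t ∨ s <:+ t ++ [a] := by
  constructor
  · rintro ⟨u, v, h⟩
    rcases List.eq_nil_or_concat v with rfl | ⟨v', b, rfl⟩
    · right; exact ⟨u, by simpa using h⟩
    · left
      rw [List.concat_eq_append] at h
      obtain ⟨h1, rfl⟩ := concat_inj' h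
      exact ⟨u, v', h1⟩
  · rintro (h | h)
    · exact h.trans ⟨[], [a], by simp⟩
    · exact h.isInfix

lemma suffix_concat_iff {α} {s t : List α} {a b : α} :
    s ++ [b] <:+ t ++ [a] ↔ s <:+ t ∧ b = a := by
  constructor
  · rintro ⟨u, h⟩
    have h2 : (u ++ s) ++ [b] = t ++ [a] := by rw [← h]; simp
    rw [← List.concat_eq_append, ← List.concat_eq_append] at h2
    obtain ⟨h1, rfl⟩ := List.concat_inj.mp h2
    exact ⟨⟨u, h1⟩, rfl⟩
  · rintro ⟨⟨u, rfl⟩, rfl⟩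
    exact ⟨u, by simp⟩

lemma rep_suffix_concat_false {r : ℕ} {w : List Bool} :
    List.replicate (r+1) false <:+ w ++ [false] ↔ List.replicate r false <:+ w := by
  rw [List.replicate_succ', suffix_concat_iff]; simp

lemma rep_suffix_concat_true {r : ℕ} {w : List Bool} :
    ¬ (List.replicate (r+1) false <:+ w ++ [true]) := by
  rw [List.replicate_succ', suffix_concat_iff]; simp

lemma hzr_concat_true {k : ℕ} (hk : 1 ≤ k) {w : List Bool} :
    hasZeroRun k (w ++ [true]) ↔ hasZeroRun k w := by
  unfold hasZeroRun
  rw [infix_concat_iff]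
  constructor
  · rintro (h | h)
    · exact h
    · obtain ⟨r, rfl⟩ := Nat.exists_eq_add_of_le hk
      rw [Nat.add_comm] at h
      exact absurd h rep_suffix_concat_true
  · exact Or.inl

lemma hzr_concat_false {k : ℕ} (hk : 1 ≤ k) {w : List Bool} :
    hasZeroRun k (w ++ [false]) ↔ hasZeroRun k w ∨ List.replicate (k-1) false <:+ w := by
  obtain ⟨r, rfl⟩ := Nat.exists_eq_add_of_le hk
  unfold hasZeroRun
  rw [infix_concat_iff]
  have : (1 + r) = r + 1 := Nat.add_comm 1 r
  rw [this]
  simp [rep_suffix_concat_false]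

lemma rep_suffix_mono {r s : ℕ} (h : r ≤ s) {w : List Bool} :
    List.replicate s false <:+ w → List.replicate r false <:+ w := by
  intro hs
  refine List.IsSuffix.trans ?_ hs
  obtain ⟨d, rfl⟩ := Nat.exists_eq_add_of_le h
  rw [Nat.add_comm, List.replicate_add]
  exact ⟨_, rfl⟩

lemma suffix_isInfix {α} {s t : List α} (h : s <:+ t) : s <:+: t := h.isInfix

-- counting layer
def cnt (n : ℕ) (p : List Bool → Bool) : ℕ := ((allWords n).filter p).length

def good (k : ℕ) (w : List Bool) : Bool := !decide (hasZeroRun k w)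
def trailB (r : ℕ) (w : List Bool) : Bool := decide (List.replicate r false <:+ w)

lemma alpha_eq_cnt (k n : ℕ) : alpha k n = cnt n (good k) := rfl

lemma cnt_flat (l : List (List Bool)) (p : List Bool → Bool) :
    ((l.flatMap fun w => [w ++ [false], w ++ [true]]).filter p).length
      = (l.filter fun w => p (w ++ [false])).length
        + (l.filter fun w => p (w ++ [true])).length := by
  induction l with
  | nil => simp
  | cons w l ih =>
    simp only [List.flatMap_cons, List.filter_append, List.length_append, ih, List.filter_cons]
    by_cases h1 : p (w ++ [false]) <;> by_cases h2 : p (w ++ [true]) <;>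
      simp [h1, h2] <;> omega

lemma cnt_succ (n : ℕ) (p : List Bool → Bool) :
    cnt (n+1) p = cnt n (fun w => p (w ++ [false])) + cnt n (fun w => p (w ++ [true])) := by
  unfold cnt
  rw [show allWords (n+1) = (allWords n).flatMap (fun w => [w ++ [false], w ++ [true]]) from rfl]
  exact cnt_flat _ p

lemma cnt_congr {n : ℕ} {p q : List Bool → Bool} (h : ∀ w ∈ allWords n, p w = q w) :
    cnt n p = cnt n q := by
  unfold cnt; rw [List.filter_congr h]

lemma split_flat (l : List (List Bool)) (p q : List Bool → Bool) :
    (l.filter fun w => p w && q w).length + (l.filter fun w => p w && !q w).length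
      = (l.filter p).length := by
  induction l with
  | nil => simp
  | cons w l ih =>
    simp only [List.filter_cons]
    by_cases h1 : p w <;> by_cases h2 : q w <;> simp [h1, h2] <;> omega

lemma cnt_split (n : ℕ) (p q : List Bool → Bool) :
    cnt n (fun w => p w && q w) + cnt n (fun w => p w && !q w) = cnt n p :=
  split_flat _ p q

lemma cnt_true (n : ℕ) : cnt n (fun _ => true) = 2 ^ n := by
  induction n with
  | zero => rfl
  | succ n ih => rw [cnt_succ]; simpa [ih] using by ring

lemma mem_allWords_length {n : ℕ} {w : List Bool} (h : w ∈ allWords n) : w.length = n := by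
  induction n generalizing w with
  | zero => simp [allWords] at h; simp [h]
  | succ n ih =>
    simp only [allWords, List.mem_flatMap] at h
    obtain ⟨u, hu, hw⟩ := h
    simp only [List.mem_cons, List.mem_singleton, List.not_mem_nil] at hw
    rcases hw with h | h | h
    · simp [h, ih hu]
    · simp [h, ih hu]
    · exact absurd h (by simp)

lemma alpha_small {k m : ℕ} (h : m < k) : alpha k m = 2 ^ m := by
  rw [alpha_eq_cnt, ← cnt_true m]
  apply cnt_congr
  intro w hw
  suffices hn : ¬ hasZeroRun k w by simp [good, hn]
  intro hz
  have := hz.length_le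
  simp [mem_allWords_length hw] at this
  omega

-- e-layer
def eee (k r n : ℕ) : ℕ := cnt n (fun w => good k w && trailB r w && !trailB (r+1) w)

lemma good_concat_true {k : ℕ} (hk : 1 ≤ k) (w : List Bool) :
    good k (w ++ [true]) = good k w := by
  simp [good, hzr_concat_true hk]

lemma good_concat_false {k : ℕ} (hk : 1 ≤ k) (w : List Bool) :
    good k (w ++ [false]) = (good k w && !trailB (k-1) w) := by
  simp [good, trailB, hzr_concat_false hk]

lemma trailB_concat_false (r : ℕ) (w : List Bool) :
    trailB (r+1) (w ++ [false]) = trailB r w := by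
  simp [trailB, rep_suffix_concat_false]

lemma trailB_concat_true (r : ℕ) (w : List Bool) :
    trailB (r+1) (w ++ [true]) = false := by
  simp [trailB, rep_suffix_concat_true]

lemma trailB_zero (w : List Bool) : trailB 0 w = true := by simp [trailB]

lemma trailB_one_concat_false (w : List Bool) : trailB 1 (w ++ [false]) = true := by
  simp only [trailB, decide_eq_true_eq]
  exact ⟨w, by simp [List.replicate]⟩

lemma cnt_false (n : ℕ) : cnt n (fun _ => false) = 0 := by simp [cnt]

lemma L3 {k : ℕ} (hk : 1 ≤ k) (n : ℕ) :
    alpha k (n+1) + eee k (k-1) n = 2 * alpha k n := by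
  have h1 : alpha k (n+1) = cnt n (fun w => good k w && !trailB (k-1) w)
      + cnt n (fun w => good k w) := by
    rw [alpha_eq_cnt, cnt_succ]
    congr 1
    · exact cnt_congr (fun w _ => good_concat_false hk w)
    · exact cnt_congr (fun w _ => good_concat_true hk w)
  have h2 : eee k (k-1) n = cnt n (fun w => good k w && trailB (k-1) w) := by
    apply cnt_congr; intro w _
    by_cases hg : hasZeroRun k w
    · simp [good, hg]
    · have hkk : ¬ (List.replicate ((k-1)+1) false <:+ w) := by
        intro hs
        rw [show (k-1)+1 = k from by omega] at hs
        exact hg hs.isInfix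
      simp [good, trailB, hg, hkk]
  have h3 := cnt_split n (fun w => good k w) (fun w => trailB (k-1) w)
  have h4 : alpha k n = cnt n (fun w => good k w) := alpha_eq_cnt k n
  omega

lemma e_zero_zero {k : ℕ} (hk : 1 ≤ k) : eee k 0 0 = 1 := by
  have hg : good k [] = true := by
    simp only [good, hasZeroRun, List.infix_nil, Bool.not_eq_true', decide_eq_false_iff_not]
    simp [List.replicate_eq_nil_iff]
    omega
  have ht : trailB 1 [] = false := by
    simp [trailB, List.suffix_nil, List.replicate_eq_nil_iff]
  show ((allWords 0).filter _).length = 1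
  simp [allWords, hg, ht, trailB_zero]

lemma e_base {k : ℕ} (hk : 1 ≤ k) (n : ℕ) : eee k 0 (n+1) = alpha k n := by
  unfold eee
  rw [cnt_succ]
  have h1 : cnt n (fun w => good k (w ++ [false]) && trailB 0 (w ++ [false])
      && !trailB 1 (w ++ [false])) = 0 := by
    rw [← cnt_false n]
    exact cnt_congr (fun w _ => by simp [trailB_one_concat_false])
  have h2 : cnt n (fun w => good k (w ++ [true]) && trailB 0 (w ++ [true])
      && !trailB 1 (w ++ [true])) = cnt n (fun w => good k w) := by
    apply cnt_congr
    intro w _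
    simp [good_concat_true hk, trailB_zero, trailB_concat_true 0]
  rw [h1, h2, alpha_eq_cnt]
  simp [cnt]

lemma e_step {k r : ℕ} (hr : r + 2 ≤ k) (n : ℕ) : eee k (r+1) (n+1) = eee k r n := by
  unfold eee
  rw [cnt_succ]
  have h2 : cnt n (fun w => good k (w ++ [true]) && trailB (r+1) (w ++ [true])
      && !trailB (r+1+1) (w ++ [true])) = 0 := by
    rw [← cnt_false n]
    exact cnt_congr (fun w _ => by simp [trailB_concat_true])
  have h1 : cnt n (fun w => good k (w ++ [false]) && trailB (r+1) (w ++ [false])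
      && !trailB (r+1+1) (w ++ [false]))
      = cnt n (fun w => good k w && trailB r w && !trailB (r+1) w) := by
    apply cnt_congr
    intro w _
    rw [good_concat_false (by omega), trailB_concat_false, trailB_concat_false]
    by_cases ht : List.replicate (r+1) false <:+ w
    · simp [trailB, ht]
    · have hk1 : ¬ (List.replicate (k-1) false <:+ w) :=
        fun hs => ht (rep_suffix_mono (by omega) hs)
      simp [trailB, ht, hk1]
  rw [h1, h2]
  omega

lemma e_diag {k : ℕ} (hk : 1 ≤ k) : ∀ r, r + 1 ≤ k → eee k r r = 1 := by
  intro r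
  induction r with
  | zero => intro _; exact e_zero_zero hk
  | succ r ih => intro h; rw [e_step (by omega)]; exact ih (by omega)

lemma e_chain {k : ℕ} (hk : 1 ≤ k) : ∀ r, r + 1 ≤ k → ∀ t, eee k r (r + t + 1) = alpha k t := by
  intro r
  induction r with
  | zero => intro _ t; rw [Nat.zero_add]; exact e_base hk t
  | succ r ih =>
    intro h t
    rw [show r + 1 + t + 1 = (r + t + 1) + 1 from by omega, e_step (by omega)]
    exact ih (by omega) t

lemma alpha_at_k {k : ℕ} (hk : 1 ≤ k) : alpha k k + 1 = 2 ^ k := by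
  have h := L3 hk (k-1)
  rw [show k - 1 + 1 = k from by omega] at h
  rw [e_diag hk (k-1) (by omega)] at h
  rw [alpha_small (by omega : k - 1 < k)] at h
  have : 2 * 2 ^ (k-1) = 2 ^ k := by
    rw [← pow_succ']
    congr 1
    omega
  omega

lemma alpha_rec {k : ℕ} (hk : 1 ≤ k) (m : ℕ) :
    alpha k (m + k + 1) + alpha k m = 2 * alpha k (m + k) := by
  have h := L3 hk (m + k)
  rw [show m + k = (k - 1) + m + 1 from by omega] at h
  rw [e_chain hk (k-1) (by omega) m] at h
  rw [show k - 1 + m + 1 = m + k from by omega] at h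
  omega

-- algebra layer
lemma sum_pow (k : ℕ) : (∑ i ∈ Finset.range k, 2 ^ i) + 1 = 2 ^ k := by
  induction k with
  | zero => simp
  | succ k ih => rw [Finset.sum_range_succ, pow_succ]; omega

lemma bigR {k : ℕ} (hk : 1 ≤ k) (m : ℕ) :
    alpha k (m + k) = ∑ i ∈ Finset.range k, alpha k (m + i) := by
  induction m with
  | zero =>
    have h1 : ∑ i ∈ Finset.range k, alpha k (0 + i) = ∑ i ∈ Finset.range k, 2 ^ i :=
      Finset.sum_congr rfl (fun i hi => by
        rw [Nat.zero_add]; exact alpha_small (Finset.mem_range.mp hi))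
    have h2 := sum_pow k
    have h3 := alpha_at_k hk
    rw [Nat.zero_add, h1]; omega
  | succ m ih =>
    have hrec := alpha_rec hk m
    have h1 : ∑ i ∈ Finset.range (k+1), alpha k (m + i)
        = (∑ i ∈ Finset.range k, alpha k (m + (i + 1))) + alpha k (m + 0) :=
      Finset.sum_range_succ' (fun i => alpha k (m + i)) k
    have h2 : ∑ i ∈ Finset.range (k+1), alpha k (m + i)
        = (∑ i ∈ Finset.range k, alpha k (m + i)) + alpha k (m + k) :=
      Finset.sum_range_succ (fun i => alpha k (m + i)) k
    have h0 : alpha k (m + 0) = alpha k m := rfl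
    have h3 : ∑ i ∈ Finset.range k, alpha k (m + 1 + i)
        = ∑ i ∈ Finset.range k, alpha k (m + (i + 1)) :=
      Finset.sum_congr rfl (fun i _ => by rw [show m + 1 + i = m + (i + 1) from by omega])
    rw [show m + 1 + k = m + k + 1 from by omega, h3]
    omega

lemma coeffsum (K : ℕ) :
    (∑ i ∈ Finset.range (K+1), (K+1-i) * 2^(1+i)) + 2*(K+3) = 2^(K+3) := by
  induction K with
  | zero => simp
  | succ K ih =>
    show (∑ i ∈ Finset.range (K+2), (K+2-i) * 2^(1+i)) + 2*(K+4) = 2^(K+4)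
    have hA : ∑ i ∈ Finset.range (K+2), (K+2-i) * 2^(1+i)
        = ∑ i ∈ Finset.range (K+2), ((K+1-i) * 2^(1+i) + 2^(1+i)) :=
      Finset.sum_congr rfl (fun i hi => by
        have hi' : i ≤ K+1 := by
          have := Finset.mem_range.mp hi; omega
        rw [show K+2-i = (K+1-i)+1 from by omega, Nat.add_mul, Nat.one_mul])
    have hB : ∑ i ∈ Finset.range (K+2), ((K+1-i) * 2^(1+i) + 2^(1+i))
        = (∑ i ∈ Finset.range (K+2), (K+1-i) * 2^(1+i))
          + ∑ i ∈ Finset.range (K+2), 2^(1+i) :=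
      Finset.sum_add_distrib
    have hC : ∑ i ∈ Finset.range (K+2), (K+1-i) * 2^(1+i)
        = (∑ i ∈ Finset.range (K+1), (K+1-i) * 2^(1+i)) + (K+1-(K+1)) * 2^(1+(K+1)) :=
      Finset.sum_range_succ _ (K+1)
    have hD : ∑ i ∈ Finset.range (K+2), (2:ℕ)^(1+i) = 2 * ∑ i ∈ Finset.range (K+2), 2^i := by
      rw [Finset.mul_sum]
      exact Finset.sum_congr rfl (fun i _ => by rw [pow_add, pow_one])
    have hE := sum_pow (K+2)
    have p1 : (2:ℕ)^(K+4) = 2 * 2^(K+3) := by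
      rw [show K+4 = (K+3)+1 from by omega, pow_succ]; ring
    have p2 : (2:ℕ)^(K+3) = 2 * 2^(K+2) := by
      rw [show K+3 = (K+2)+1 from by omega, pow_succ]; ring
    have hz : (K+1-(K+1)) * (2:ℕ)^(1+(K+1)) = 0 := by simp
    omega

lemma dagger (K m : ℕ) :
    alpha (K+3) (m+(K+3)) + ∑ i ∈ Finset.range (K+1), (K+1-i) * alpha (K+3) (m+1+i)
      = alpha (K+3) m + (∑ i ∈ Finset.range (K+1), (K+1-i) * alpha (K+3) (m+1+1+i))
        + (K+2) * alpha (K+3) (m+1) := by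
  have hR := bigR (k := K+3) (by omega) m
  have h1 : ∑ i ∈ Finset.range (K+3), alpha (K+3) (m+i)
      = (∑ i ∈ Finset.range (K+2), alpha (K+3) (m+(i+1))) + alpha (K+3) (m+0) :=
    Finset.sum_range_succ' (fun i => alpha (K+3) (m+i)) (K+2)
  have h0 : alpha (K+3) (m+0) = alpha (K+3) m := rfl
  have hS1 : ∑ i ∈ Finset.range (K+1), (K+1-i) * alpha (K+3) (m+1+i)
      = ∑ i ∈ Finset.range (K+2), (K+1-i) * alpha (K+3) (m+(i+1)) := by
    have e1 : ∑ i ∈ Finset.range (K+2), (K+1-i) * alpha (K+3) (m+(i+1))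
        = (∑ i ∈ Finset.range (K+1), (K+1-i) * alpha (K+3) (m+(i+1)))
          + (K+1-(K+1)) * alpha (K+3) (m+(K+1+1)) :=
      Finset.sum_range_succ _ (K+1)
    rw [e1, Nat.sub_self, Nat.zero_mul, Nat.add_zero]
    exact Finset.sum_congr rfl (fun i _ => by rw [show m+1+i = m+(i+1) from by omega])
  have hC1 : (∑ i ∈ Finset.range (K+2), alpha (K+3) (m+(i+1)))
      + ∑ i ∈ Finset.range (K+2), (K+1-i) * alpha (K+3) (m+(i+1))
      = ∑ i ∈ Finset.range (K+2), (K+2-i) * alpha (K+3) (m+(i+1)) := by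
    rw [← Finset.sum_add_distrib]
    exact Finset.sum_congr rfl (fun i hi => by
      have hi' : i ≤ K+1 := by have := Finset.mem_range.mp hi; omega
      rw [show K+2-i = 1+(K+1-i) from by omega, Nat.add_mul, Nat.one_mul])
  have hC2 : ∑ i ∈ Finset.range (K+2), (K+2-i) * alpha (K+3) (m+(i+1))
      = (∑ i ∈ Finset.range (K+1), (K+1-i) * alpha (K+3) (m+1+1+i))
        + (K+2) * alpha (K+3) (m+1) := by
    have h := Finset.sum_range_succ' (fun i => (K+2-i) * alpha (K+3) (m+(i+1))) (K+1)
    have hcg : ∑ i ∈ Finset.range (K+1), (K+2-(i+1)) * alpha (K+3) (m+(i+1+1))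
        = ∑ i ∈ Finset.range (K+1), (K+1-i) * alpha (K+3) (m+1+1+i) :=
      Finset.sum_congr rfl (fun i _ => by
        rw [show K+2-(i+1) = K+1-i from by omega, show m+(i+1+1) = m+1+1+i from by omega])
    calc ∑ i ∈ Finset.range (K+2), (K+2-i) * alpha (K+3) (m+(i+1))
        = (∑ i ∈ Finset.range (K+1), (K+2-(i+1)) * alpha (K+3) (m+(i+1+1)))
          + (K+2-0) * alpha (K+3) (m+(0+1)) := h
      _ = _ := by rw [hcg, Nat.sub_zero, Nat.zero_add]
  have hP : (K+2) * alpha (K+3) (m+1) = (K+2) * alpha (K+3) (m+1) := rfl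
  -- combine
  calc alpha (K+3) (m+(K+3)) + ∑ i ∈ Finset.range (K+1), (K+1-i) * alpha (K+3) (m+1+i)
      = ((∑ i ∈ Finset.range (K+2), alpha (K+3) (m+(i+1))) + alpha (K+3) m)
        + ∑ i ∈ Finset.range (K+2), (K+1-i) * alpha (K+3) (m+(i+1)) := by
        rw [hR, h1, h0, hS1]
    _ = alpha (K+3) m + ((∑ i ∈ Finset.range (K+2), alpha (K+3) (m+(i+1)))
        + ∑ i ∈ Finset.range (K+2), (K+1-i) * alpha (K+3) (m+(i+1))) := by ring
    _ = alpha (K+3) m + ((∑ i ∈ Finset.range (K+1), (K+1-i) * alpha (K+3) (m+1+1+i))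
        + (K+2) * alpha (K+3) (m+1)) := by rw [hC1, hC2]
    _ = _ := by ring

lemma Pprime (K m : ℕ) :
    alpha (K+3) (m + (K+3))
      = (K+3) + (∑ i ∈ Finset.range (K+1), (K+1-i) * alpha (K+3) (m+1+i))
        + (K+2) * ∑ j ∈ Finset.range (m+1), alpha (K+3) j := by
  induction m with
  | zero =>
    have h0 : alpha (K+3) (0 + (K+3)) = alpha (K+3) (K+3) := by rw [Nat.zero_add]
    have halpha := alpha_at_k (k := K+3) (by omega)
    have hsum : ∑ i ∈ Finset.range (K+1), (K+1-i) * alpha (K+3) (0+1+i)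
        = ∑ i ∈ Finset.range (K+1), (K+1-i) * 2^(1+i) :=
      Finset.sum_congr rfl (fun i hi => by
        have hi' : i < K+1 := Finset.mem_range.mp hi
        rw [show 0+1+i = 1+i from by omega, alpha_small (show 1+i < K+3 from by omega)])
    have hj : ∑ j ∈ Finset.range (0+1), alpha (K+3) j = 1 := by
      rw [Nat.zero_add, Finset.sum_range_one, alpha_small (show 0 < K+3 from by omega), pow_zero]
    have hcs := coeffsum K
    rw [h0, hsum, hj, Nat.mul_one]
    omega
  | succ m ih =>
    have hrec := alpha_rec (k := K+3) (by omega) m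
    have hdag := dagger K m
    have hT : ∑ j ∈ Finset.range (m+1+1), alpha (K+3) j
        = (∑ j ∈ Finset.range (m+1), alpha (K+3) j) + alpha (K+3) (m+1) :=
      Finset.sum_range_succ _ (m+1)
    rw [show m+1+(K+3) = m+(K+3)+1 from by omega, hT, Nat.mul_add]
    -- linear combination of hrec, ih, hdag
    set A1 := alpha (K+3) (m+(K+3)+1) with hA1
    set A0 := alpha (K+3) (m+(K+3)) with hA0
    set am := alpha (K+3) m with ham
    set S1 := ∑ i ∈ Finset.range (K+1), (K+1-i) * alpha (K+3) (m+1+i) with hS1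
    set S2 := ∑ i ∈ Finset.range (K+1), (K+1-i) * alpha (K+3) (m+1+1+i) with hS2
    set T := ∑ j ∈ Finset.range (m+1), alpha (K+3) j with hTT
    set P := (K+2) * alpha (K+3) (m+1) with hPP
    set Q := (K+2) * T with hQQ
    omega


/-- For `3 ≤ k ≤ n − 1`,
`α_k(n−1) = k + Σ_{j=3}^{k} (j−2)·α_k(n−j) + (k−1)·Σ_{j=0}^{n−k−1} α_k(j)`. -/
theorem alpha_identity (k n : ℕ) (hk : 3 ≤ k) (hkn : k + 1 ≤ n) :
    alpha k (n - 1) =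
      k + (∑ j ∈ Finset.Icc 3 k, (j - 2) * alpha k (n - j))
        + (k - 1) * ∑ j ∈ Finset.range (n - k), alpha k j := by
  obtain ⟨K, rfl⟩ := Nat.exists_eq_add_of_le' hk
  obtain ⟨m, rfl⟩ := Nat.exists_eq_add_of_le' (show K+4 ≤ n from by omega)
  have hmid : ∑ j ∈ Finset.Icc 3 (K+3), (j-2) * alpha (K+3) (m+(K+4)-j)
      = ∑ i ∈ Finset.range (K+1), (K+1-i) * alpha (K+3) (m+1+i) := by
    have hIcc : Finset.Icc 3 (K+3) = Finset.Ico 3 (K+4) := (Finset.Ico_add_one_right_eq_Icc 3 (K+3)).symm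
    rw [hIcc, Finset.sum_Ico_eq_sum_range, show K+4-3 = K+1 from by omega]
    have hr := Finset.sum_range_reflect (fun i => (K+1-i) * alpha (K+3) (m+1+i)) (K+1)
    rw [← hr]
    exact Finset.sum_congr rfl (fun i hi => by
      have hi' : i < K+1 := Finset.mem_range.mp hi
      rw [show 3+i-2 = K+1-(K+1-1-i) from by omega,
          show m+(K+4)-(3+i) = m+1+(K+1-1-i) from by omega])
  rw [show m+(K+4)-1 = m+(K+3) from by omega,
      show m+(K+4)-(K+3) = m+1 from by omega,
      show K+3-1 = K+2 from by omega, hmid]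
  exact Pprime K m
end

section
/- For integers k and n with 3 ≤ k ≤ n−1, β_k(n) = −k − (k−1) · Σ_{j=0}^{n−k−1} α_k(j) + Σ_{j=1}^{k} β_k(n−j). -/
namespace BetaAux

/-! ### Basic word lemmas -/

lemma skew_append (w v : List Bool) : skew (w ++ v) = skew w + skew v := by
  simp [skew]

lemma skew_true : skew [true] = -1 := by simp [skew]
lemma skew_false : skew [false] = 1 := by simp [skew]

lemma suffix_iff_rev {u w : List Bool} : u <:+ w ↔ u.reverse <+: w.reverse := by
  rw [← List.reverse_suffix]; simp

lemma replicate_rev (r : ℕ) : (List.replicate r false).reverse = List.replicate r false := by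
  simp

-- trailing zeros count
def tzc (w : List Bool) : ℕ := (w.reverse.takeWhile (fun b => !b)).length

lemma prefix_replicate_iff (r : ℕ) (v : List Bool) :
    List.replicate r false <+: v ↔ r ≤ (v.takeWhile (fun b => !b)).length := by
  induction r generalizing v with
  | zero => simp
  | succ r ih =>
    cases v with
    | nil => simp [List.replicate_succ]
    | cons b v =>
      rw [List.replicate_succ]
      rw [List.cons_prefix_cons]
      cases b with
      | false => simp [List.takeWhile_cons, ih, Nat.succ_le_succ_iff]
      | true => simp [List.takeWhile_cons]

lemma suffix_replicate_iff (r : ℕ) (w : List Bool) :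
    List.replicate r false <:+ w ↔ r ≤ tzc w := by
  rw [suffix_iff_rev, replicate_rev, tzc, prefix_replicate_iff]

lemma suffix_replicate_tzc (w : List Bool) : List.replicate (tzc w) false <:+ w :=
  (suffix_replicate_iff _ _).2 le_rfl

lemma hasZeroRun_of_suffix {k : ℕ} {w : List Bool} (h : List.replicate k false <:+ w) :
    hasZeroRun k w := h.isInfix

lemma hasZeroRun_length {k : ℕ} {w : List Bool} (h : hasZeroRun k w) : k ≤ w.length := by
  have := h.length_le; simpa using this

lemma run_iff_rev (k : ℕ) (w : List Bool) :
    hasZeroRun k w ↔ List.replicate k false <:+: w.reverse := by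
  rw [hasZeroRun, ← List.reverse_infix, List.reverse_replicate]

lemma hasZeroRun_append_true (k : ℕ) (hk : 1 ≤ k) (w : List Bool) :
    hasZeroRun k (w ++ [true]) ↔ hasZeroRun k w := by
  rw [run_iff_rev, run_iff_rev]
  simp only [List.reverse_append, List.reverse_singleton, List.singleton_append]
  rw [List.infix_cons_iff]
  constructor
  · rintro (h | h)
    · exfalso
      obtain ⟨k', rfl⟩ : ∃ k', k = k' + 1 := ⟨k - 1, by omega⟩
      rw [List.replicate_succ, List.cons_prefix_cons] at h
      exact Bool.false_ne_true h.1
    · exact h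
  · exact Or.inr

lemma hasZeroRun_append_false (k : ℕ) (w : List Bool) :
    hasZeroRun (k + 1) (w ++ [false]) ↔
      hasZeroRun (k + 1) w ∨ List.replicate k false <:+ w := by
  rw [run_iff_rev, run_iff_rev, suffix_iff_rev, replicate_rev]
  simp only [List.reverse_append, List.reverse_singleton, List.singleton_append]
  rw [List.infix_cons_iff, List.replicate_succ, List.cons_prefix_cons]
  have hpi : List.replicate k false <+: w.reverse → List.replicate (k+1) false <:+: w.reverse ∨ List.replicate k false <+: w.reverse := Or.inr
  tauto

lemma tzc_append_true (w : List Bool) : tzc (w ++ [true]) = 0 := by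
  simp [tzc, List.takeWhile_cons]

lemma tzc_append_false (w : List Bool) : tzc (w ++ [false]) = tzc w + 1 := by
  simp [tzc, List.takeWhile_cons]

lemma suffix_succ_append_false (r : ℕ) (w : List Bool) :
    List.replicate (r + 1) false <:+ (w ++ [false]) ↔ List.replicate r false <:+ w := by
  rw [suffix_replicate_iff, suffix_replicate_iff, tzc_append_false]
  omega

lemma not_suffix_succ_append_true (r : ℕ) (w : List Bool) :
    ¬ (List.replicate (r + 1) false <:+ (w ++ [true])) := by
  rw [suffix_replicate_iff, tzc_append_true]
  omega

lemma suffix_replicate_mono {r s : ℕ} (h : r ≤ s) {w : List Bool}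
    (hs : List.replicate s false <:+ w) : List.replicate r false <:+ w := by
  rw [suffix_replicate_iff] at *
  omega

/-! ### Sum machinery -/

def S (f : List Bool → ℤ) (p : List Bool → Bool) (n : ℕ) : ℤ :=
  (((allWords n).filter p).map f).sum

lemma sum_map_flatMap (l : List (List Bool)) (g : List Bool → List (List Bool))
    (f : List Bool → ℤ) :
    ((l.flatMap g).map f).sum = (l.map (fun w => ((g w).map f).sum)).sum := by
  induction l with
  | nil => simp
  | cons w l ih => simp [List.flatMap_cons, ih]

lemma S_succ (f : List Bool → ℤ) (p : List Bool → Bool) (n : ℕ) :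
    S f p (n + 1) = ((allWords n).map (fun w =>
      (if p (w ++ [false]) then f (w ++ [false]) else 0)
      + (if p (w ++ [true]) then f (w ++ [true]) else 0))).sum := by
  rw [S, allWords, List.filter_flatMap, sum_map_flatMap]
  congr 1
  apply List.map_congr_left
  intro w _
  by_cases h0 : p (w ++ [false]) <;> by_cases h1 : p (w ++ [true]) <;>
    simp [List.filter, h0, h1]

lemma sum_map_filter (l : List (List Bool)) (p : List Bool → Bool) (f : List Bool → ℤ) :
    ((l.filter p).map f).sum = (l.map (fun w => if p w then f w else 0)).sum := by
  induction l with
  | nil => simp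
  | cons w l ih => by_cases h : p w <;> simp [h, ih]

lemma finsum_listsum_swap (l : List (List Bool)) (F : ℕ → List Bool → ℤ) (s : Finset ℕ) :
    ∑ r ∈ s, (l.map (F r)).sum = (l.map (fun w => ∑ r ∈ s, F r w)).sum := by
  induction l with
  | nil => simp
  | cons w l ih => simp [List.map_cons, List.sum_cons, Finset.sum_add_distrib, ih]

lemma sum_map_add (l : List (List Bool)) (f g : List Bool → ℤ) :
    (l.map (fun w => f w + g w)).sum = (l.map f).sum + (l.map g).sum := by
  induction l with
  | nil => simp
  | cons w l ih => simp [ih]; ring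

/-! ### The key families -/

def ok (k : ℕ) (w : List Bool) : Bool := !decide (hasZeroRun k w)

def one : List Bool → ℤ := fun _ => 1

lemma beta_eq (k n : ℕ) : beta k n = S skew (ok k) n := rfl

lemma length_eq_sum_one (l : List (List Bool)) : (l.length : ℤ) = (l.map one).sum := by
  induction l with
  | nil => simp
  | cons w l ih => simp only [List.length_cons, List.map_cons, List.sum_cons, one]; push_cast; omega

lemma alpha_eq (k n : ℕ) : (alpha k n : ℤ) = S one (ok k) n := by
  rw [alpha, S, length_eq_sum_one]; rfl

lemma tzc_lt_of_ok {k : ℕ} {w : List Bool} (h : ok k w = true) : tzc w < k := by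
  by_contra hc
  have : List.replicate k false <:+ w := (suffix_replicate_iff _ _).2 (by omega)
  have : hasZeroRun k w := hasZeroRun_of_suffix this
  simp [ok, this] at h

def okz (k r : ℕ) (w : List Bool) : Bool := ok k w && decide (tzc w = r)

lemma S_partition (f : List Bool → ℤ) (k n : ℕ) :
    ∑ r ∈ Finset.range k, S f (okz k r) n = S f (ok k) n := by
  simp only [S, sum_map_filter]
  rw [finsum_listsum_swap]
  congr 1
  apply List.map_congr_left
  intro w _
  by_cases h : ok k w
  · have hlt := tzc_lt_of_ok h
    simp only [okz, h, Bool.true_and, decide_eq_true_eq]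
    rw [Finset.sum_ite_eq (Finset.range k) (tzc w) (fun _ => f w)]
    simp [Finset.mem_range.2 hlt, h]
  · simp [okz, h]

/-! ### Transition lemmas -/

lemma skew_append_true (w : List Bool) : skew (w ++ [true]) = skew w - 1 := by
  rw [skew_append, skew_true]; ring

lemma skew_append_false (w : List Bool) : skew (w ++ [false]) = skew w + 1 := by
  rw [skew_append, skew_false]

lemma ok_append_true {k : ℕ} (hk : 1 ≤ k) (w : List Bool) :
    ok k (w ++ [true]) = ok k w := by
  simp [ok, hasZeroRun_append_true k hk]

lemma ok_append_false {k : ℕ} (hk : 1 ≤ k) (w : List Bool) :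
    ok k (w ++ [false]) = (ok k w && !decide (k ≤ tzc w + 1)) := by
  obtain ⟨K, rfl⟩ : ∃ K, k = K + 1 := ⟨k - 1, by omega⟩
  rw [Bool.eq_iff_iff]
  simp only [ok, Bool.and_eq_true, Bool.not_eq_true', decide_eq_false_iff_not,
    hasZeroRun_append_false, suffix_replicate_iff]
  constructor
  · intro h
    push_neg at h
    exact ⟨h.1, by omega⟩
  · rintro ⟨h1, h2⟩ (h | h)
    · exact h1 h
    · omega

lemma A0succ {k : ℕ} (hk : 1 ≤ k) (n : ℕ) :
    S one (okz k 0) (n + 1) = S one (ok k) n := by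
  rw [S_succ, S, sum_map_filter]
  congr 1
  apply List.map_congr_left
  intro w _
  have h1 : okz k 0 (w ++ [false]) = false := by
    simp [okz, tzc_append_false]
  have h2 : okz k 0 (w ++ [true]) = ok k w := by
    simp [okz, tzc_append_true, ok_append_true hk]
  rw [h1, h2]
  simp [one]

lemma B0succ {k : ℕ} (hk : 1 ≤ k) (n : ℕ) :
    S skew (okz k 0) (n + 1) = S skew (ok k) n - S one (ok k) n := by
  rw [S_succ]
  have : ∀ w ∈ allWords n,
      ((if okz k 0 (w ++ [false]) then skew (w ++ [false]) else 0)
      + (if okz k 0 (w ++ [true]) then skew (w ++ [true]) else 0))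
      = (if ok k w then skew w else 0) + (if ok k w then -one w else 0) := by
    intro w _
    have h1 : okz k 0 (w ++ [false]) = false := by
      simp [okz, tzc_append_false]
    have h2 : okz k 0 (w ++ [true]) = ok k w := by
      simp [okz, tzc_append_true, ok_append_true hk]
    rw [h1, h2, skew_append_true]
    by_cases h : ok k w <;> simp [h, one] <;> ring
  rw [List.map_congr_left this, sum_map_add]
  rw [S, S, sum_map_filter, sum_map_filter]
  congr 1
  · induction allWords n with
    | nil => simp
    | cons w l ih =>
      simp only [List.map_cons, List.sum_cons, ih]
      by_cases h : ok k w <;> simp [h] <;> ring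

lemma okz_succ_append (k r : ℕ) (hr : r + 2 ≤ k) (w : List Bool) :
    okz k (r + 1) (w ++ [false]) = okz k r w := by
  have hk : 1 ≤ k := by omega
  rw [Bool.eq_iff_iff]
  simp only [okz, Bool.and_eq_true, decide_eq_true_eq, ok_append_false hk, tzc_append_false]
  constructor
  · rintro ⟨⟨h1, _⟩, h3⟩
    exact ⟨h1, by omega⟩
  · rintro ⟨h1, h2⟩
    refine ⟨⟨h1, ?_⟩, by omega⟩
    simp only [Bool.not_eq_true', decide_eq_false_iff_not]
    omega

lemma okz_succ_append_true (k r : ℕ) (w : List Bool) :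
    okz k (r + 1) (w ++ [true]) = false := by
  simp [okz, tzc_append_true]

lemma Asucc {k r : ℕ} (hr : r + 2 ≤ k) (n : ℕ) :
    S one (okz k (r + 1)) (n + 1) = S one (okz k r) n := by
  rw [S_succ, S, sum_map_filter]
  congr 1
  apply List.map_congr_left
  intro w _
  rw [okz_succ_append k r hr, okz_succ_append_true]
  simp [one]

lemma Bsucc {k r : ℕ} (hr : r + 2 ≤ k) (n : ℕ) :
    S skew (okz k (r + 1)) (n + 1) = S skew (okz k r) n + S one (okz k r) n := by
  rw [S_succ]
  have : ∀ w ∈ allWords n,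
      ((if okz k (r + 1) (w ++ [false]) then skew (w ++ [false]) else 0)
      + (if okz k (r + 1) (w ++ [true]) then skew (w ++ [true]) else 0))
      = (if okz k r w then skew w else 0) + (if okz k r w then one w else 0) := by
    intro w _
    rw [okz_succ_append k r hr, okz_succ_append_true, skew_append_false]
    by_cases h : okz k r w <;> simp [h, one]
  rw [List.map_congr_left this, sum_map_add]
  rw [S, S, sum_map_filter, sum_map_filter]

/-! ### Shift lemma -/

lemma shift (k : ℕ) : ∀ r, r + 1 ≤ k → ∀ m,
    S one (okz k r) (m + 1 + r) = S one (ok k) m ∧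
    S skew (okz k r) (m + 1 + r) = S skew (ok k) m + ((r : ℤ) - 1) * S one (ok k) m := by
  intro r
  induction r with
  | zero =>
    intro hr m
    refine ⟨A0succ hr m, ?_⟩
    rw [B0succ hr m]
    ring
  | succ r ih =>
    intro hr m
    have hr' : r + 1 ≤ k := by omega
    obtain ⟨ihA, ihB⟩ := ih hr' m
    have he : m + 1 + (r + 1) = (m + 1 + r) + 1 := by omega
    rw [he]
    refine ⟨?_, ?_⟩
    · rw [Asucc hr, ihA]
    · rw [Bsucc hr, ihA, ihB]
      push_cast
      ring

/-! ### Main recurrence -/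

lemma main_rec {k : ℕ} (hk : 1 ≤ k) {n : ℕ} (hn : k ≤ n) :
    S skew (ok k) (n + 1) = 2 * S skew (ok k) n - S skew (ok k) (n - k)
      - ((k : ℤ) - 1) * S one (ok k) (n - k) := by
  obtain ⟨m, rfl⟩ : ∃ m, n = m + k := ⟨n - k, by omega⟩
  obtain ⟨K, rfl⟩ : ∃ K, k = K + 1 := ⟨k - 1, by omega⟩
  have hsub : m + (K + 1) - (K + 1) = m := by omega
  rw [hsub]
  rw [← S_partition skew (K + 1) (m + (K + 1) + 1)]
  rw [Finset.sum_range_succ']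
  have h0 : S skew (okz (K + 1) 0) ((m + (K + 1)) + 1)
      = S skew (ok (K + 1)) (m + (K + 1)) - S one (ok (K + 1)) (m + (K + 1)) :=
    B0succ (by omega) _
  have hstep : ∀ r ∈ Finset.range K,
      S skew (okz (K + 1) (r + 1)) ((m + (K + 1)) + 1)
      = S skew (okz (K + 1) r) (m + (K + 1)) + S one (okz (K + 1) r) (m + (K + 1)) := by
    intro r hr
    rw [Finset.mem_range] at hr
    exact Bsucc (by omega) _
  rw [Finset.sum_congr rfl hstep, Finset.sum_add_distrib, h0]
  have hK : m + (K + 1) = m + 1 + K := by omega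
  have hsh := shift (K + 1) K (by omega) m
  have hBK : S skew (okz (K + 1) K) (m + (K + 1))
      = S skew (ok (K + 1)) m + ((K : ℤ) - 1) * S one (ok (K + 1)) m := by
    rw [hK]; exact hsh.2
  have hAK : S one (okz (K + 1) K) (m + (K + 1)) = S one (ok (K + 1)) m := by
    rw [hK]; exact hsh.1
  have e1 : ∑ r ∈ Finset.range K, S skew (okz (K + 1) r) (m + (K + 1))
      = S skew (ok (K + 1)) (m + (K + 1)) - S skew (okz (K + 1) K) (m + (K + 1)) := by
    have := Finset.sum_range_succ (fun r => S skew (okz (K + 1) r) (m + (K + 1))) K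
    rw [S_partition skew (K + 1) (m + (K + 1))] at this
    linarith [this]
  have e2 : ∑ r ∈ Finset.range K, S one (okz (K + 1) r) (m + (K + 1))
      = S one (ok (K + 1)) (m + (K + 1)) - S one (okz (K + 1) K) (m + (K + 1)) := by
    have := Finset.sum_range_succ (fun r => S one (okz (K + 1) r) (m + (K + 1))) K
    rw [S_partition one (K + 1) (m + (K + 1))] at this
    linarith [this]
  rw [e1, e2, hBK, hAK]
  push_cast
  ring

/-! ### Small values -/

lemma length_mem_allWords : ∀ n, ∀ w ∈ allWords n, w.length = n := by
  intro n
  induction n with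
  | zero => intro w hw; simp [allWords] at hw; simp [hw]
  | succ n ih =>
    intro w hw
    simp only [allWords, List.mem_flatMap] at hw
    obtain ⟨u, hu, hw⟩ := hw
    simp only [List.mem_cons, List.mem_singleton] at hw
    rcases hw with rfl | rfl | h
    · simp [ih u hu]
    · simp [ih u hu]
    · simp at h
    
lemma ok_of_short {k : ℕ} {w : List Bool} (h : w.length < k) : ok k w = true := by
  simp only [ok, Bool.not_eq_true', decide_eq_false_iff_not]
  intro hr
  have := hasZeroRun_length hr
  omega

lemma filter_allWords_of_lt {k m : ℕ} (h : m < k) (p : List Bool → Bool)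
    (hp : ∀ w, w.length < k → p w = true) : (allWords m).filter p = allWords m := by
  apply List.filter_eq_self.2
  intro w hw
  exact hp w (by rw [length_mem_allWords m w hw]; omega)

lemma sum_skew_allWords (n : ℕ) : ((allWords n).map skew).sum = 0 := by
  induction n with
  | zero => simp [allWords, skew]
  | succ n ih =>
    rw [allWords, sum_map_flatMap]
    have : ∀ w ∈ allWords n,
        (([w ++ [false], w ++ [true]].map skew).sum) = 2 * skew w := by
      intro w _
      simp [skew_append_false, skew_append_true]
      ring
    rw [List.map_congr_left this]
    calc ((allWords n).map (fun w => 2 * skew w)).sum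
        = ((allWords n).map (fun w => skew w + skew w)).sum := by
          congr 1; apply List.map_congr_left; intro w _; ring
      _ = ((allWords n).map skew).sum + ((allWords n).map skew).sum := sum_map_add _ _ _
      _ = 0 := by rw [ih]; ring

lemma sum_one_allWords (n : ℕ) : ((allWords n).map one).sum = 2 ^ n := by
  induction n with
  | zero => simp [allWords, one]
  | succ n ih =>
    rw [allWords, sum_map_flatMap]
    have : ∀ w ∈ allWords n,
        (([w ++ [false], w ++ [true]].map one).sum) = one w + one w := by
      intro w _; simp [one]
    rw [List.map_congr_left this, sum_map_add, ih]
    ring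

lemma Be_small {k m : ℕ} (h : m < k) : S skew (ok k) m = 0 := by
  rw [S, filter_allWords_of_lt h _ (fun w hw => ok_of_short hw), sum_skew_allWords]

lemma Al_small {k m : ℕ} (h : m < k) : S one (ok k) m = 2 ^ m := by
  rw [S, filter_allWords_of_lt h _ (fun w hw => ok_of_short hw), sum_one_allWords]

lemma arith_sum : ∀ k, 1 ≤ k →
    ∑ r ∈ Finset.range k, ((r : ℤ) - 1) * 2 ^ (k - 1 - r) = -(k : ℤ) := by
  intro k
  induction k with
  | zero => omega
  | succ k ih =>
    intro _
    rcases Nat.eq_zero_or_pos k with rfl | hk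
    · simp
    rw [Finset.sum_range_succ]
    have he : ∀ r ∈ Finset.range k,
        ((r : ℤ) - 1) * 2 ^ (k + 1 - 1 - r) = 2 * (((r : ℤ) - 1) * 2 ^ (k - 1 - r)) := by
      intro r hr
      rw [Finset.mem_range] at hr
      have : k + 1 - 1 - r = (k - 1 - r) + 1 := by omega
      rw [this, pow_succ]
      ring
    rw [Finset.sum_congr rfl he, ← Finset.mul_sum, ih hk]
    have : k + 1 - 1 - k = 0 := by omega
    rw [this]
    push_cast
    ring

lemma Be_k {k : ℕ} (hk : 1 ≤ k) : S skew (ok k) k = -(k : ℤ) := by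
  rw [← S_partition skew k k]
  have : ∀ r ∈ Finset.range k,
      S skew (okz k r) k = ((r : ℤ) - 1) * 2 ^ (k - 1 - r) := by
    intro r hr
    rw [Finset.mem_range] at hr
    have h2 := (shift k r (by omega) (k - 1 - r)).2
    have he : k - 1 - r + 1 + r = k := by omega
    rw [he] at h2
    rw [h2, Be_small (by omega : k - 1 - r < k), Al_small (by omega : k - 1 - r < k)]
    ring
  rw [Finset.sum_congr rfl this, arith_sum k hk]

/-! ### Final induction -/

lemma Icc_sum (f : ℕ → ℤ) (k : ℕ) :
    ∑ j ∈ Finset.Icc 1 k, f j = ∑ i ∈ Finset.range k, f (i + 1) := by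
  induction k with
  | zero => simp
  | succ k ih => rw [Finset.sum_Icc_succ_top (by omega), ih, Finset.sum_range_succ]

lemma main_identity {k : ℕ} (hk : 1 ≤ k) {n : ℕ} (hn : k ≤ n) :
    S skew (ok k) n = -(k : ℤ)
      - ((k : ℤ) - 1) * (∑ j ∈ Finset.range (n - k), S one (ok k) j)
      + ∑ j ∈ Finset.Icc 1 k, S skew (ok k) (n - j) := by
  induction n, hn using Nat.le_induction with
  | base =>
    rw [Be_k hk]
    have h1 : k - k = 0 := by omega
    rw [h1]
    simp only [Finset.range_zero, Finset.sum_empty, mul_zero]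
    rw [Icc_sum]
    have hz : ∀ i ∈ Finset.range k, S skew (ok k) (k - (i + 1)) = 0 := by
      intro i hi
      rw [Finset.mem_range] at hi
      exact Be_small (by omega)
    rw [Finset.sum_congr rfl hz]
    simp
  | succ n hn ih =>
    obtain ⟨K, rfl⟩ : ∃ K, k = K + 1 := ⟨k - 1, by omega⟩
    have hrec := main_rec hk hn
    have hIcc1 : ∑ j ∈ Finset.Icc 1 (K + 1), S skew (ok (K + 1)) (n + 1 - j)
        = S skew (ok (K + 1)) n
          + ∑ i ∈ Finset.range K, S skew (ok (K + 1)) (n - (i + 1)) := by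
      rw [Icc_sum]
      simp only [Nat.succ_sub_succ]
      rw [Finset.sum_range_succ']
      simp only [Nat.sub_zero]
      ring
    have hIcc2 : ∑ j ∈ Finset.Icc 1 (K + 1), S skew (ok (K + 1)) (n - j)
        = (∑ i ∈ Finset.range K, S skew (ok (K + 1)) (n - (i + 1)))
          + S skew (ok (K + 1)) (n - (K + 1)) := by
      rw [Icc_sum, Finset.sum_range_succ]
    have hAl : ∑ j ∈ Finset.range (n + 1 - (K + 1)), S one (ok (K + 1)) j
        = (∑ j ∈ Finset.range (n - (K + 1)), S one (ok (K + 1)) j)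
          + S one (ok (K + 1)) (n - (K + 1)) := by
      have he : n + 1 - (K + 1) = (n - (K + 1)) + 1 := by omega
      rw [he, Finset.sum_range_succ]
    rw [hIcc2] at ih
    rw [hrec, hIcc1, hAl]
    push_cast at ih ⊢
    linarith [ih]

end BetaAux

/-- For `3 ≤ k ≤ n − 1`,
`β_k(n) = −k − (k−1)·Σ_{j=0}^{n−k−1} α_k(j) + Σ_{j=1}^{k} β_k(n−j)`. -/
theorem beta_identity (k n : ℕ) (hk : 3 ≤ k) (hkn : k + 1 ≤ n) :
    beta k n =
      -(k : ℤ) - ((k : ℤ) - 1) * (∑ j ∈ Finset.range (n - k), (alpha k j : ℤ))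
        + ∑ j ∈ Finset.Icc 1 k, beta k (n - j) := by
  simp only [BetaAux.beta_eq, BetaAux.alpha_eq]
  exact BetaAux.main_identity (by omega) (by omega)
end

section
/- For integers k and n with 3 ≤ k ≤ n−1, β_k(n) < 0. -/
namespace BetaNeg
open List

/-! ### generic list helpers -/

lemma sum_flatMap' {α β : Type*} [AddCommMonoid β] (l : List α) (f : α → List β) :
    ((l.flatMap f).sum) = (l.map (fun a => (f a).sum)).sum := by
  induction l with
  | nil => simp
  | cons a l ih => simp [List.flatMap_cons, ih]

lemma flatMap_ite {α β : Type*} (l : List α) (p : α → Bool) (f : α → β) :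
    (l.flatMap (fun a => if p a then [f a] else [])) = (l.filter p).map f := by
  induction l with
  | nil => simp
  | cons a l ih =>
    by_cases h : p a <;> simp [List.flatMap_cons, h, ih, List.filter_cons]

lemma sum_map_ite {α : Type*} (l : List α) (p : α → Bool) (f : α → ℤ) :
    (l.map (fun a => if p a then f a else 0)).sum = ((l.filter p).map f).sum := by
  induction l with
  | nil => simp
  | cons a l ih =>
    by_cases h : p a <;> simp [h, ih, List.filter_cons]

lemma sum_map_add {α : Type*} (l : List α) (f g : α → ℤ) :
    (l.map (fun a => f a + g a)).sum = (l.map f).sum + (l.map g).sum := by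
  induction l with
  | nil => simp
  | cons a l ih => simp [ih]; ring

lemma sum_map_add_const {α : Type*} (l : List α) (f : α → ℤ) (c : ℤ) :
    (l.map (fun a => f a + c)).sum = (l.map f).sum + c * l.length := by
  induction l with
  | nil => simp
  | cons a l ih => simp [ih]; ring

lemma filter_split_sum {α : Type*} (l : List α) (p q : α → Bool) (f : α → ℤ) :
    ((l.filter p).map f).sum
      = ((l.filter (fun a => p a && q a)).map f).sum
        + ((l.filter (fun a => p a && !q a)).map f).sum := by
  induction l with
  | nil => simp
  | cons a l ih =>
    by_cases hp : p a <;> by_cases hq : q a <;>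
      simp [List.filter_cons, hp, hq, ih] <;> ring

lemma filter_split_length {α : Type*} (l : List α) (p q : α → Bool) :
    (l.filter p).length
      = (l.filter (fun a => p a && q a)).length
        + (l.filter (fun a => p a && !q a)).length := by
  induction l with
  | nil => simp
  | cons a l ih =>
    by_cases hp : p a <;> by_cases hq : q a <;>
      simp [List.filter_cons, hp, hq, ih] <;> ring

lemma suffix_of_suffix_le {α : Type*} {l₁ l₂ l : List α} (h₁ : l₁ <:+ l) (h₂ : l₂ <:+ l)
    (h : l₁.length ≤ l₂.length) : l₁ <:+ l₂ := by
  rw [← List.reverse_prefix] at h₁ h₂ ⊢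
  exact List.prefix_of_prefix_length_le h₁ h₂ (by simpa)

/-! ### skew lemmas -/

lemma skew_append (u v : List Bool) : skew (u ++ v) = skew u + skew v := by
  simp [skew]

lemma skew_concat_false (w : List Bool) : skew (w ++ [false]) = skew w + 1 := by
  simp [skew]

lemma skew_concat_true (w : List Bool) : skew (w ++ [true]) = skew w - 1 := by
  simp [skew]; ring

lemma skew_replicate_false (j : ℕ) : skew (List.replicate j false) = j := by
  simp [skew]

/-! ### allWords lemmas -/

lemma length_of_mem_allWords : ∀ {n : ℕ} {w : List Bool}, w ∈ allWords n → w.length = n := by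
  intro n
  induction n with
  | zero => intro w hw; simp [allWords] at hw; simp [hw]
  | succ n ih =>
    intro w hw
    simp only [allWords, List.mem_flatMap] at hw
    obtain ⟨u, hu, hw⟩ := hw
    have := ih hu
    simp at hw
    rcases hw with rfl | rfl <;> simp [this]

lemma allWords_filter_eq : ∀ {n : ℕ} {t : List Bool}, t.length = n →
    (allWords n).filter (fun u => u == t) = [t] := by
  intro n
  induction n with
  | zero => intro t ht; rw [List.length_eq_zero_iff] at ht; subst ht; simp [allWords]
  | succ n ih =>
    intro t ht
    rcases List.eq_nil_or_concat t with rfl | ⟨L, b, rfl⟩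
    · simp at ht
    rw [List.concat_eq_append] at *
    have hL : L.length = n := by simp at ht; omega
    simp only [allWords, List.filter_flatMap]
    have hstep : ∀ w ∈ allWords n,
        ([w ++ [false], w ++ [true]].filter (fun u => u == L ++ [b]))
          = if (w == L) then [L ++ [b]] else [] := by
      intro w hw
      by_cases hwL : w = L
      · subst hwL
        cases b <;> simp [List.filter_cons]
      · have h1 : ¬ (w ++ [false] = L ++ [b]) := fun h => hwL (List.append_inj' h rfl).1
        have h2 : ¬ (w ++ [true] = L ++ [b]) := fun h => hwL (List.append_inj' h rfl).1
        simp [List.filter_cons, h1, h2, hwL]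
    rw [List.flatMap_congr hstep]  -- name?
    rw [flatMap_ite (f := fun _ => L ++ [b])]
    rw [ih hL]
    simp

lemma sum_skew_allWords : ∀ n : ℕ, ((allWords n).map skew).sum = 0 := by
  intro n
  induction n with
  | zero => simp [allWords, skew]
  | succ n ih =>
    simp only [allWords, List.map_flatMap, sum_flatMap']
    have : ∀ w : List Bool,
        (([w ++ [false], w ++ [true]].map skew)).sum = 2 * skew w := by
      intro w; simp [skew_concat_false, skew_concat_true]; ring
    simp only [this]
    rw [List.sum_map_mul_left, ih, mul_zero]

end BetaNeg

namespace BetaNeg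
open List

lemma hasZeroRun_length {k : ℕ} {w : List Bool} (h : hasZeroRun k w) : k ≤ w.length := by
  have := h.length_le
  simpa using this

lemma hasZeroRun_mono {k : ℕ} {w u : List Bool} (h : hasZeroRun k w) :
    hasZeroRun k (w ++ u) := h.trans (List.prefix_append w u).isInfix

lemma infix_concat_cases {l w : List Bool} {a : Bool} (h : l <:+: w ++ [a]) :
    l <:+: w ∨ l <:+ w ++ [a] := by
  obtain ⟨s, t, hst⟩ := h
  rcases List.eq_nil_or_concat t with rfl | ⟨t', b, rfl⟩
  · right; exact ⟨s, by simpa using hst⟩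
  · left
    rw [List.concat_eq_append] at hst
    have : (s ++ l ++ t') ++ [b] = w ++ [a] := by simpa [List.append_assoc] using hst
    have h2 := (List.append_inj' this rfl).1
    exact ⟨s, t', h2⟩

lemma suffix_replicate_of_suffix_append {j : ℕ} {w u : List Bool} (hj : j ≤ u.length)
    (h : List.replicate j false <:+ w ++ u) : List.replicate j false <:+ u :=
  suffix_of_suffix_le h (List.suffix_append w u) (by simpa)

lemma hasZeroRun_concat_true {k : ℕ} (hk : 1 ≤ k) (w : List Bool) :
    hasZeroRun k (w ++ [true]) ↔ hasZeroRun k w := by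
  constructor
  · intro h
    rcases infix_concat_cases h with h | h
    · exact h
    · exfalso
      have h1 : [true] <:+ w ++ [true] := List.suffix_append w [true]
      have h2 : [true] <:+ List.replicate k false :=
        suffix_of_suffix_le h1 h (by simpa)
      obtain ⟨s, hs⟩ := h2
      have : true ∈ List.replicate k false := by rw [← hs]; simp
      simpa using List.eq_of_mem_replicate this
  · intro h; exact hasZeroRun_mono h

lemma hasZeroRun_concat_false {j : ℕ} (w : List Bool) :
    hasZeroRun (j + 1) (w ++ [false]) ↔
      hasZeroRun (j + 1) w ∨ List.replicate j false <:+ w := by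
  constructor
  · intro h
    rcases infix_concat_cases h with h | h
    · exact Or.inl h
    · right
      obtain ⟨s, hs⟩ := h
      rw [List.replicate_succ', ← List.append_assoc] at hs
      have := (List.append_inj' hs rfl).1
      exact ⟨s, this⟩
  · rintro (h | ⟨s, hs⟩)
    · exact hasZeroRun_mono h
    · exact ⟨s, [], by simp [← List.append_assoc, hs, List.replicate_succ']⟩

lemma not_suffix_replicate_big {i j : ℕ} (hij : i < j) (w : List Bool) :
    ¬ (List.replicate j false <:+ w ++ true :: List.replicate i false) := by
  intro h
  have h1 : true :: List.replicate i false <:+ w ++ true :: List.replicate i false :=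
    List.suffix_append _ _
  have h2 : true :: List.replicate i false <:+ List.replicate j false :=
    suffix_of_suffix_le h1 h (by simp; omega)
  obtain ⟨s, hs⟩ := h2
  have : true ∈ List.replicate j false := by rw [← hs]; simp
  simpa using List.eq_of_mem_replicate this

lemma hasZeroRun_append_true_replicate {k i : ℕ} (hk : 1 ≤ k) (hi : i ≤ k - 1) (w : List Bool) :
    hasZeroRun k (w ++ true :: List.replicate i false) ↔ hasZeroRun k w := by
  induction i with
  | zero =>
    simpa using hasZeroRun_concat_true hk w
  | succ i ih =>
    have hik : i ≤ k - 1 := by omega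
    have : w ++ true :: List.replicate (i+1) false
        = (w ++ true :: List.replicate i false) ++ [false] := by
      simp [List.replicate_succ', List.append_assoc]
    rw [this]
    obtain ⟨j, rfl⟩ : ∃ j, k = j + 1 := ⟨k - 1, by omega⟩
    rw [hasZeroRun_concat_false]
    rw [ih hik]
    have := not_suffix_replicate_big (i := i) (j := j) (by omega) w
    tauto

end BetaNeg

namespace BetaNeg
open List

def Ew (k n : ℕ) : List (List Bool) :=
  (allWords n).filter
    (fun w => !decide (hasZeroRun k w) && decide (List.replicate (k-1) false <:+ w))

def Cs (k n : ℕ) : ℕ := (Ew k n).length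

def Ss (k n : ℕ) : ℤ := ((Ew k n).map skew).sum

lemma beta_step (j n : ℕ) :
    beta (j+1) (n + 1) = 2 * beta (j+1) n - Ss (j+1) n - Cs (j+1) n := by
  have key : ∀ w : List Bool,
      (([w ++ [false], w ++ [true]].filter (fun w => !decide (hasZeroRun (j+1) w))).map skew).sum
        = (if (!decide (hasZeroRun (j+1) w) && !decide (List.replicate j false <:+ w))
            then skew w + 1 else 0)
          + (if (!decide (hasZeroRun (j+1) w)) then skew w + (-1) else 0) := by
    intro w
    by_cases h1 : hasZeroRun (j+1) w <;> by_cases h2 : List.replicate j false <:+ w <;>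
      simp [List.filter_cons, hasZeroRun_concat_false,
        hasZeroRun_concat_true (Nat.le_add_left 1 j), h1, h2,
        skew_concat_false, skew_concat_true] <;> ring
  have expand : beta (j+1) (n+1) =
      ((allWords n).map (fun w =>
        (([w ++ [false], w ++ [true]].filter
          (fun w => !decide (hasZeroRun (j+1) w))).map skew).sum)).sum := by
    simp only [beta, allWords, List.filter_flatMap, List.map_flatMap, sum_flatMap']
  rw [expand]
  simp only [key]
  rw [sum_map_add, sum_map_ite, sum_map_ite, sum_map_add_const, sum_map_add_const]
  have hsplit := filter_split_sum (allWords n)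
    (fun w => !decide (hasZeroRun (j+1) w)) (fun w => decide (List.replicate j false <:+ w)) skew
  have hsplitl := filter_split_length (allWords n)
    (fun w => !decide (hasZeroRun (j+1) w)) (fun w => decide (List.replicate j false <:+ w))
  have hb : beta (j+1) n = ((List.filter (fun w => !decide (hasZeroRun (j+1) w)) (allWords n)).map skew).sum := rfl
  have ha : alpha (j+1) n = (List.filter (fun w => !decide (hasZeroRun (j+1) w)) (allWords n)).length := rfl
  have hS : Ss (j+1) n = ((List.filter (fun w => !decide (hasZeroRun (j+1) w) && decide (List.replicate j false <:+ w)) (allWords n)).map skew).sum := rfl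
  have hC : Cs (j+1) n = (List.filter (fun w => !decide (hasZeroRun (j+1) w) && decide (List.replicate j false <:+ w)) (allWords n)).length := rfl
  rw [← hb, ← hS] at hsplit
  rw [← ha, ← hC] at hsplitl
  have hsplitl' : (alpha (j+1) n : ℤ) = (Cs (j+1) n : ℤ) + ((allWords n).filter (fun w => !decide (hasZeroRun (j+1) w) && !decide (List.replicate j false <:+ w))).length := by
    exact_mod_cast congrArg (Nat.cast : ℕ → ℤ) hsplitl
  rw [← hb, ← ha]
  linarith [hsplit, hsplitl']

end BetaNeg

namespace BetaNeg
open List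

lemma key2 {j : ℕ} {w u : List Bool} (hu : u.length = j + 1) :
    (¬ hasZeroRun (j+1) (w ++ u) ∧ List.replicate j false <:+ w ++ u)
      ↔ (¬ hasZeroRun (j+1) w ∧ u = true :: List.replicate j false) := by
  constructor
  · rintro ⟨h1, h2⟩
    have h2' : List.replicate j false <:+ u :=
      suffix_replicate_of_suffix_append (by omega) h2
    obtain ⟨a, ha⟩ := h2'
    have hla : a.length = 1 := by
      have := congrArg List.length ha
      simp at this; omega
    obtain ⟨x, rfl⟩ := List.length_eq_one_iff.mp hla
    cases x
    · exfalso
      apply h1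
      have hu' : u = List.replicate (j+1) false := by
        rw [List.replicate_succ]; exact ha.symm
      exact ⟨w, [], by simp [hu']⟩
    · constructor
      · intro h; exact h1 (hasZeroRun_mono h)
      · simpa using ha.symm
  · rintro ⟨h1, rfl⟩
    refine ⟨?_, ?_⟩
    · rw [hasZeroRun_append_true_replicate (Nat.le_add_left 1 j) (by omega)]
      exact h1
    · exact ⟨w ++ [true], by simp⟩

end BetaNeg

namespace BetaNeg
open List

lemma allWords_add (m : ℕ) : ∀ r : ℕ, allWords (m + r)
    = (allWords m).flatMap (fun w => (allWords r).map (w ++ ·)) := by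
  intro r
  induction r with
  | zero =>
    simp [allWords]
  | succ r ih =>
    show allWords ((m + r) + 1) = _
    simp only [allWords]
    rw [ih, List.flatMap_assoc]
    congr 1
    funext w
    rw [List.map_flatMap]
    have : ∀ v : List Bool,
        ([v ++ [false], v ++ [true]].map (w ++ ·))
          = [(w ++ v) ++ [false], (w ++ v) ++ [true]] := by
      intro v; simp [List.append_assoc]
    simp only [List.flatMap_map]
    congr 1
    funext v
    simp [List.append_assoc]

lemma Ew_eq_map (j m : ℕ) :
    Ew (j+1) (m + (j+1)) =
      ((allWords m).filter (fun w => !decide (hasZeroRun (j+1) w))).map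
        (· ++ (true :: List.replicate j false)) := by
  rw [Ew, allWords_add, List.filter_flatMap]
  have inner : ∀ w ∈ allWords m,
      (List.filter
        (fun x => !decide (hasZeroRun (j+1) x) && decide (List.replicate (j+1-1) false <:+ x))
        ((allWords (j+1)).map (w ++ ·)))
      = if (!decide (hasZeroRun (j+1) w)) then [w ++ (true :: List.replicate j false)] else [] := by
    intro w _
    rw [List.filter_map]
    rw [List.filter_congr (q := fun u =>
        !decide (hasZeroRun (j+1) w) && (u == true :: List.replicate j false))
      (fun u hu => by
        have hlen : u.length = j + 1 := length_of_mem_allWords hu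
        have hiff := key2 (w := w) hlen
        by_cases h1 : hasZeroRun (j+1) w <;>
          by_cases h2 : u = true :: List.replicate j false <;>
          · simp only [Function.comp]
            have := hiff.symm
            by_cases h3 : hasZeroRun (j+1) (w ++ u) <;>
              by_cases h4 : List.replicate j false <:+ w ++ u <;>
              simp_all)]
    by_cases hw : hasZeroRun (j+1) w
    · simp [hw]
    · have heq : (fun u : List Bool => !decide (hasZeroRun (j+1) w)
          && (u == true :: List.replicate j false))
          = (fun u => u == true :: List.replicate j false) := by
        funext u; simp [hw]
      rw [heq, allWords_filter_eq (by simp)]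
      simp [hw]
  rw [List.flatMap_congr inner]
  rw [flatMap_ite]

lemma Ew_base (j : ℕ) : Ew (j+1) j = [List.replicate j false] := by
  rw [Ew]
  rw [List.filter_congr (q := fun u => u == List.replicate j false)
    (fun u hu => by
      have hlen : u.length = j := length_of_mem_allWords hu
      have h1 : ¬ hasZeroRun (j+1) u := by
        intro h; have := hasZeroRun_length h; omega
      by_cases h2 : u = List.replicate j false
      · subst h2; simp [h1]
      · have h3 : ¬ (List.replicate j false <:+ u) := by
          intro h
          exact h2 (h.eq_of_length (by simp [hlen])).symm
        simp [h1, h2, h3])]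
  exact allWords_filter_eq (by simp)

end BetaNeg

namespace BetaNeg
open List

lemma beta_small {k m : ℕ} (h : m < k) : beta k m = 0 := by
  rw [beta]
  rw [List.filter_eq_self.mpr (fun w hw => by
    simp only [Bool.not_eq_true', decide_eq_false_iff_not]
    intro hzr
    have := hasZeroRun_length hzr
    rw [length_of_mem_allWords hw] at this
    omega)]
  exact sum_skew_allWords m

lemma beta_at_k (j : ℕ) : beta (j+1) (j+1) = -((j : ℤ) + 1) := by
  have h := beta_step j j
  rw [beta_small (Nat.lt_succ_self j)] at h
  have hC : Cs (j+1) j = 1 := by rw [Cs, Ew_base]; rfl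
  have hS : Ss (j+1) j = (j : ℤ) := by rw [Ss, Ew_base]; simp [skew_replicate_false]
  rw [h, hC, hS]; push_cast; ring

lemma skew_tblock (j : ℕ) (w : List Bool) :
    skew (w ++ (true :: List.replicate j false)) = skew w + ((j : ℤ) - 1) := by
  rw [show (true :: List.replicate j false) = [true] ++ List.replicate j false from rfl,
    ← List.append_assoc, skew_append, skew_append, skew_replicate_false]
  simp [skew]; ring

lemma beta_rec (j m : ℕ) :
    beta (j+1) (m + (j+1) + 1)
      = 2 * beta (j+1) (m + (j+1)) - beta (j+1) m - (j : ℤ) * (alpha (j+1) m : ℤ) := by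
  have h := beta_step j (m + (j+1))
  have hC : (Cs (j+1) (m + (j+1)) : ℤ) = (alpha (j+1) m : ℤ) := by
    rw [Cs, Ew_eq_map]; simp [alpha]
  have hS : Ss (j+1) (m + (j+1)) = beta (j+1) m + ((j : ℤ) - 1) * (alpha (j+1) m : ℤ) := by
    rw [Ss, Ew_eq_map, List.map_map]
    have : (skew ∘ fun w => w ++ (true :: List.replicate j false))
        = fun w => skew w + ((j : ℤ) - 1) := by
      funext w; simp [Function.comp, skew_tblock]
    rw [this, sum_map_add_const]
    rw [show (((allWords m).filter (fun w => !decide (hasZeroRun (j+1) w))).map skew).sum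
      = beta (j+1) m from rfl]
    rw [show ((allWords m).filter (fun w => !decide (hasZeroRun (j+1) w))).length
      = alpha (j+1) m from rfl]
  rw [h, hC, hS]; ring

lemma beta_mono (j : ℕ) : ∀ n, j + 1 ≤ n →
    beta (j+1) n ≤ -((j : ℤ) + 1) ∧
      ∀ m, j + 1 ≤ m → m ≤ n → beta (j+1) n ≤ beta (j+1) m := by
  intro n
  induction n using Nat.strong_induction_on with
  | _ n ih =>
    intro hn
    rcases eq_or_lt_of_le hn with heq | hlt
    · subst heq
      refine ⟨le_of_eq (beta_at_k j), ?_⟩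
      intro m h1 h2
      have : m = j + 1 := by omega
      subst this; exact le_refl _
    · obtain ⟨n', rfl⟩ : ∃ n', n = n' + 1 := ⟨n - 1, by omega⟩
      have hn' : j + 1 ≤ n' := by omega
      obtain ⟨ihb, ihm⟩ := ih n' (by omega) hn'
      have hstep : beta (j+1) (n' + 1) ≤ beta (j+1) n' := by
        obtain ⟨m', hm'⟩ : ∃ m', n' = m' + (j+1) := ⟨n' - (j+1), by omega⟩
        subst hm'
        have hrec := beta_rec j m'
        have hα : (0:ℤ) ≤ (j : ℤ) * (alpha (j+1) m' : ℤ) := by positivity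
        by_cases hm : j + 1 ≤ m'
        · have := ihm m' hm (by omega)
          linarith
        · have h0 : beta (j+1) m' = 0 := beta_small (by omega)
          linarith
      refine ⟨le_trans hstep ihb, ?_⟩
      intro m h1 h2
      rcases eq_or_lt_of_le h2 with rfl | h2'
      · exact le_refl _
      · exact le_trans hstep (ihm m h1 (by omega))

end BetaNeg

/-- For `3 ≤ k ≤ n − 1`, `β_k(n) < 0`. -/
theorem beta_neg (k n : ℕ) (hk : 3 ≤ k) (hkn : k + 1 ≤ n) : beta k n < 0 := by
  obtain ⟨j, rfl⟩ : ∃ j, k = j + 1 := ⟨k - 1, by omega⟩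
  have h := (BetaNeg.beta_mono j n (by omega)).1
  have h2 : (0:ℤ) < (j:ℤ) + 1 := by positivity
  linarith
end

section
/- Let n be a prime with n ≥ 3 and let k be an integer with 1 ≤ k ≤ n−2. Then sk(ℓ_k) = Σ_w (k − 2 + sk(w)) / (ρ_k(w) + 1), where the sum is over all binary words w of length n−k−2 that contain no subword 0^{k+1}, and ρ_k(w) denotes the number of occurrences of 0^k as a subword of w. -/
namespace Stmt12

/-! ### Basic facts -/

lemma mem_allWords : ∀ {m : ℕ} {w : List Bool}, w ∈ allWords m ↔ w.length = m := by
  intro m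
  induction m with
  | zero => intro w; simp [allWords, List.length_eq_zero_iff]
  | succ m ih =>
    intro w
    constructor
    · intro hw
      simp only [allWords, List.mem_flatMap, List.mem_cons, List.mem_singleton] at hw
      obtain ⟨u, hu, hw⟩ := hw
      have hlen := ih.mp hu
      rcases hw with h | h | h
      · subst h; simp [hlen]
      · subst h; simp [hlen]
      · exact absurd h List.not_mem_nil
    · intro hw
      have hne : w ≠ [] := by intro h; simp [h] at hw
      have hsplit := List.dropLast_append_getLast hne
      simp only [allWords, List.mem_flatMap, List.mem_cons, List.mem_singleton]
      refine ⟨w.dropLast, ih.mpr ?_, ?_⟩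
      · have := w.length_dropLast; omega
      · cases hgl : w.getLast hne with
        | false => left; rw [hgl] at hsplit; exact hsplit.symm
        | true => right; left; rw [hgl] at hsplit; exact hsplit.symm

lemma nodup_allWords : ∀ m, (allWords m).Nodup := by
  intro m
  induction m with
  | zero => simp [allWords]
  | succ m ih =>
    rw [allWords, List.nodup_flatMap]
    constructor
    · intro x _; simp
    · refine List.Pairwise.imp ?_ ih
      intro a b hab
      intro z hz hz'
      simp only [List.mem_cons, List.mem_singleton, List.not_mem_nil, or_false] at hz hz'
      have key : ∀ (x y : Bool), a ++ [x] = b ++ [y] → a = b := by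
        intro x y h
        exact (List.append_inj' h (by simp)).1
      rcases hz with rfl | rfl <;> rcases hz' with h | h <;> exact hab (key _ _ h)

lemma skew_append (a b : List Bool) : skew (a ++ b) = skew a + skew b := by
  simp [skew]

lemma skew_cons (x : Bool) (a : List Bool) :
    skew (x :: a) = (if x then (-1 : ℤ) else 1) + skew a := by
  simp [skew]

lemma skew_flatten (ls : List (List Bool)) : skew ls.flatten = (ls.map skew).sum := by
  induction ls with
  | nil => simp [skew]
  | cons a t ih => simp [List.flatten_cons, skew_append, ih]

lemma skew_perm {a b : List Bool} (h : a.Perm b) : skew a = skew b :=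
  (h.map _).sum_eq

lemma skew_replicate_false (j : ℕ) : skew (List.replicate j false) = j := by
  simp [skew, List.map_replicate]

lemma skew_rotate (c : List Bool) (r : ℕ) : skew (c.rotate r) = skew c :=
  skew_perm (c.rotate_perm r)

lemma lexLt_iff {u v : List Bool} : lexLt u v ↔ u < v := Iff.rfl

end Stmt12

namespace Stmt12

/-! ### Cyclic access -/

/-- Cyclic access into a list. -/
def pget (y : List Bool) (i : ℕ) : Bool := y.getD (i % y.length) true

lemma pget_eq_getD {y : List Bool} {i : ℕ} (h : i < y.length) : pget y i = y.getD i true := by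
  rw [pget, Nat.mod_eq_of_lt h]

lemma pget_eq_getElem {y : List Bool} {i : ℕ} (h : i < y.length) : pget y i = (y[i]'h) := by
  rw [pget_eq_getD h, List.getD_eq_getElem _ _ h]

lemma pget_add_length (y : List Bool) (i : ℕ) : pget y (i + y.length) = pget y i := by
  rw [pget, pget, Nat.add_mod_right]

lemma pget_mod_add (y : List Bool) (x j : ℕ) : pget y (x % y.length + j) = pget y (x + j) := by
  rw [pget, pget, Nat.mod_add_mod]

lemma pget_rotate (y : List Bool) (hc : y ≠ []) (r i : ℕ) :
    pget (y.rotate r) i = pget y (i + r) := by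
  have hpos : 0 < y.length := List.length_pos_iff.mpr hc
  have hl : (y.rotate r).length = y.length := y.length_rotate r
  have h1 : i % y.length < y.length := Nat.mod_lt _ hpos
  rw [pget, pget, hl, List.getD_eq_getElem _ _ (by rw [hl]; exact h1),
      List.getD_eq_getElem _ _ (Nat.mod_lt _ hpos)]
  have h2 := List.get_rotate y r ⟨i % y.length, by rw [hl]; exact h1⟩
  simp only [List.get_eq_getElem] at h2
  rw [h2]
  congr 1
  rw [Nat.mod_add_mod]

/-- `i` starts a cyclic window of `j` zeros. -/
def Zwin (j : ℕ) (y : List Bool) (i : ℕ) : Prop := ∀ t < j, pget y (i + t) = false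

/-- Starting positions (reduced mod length) of cyclic windows of `j` zeros. -/
def cycStarts (j : ℕ) (y : List Bool) : Finset ℕ :=
  (Finset.range y.length).filter (fun i => ∀ t < j, pget y (i + t) = false)

lemma mem_cycStarts {j : ℕ} {y : List Bool} {i : ℕ} :
    i ∈ cycStarts j y ↔ i < y.length ∧ Zwin j y i := by
  simp [cycStarts, Zwin]

lemma replicate_prefix_iff {j : ℕ} {u : List Bool} :
    List.replicate j false <+: u ↔ j ≤ u.length ∧ ∀ t < j, u.getD t true = false := by
  rw [List.prefix_iff_eq_take]
  constructor
  · intro h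
    simp only [List.length_replicate] at h
    have hlen : j ≤ u.length := by
      have := congrArg List.length h
      simp only [List.length_replicate, List.length_take] at this
      omega
    refine ⟨hlen, fun t ht => ?_⟩
    have h1 := List.getElem_of_eq h (show t < (List.replicate j false).length by simpa using ht)
    rw [List.getElem_replicate] at h1
    have h2 : (List.take j u)[t]'(by simp; omega) = u[t]'(lt_of_lt_of_le ht hlen) :=
      List.getElem_take
    rw [List.getD_eq_getElem _ _ (lt_of_lt_of_le ht hlen)]
    exact h2.symm.trans h1.symm
  · rintro ⟨hlen, h⟩
    simp only [List.length_replicate]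
    refine (List.ext_getElem (by simp; omega) ?_).symm
    intro t h1 h2
    simp only [List.length_take] at h1
    rw [List.getElem_take, List.getElem_replicate]
    have := h t (by omega)
    rwa [List.getD_eq_getElem _ _ (by omega)] at this

lemma infix_iff_drop {l u : List Bool} : l <:+: u ↔ ∃ s ≤ u.length, l <+: u.drop s := by
  constructor
  · rintro ⟨s, t, rfl⟩
    refine ⟨s.length, by simp, ?_⟩
    rw [List.append_assoc, List.drop_left]
    exact List.prefix_append l t
  · rintro ⟨s, _, t, ht⟩
    refine ⟨u.take s, t, ?_⟩
    rw [List.append_assoc, ht, List.take_append_drop]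

lemma hasZeroRun_iff_exists {j : ℕ} {y : List Bool} :
    hasZeroRun j y ↔ ∃ s, s + j ≤ y.length ∧ ∀ t < j, y.getD (s + t) true = false := by
  rw [hasZeroRun, infix_iff_drop]
  constructor
  · rintro ⟨s, hs, hp⟩
    rw [replicate_prefix_iff] at hp
    refine ⟨s, by have := hp.1; simp at this; omega, fun t ht => ?_⟩
    have := hp.2 t ht
    rw [List.getD_eq_getElem _ _ (by simp at hp ⊢; omega)] at this
    rw [List.getD_eq_getElem _ _ (by simp at hp ⊢; omega)]
    rwa [List.getElem_drop] at this
  · rintro ⟨s, hs, h⟩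
    refine ⟨s, by omega, ?_⟩
    rw [replicate_prefix_iff]
    refine ⟨by simp; omega, fun t ht => ?_⟩
    rw [List.getD_eq_getElem _ _ (by simp; omega), List.getElem_drop]
    have := h t ht
    rwa [List.getD_eq_getElem _ _ (by omega)] at this

lemma hasZeroRun_iff_win {j : ℕ} {y : List Bool} (hc : y ≠ []) :
    hasZeroRun j y ↔ ∃ s, s + j ≤ y.length ∧ Zwin j y s := by
  rw [hasZeroRun_iff_exists]
  constructor
  · rintro ⟨s, hs, h⟩
    exact ⟨s, hs, fun t ht => by rw [pget_eq_getD (by omega)]; exact h t ht⟩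
  · rintro ⟨s, hs, h⟩
    exact ⟨s, hs, fun t ht => by rw [← pget_eq_getD (by omega)]; exact h t ht⟩

lemma win_to_hasZeroRun {j : ℕ} {y : List Bool} (hne : y ≠ [])
    (hlast : y.getLast hne = true) (hj : j ≤ y.length)
    {i : ℕ} (hi : i < y.length) (hw : Zwin j y i) : hasZeroRun j y := by
  rw [hasZeroRun_iff_win hne]
  refine ⟨i, ?_, hw⟩
  by_contra hcon
  push_neg at hcon
  have ht : y.length - 1 - i < j := by omega
  have := hw _ ht
  rw [show i + (y.length - 1 - i) = y.length - 1 by omega] at this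
  rw [pget_eq_getElem (by omega)] at this
  rw [List.getLast_eq_getElem] at hlast
  rw [this] at hlast
  exact Bool.false_ne_true hlast

end Stmt12

namespace Stmt12

/-! ### Rotation arithmetic -/

lemma rotate_add_cancel (y : List Bool) (a b : ℕ) :
    (y.rotate a).rotate (y.length - a % y.length + b) = y.rotate b := by
  rcases eq_or_ne y [] with rfl | hy
  · simp
  have hpos : 0 < y.length := List.length_pos_iff.mpr hy
  have hmod : a % y.length < y.length := Nat.mod_lt _ hpos
  have hdiv := Nat.mod_add_div a y.length
  rw [List.rotate_rotate]
  have : a + (y.length - a % y.length + b) = y.length * (a / y.length + 1) + b := by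
    rw [Nat.mul_succ]
    omega
  rw [this, ← List.rotate_rotate, List.rotate_length_mul]

lemma rotate_inv (y : List Bool) (a : ℕ) :
    (y.rotate a).rotate (y.length - a % y.length) = y := by
  have := rotate_add_cancel y a 0
  simpa using this

/-! ### Primality rigidity -/

lemma rotate_fix_const {n : ℕ} (hn : n.Prime) {y : List Bool} (hlen : y.length = n)
    {i : ℕ} (hi1 : 1 ≤ i) (hin : i < n) (hfix : y.rotate i = y) :
    ∀ a < n, y.getD a true = y.getD 0 true := by
  haveI := Fact.mk hn
  have hn1 : 1 < n := hn.one_lt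
  -- rotate by multiples of i
  have hmul : ∀ j : ℕ, y.rotate (j * i) = y := by
    intro j
    induction j with
    | zero => simp
    | succ j ih =>
      rw [Nat.succ_mul, ← List.rotate_rotate, ih, hfix]
  -- find inverse of i mod n
  have hiz : (i : ZMod n) ≠ 0 := by
    rw [Ne, ZMod.natCast_eq_zero_iff]
    intro hdvd
    exact absurd (Nat.le_of_dvd (by omega) hdvd) (by omega)
  set j := ((i : ZMod n)⁻¹).val with hj
  have hji : (j * i) % n = 1 := by
    have h1 : ((j * i : ℕ) : ZMod n) = 1 := by
      push_cast
      rw [hj, ZMod.natCast_val, ZMod.cast_id]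
      exact inv_mul_cancel₀ hiz
    have h2 := ZMod.val_natCast (n := n) (j * i)
    rw [h1] at h2
    rw [← h2, ZMod.val_one]
  -- rotate by 1 fixes y
  have hone : y.rotate 1 = y := by
    have := hmul j
    rw [← List.rotate_mod, hlen, hji] at this
    exact this
  -- all entries equal
  have hstep : ∀ a < n, y.getD ((a + 1) % n) true = y.getD a true := by
    intro a ha
    · have h1 : a < y.length := by omega
      have h2 : (a + 1) % n < y.length := by rw [hlen]; exact Nat.mod_lt _ (by omega)
      rw [List.getD_eq_getElem _ _ h1, List.getD_eq_getElem _ _ h2]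
      have h3 := List.get_rotate y 1 ⟨a, by simpa using h1⟩
      simp only [List.get_eq_getElem, hone] at h3
      rw [h3]
      congr 1
      rw [hlen]
  intro a
  induction a with
  | zero => intro _; rfl
  | succ a ih =>
    intro ha
    have h := hstep a (by omega)
    rw [Nat.mod_eq_of_lt ha] at h
    rw [h]
    exact ih (by omega)

end Stmt12

namespace Stmt12

lemma rotate_fix_false {n : ℕ} (hn : n.Prime) {y : List Bool} (hlen : y.length = n)
    (ht : true ∈ y) (hf : false ∈ y)
    {i : ℕ} (hi1 : 1 ≤ i) (hin : i < n) (hfix : y.rotate i = y) : False := by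
  have hconst := rotate_fix_const hn hlen hi1 hin hfix
  obtain ⟨a, ha, hga⟩ := List.mem_iff_getElem.mp ht
  obtain ⟨b, hb, hgb⟩ := List.mem_iff_getElem.mp hf
  have h1 : y.getD a true = true := by rw [List.getD_eq_getElem _ _ ha]; exact hga
  have h2 : y.getD b true = false := by rw [List.getD_eq_getElem _ _ hb]; exact hgb
  have := (hconst a (by omega)).trans (hconst b (by omega)).symm
  rw [h1, h2] at this
  exact absurd this (by decide)

lemma isLyndon_iff {L : List Bool} :
    IsLyndon L ↔ L ≠ [] ∧ ∀ i, 1 ≤ i → i < L.length → L < L.rotate i := by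
  unfold IsLyndon
  simp only [Finset.mem_Ico, and_imp]
  rfl

lemma exists_lyndon_rotate {n : ℕ} (hn : n.Prime) {y : List Bool} (hlen : y.length = n)
    (ht : true ∈ y) (hf : false ∈ y) : ∃ i < n, IsLyndon (y.rotate i) := by
  have hn0 : 0 < n := hn.pos
  obtain ⟨i₀, hi₀, hmin⟩ := Finset.exists_min_image (Finset.range n) (fun i => y.rotate i)
    ⟨0, Finset.mem_range.mpr hn0⟩
  rw [Finset.mem_range] at hi₀
  refine ⟨i₀, hi₀, ?_⟩
  rw [isLyndon_iff]
  have hl : (y.rotate i₀).length = n := by rw [y.length_rotate, hlen]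
  constructor
  · intro h; rw [h] at hl; simp at hl; omega
  · intro j hj1 hj2
    rw [hl] at hj2
    have h1 : (y.rotate i₀).rotate j = y.rotate ((i₀ + j) % n) := by
      rw [List.rotate_rotate, ← hlen, List.rotate_mod]
    have hle : y.rotate i₀ ≤ y.rotate ((i₀ + j) % n) :=
      hmin _ (Finset.mem_range.mpr (Nat.mod_lt _ hn0))
    have hne : y.rotate i₀ ≠ (y.rotate i₀).rotate j := by
      intro h
      exact rotate_fix_false hn hl ((y.rotate_perm i₀).mem_iff.mpr ht)
        ((y.rotate_perm i₀).mem_iff.mpr hf) hj1 hj2 h.symm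
    rw [← h1] at hle
    exact lt_of_le_of_ne hle hne

lemma lyndon_rotate_eq {L₁ L₂ : List Bool} (h1 : IsLyndon L₁) (h2 : IsLyndon L₂)
    {i : ℕ} (h : L₂ = L₁.rotate i) : L₁ = L₂ := by
  rw [isLyndon_iff] at h1 h2
  have hne : L₁ ≠ [] := h1.1
  have hl : 0 < L₁.length := List.length_pos_iff.mpr hne
  have h2' : L₂ = L₁.rotate (i % L₁.length) := by rw [h, List.rotate_mod]
  have hlen2 : L₂.length = L₁.length := by rw [h2', List.length_rotate]
  by_cases hr : i % L₁.length = 0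
  · rw [h2', hr, List.rotate_zero]
  · exfalso
    have hmod : i % L₁.length < L₁.length := Nat.mod_lt _ hl
    have hlt1 : L₁ < L₂ := by
      rw [h2']
      exact h1.2 _ (by omega) hmod
    have hback : L₂.rotate (L₁.length - i % L₁.length) = L₁ := by
      rw [h2', List.rotate_rotate, show i % L₁.length + (L₁.length - i % L₁.length) =
        L₁.length by omega, List.rotate_length]
    have hlt2 : L₂ < L₁ := by
      rw [← hback]
      exact h2.2 _ (by omega) (by omega)
    exact absurd hlt1 (lt_asymm hlt2)

open Classical in
/-- The (unique) Lyndon rotation of a word, when it exists. -/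
noncomputable def lynRot (y : List Bool) : List Bool :=
  if h : ∃ i, IsLyndon (y.rotate i) then y.rotate h.choose else []

lemma lynRot_eq {y L : List Bool} (hL : IsLyndon L) {i : ℕ} (hrot : y.rotate i = L) :
    lynRot y = L := by
  have hex : ∃ j, IsLyndon (y.rotate j) := ⟨i, hrot ▸ hL⟩
  rw [lynRot]
  rw [dif_pos hex]
  have h1 : IsLyndon (y.rotate hex.choose) := hex.choose_spec
  have h2 : L = (y.rotate hex.choose).rotate (y.length - hex.choose % y.length + i) := by
    rw [rotate_add_cancel, hrot]
  exact lyndon_rotate_eq h1 hL h2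

end Stmt12

namespace Stmt12

lemma lex_append_left (p : List Bool) {u v : List Bool} (h : u < v) : p ++ u < p ++ v := by
  induction p with
  | nil => exact h
  | cons a t ih => exact List.Lex.cons ih

lemma exists_decomp {u : List Bool} (ht : true ∈ u) :
    ∃ a v, u = List.replicate a false ++ true :: v := by
  induction u with
  | nil => cases ht
  | cons x t ih =>
    cases x
    · have ht' : true ∈ t := by simpa using ht
      obtain ⟨a, v, hv⟩ := ih ht'
      exact ⟨a + 1, v, by rw [List.replicate_succ, List.cons_append, hv]⟩
    · exact ⟨0, t, rfl⟩

lemma lyndon_getLast_true {L : List Bool} (h : IsLyndon L) (ht : true ∈ L)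
    (hne : L ≠ []) : L.getLast hne = true := by
  by_contra hlast
  rw [Bool.not_eq_true] at hlast
  -- decompose from the back
  have htr : true ∈ L.reverse := by simpa using ht
  obtain ⟨m, v', hv'⟩ := exists_decomp htr
  have hm : 1 ≤ m := by
    by_contra hm
    have hm0 : m = 0 := by omega
    rw [hm0] at hv'
    simp only [List.replicate_zero, List.nil_append] at hv'
    have hL0 : L = v'.reverse ++ [true] := by
      rw [← List.reverse_reverse L, hv']; simp
    have h1 : L.getLast? = some false := by
      rw [List.getLast?_eq_getLast hne, hlast]
    rw [hL0, List.getLast?_concat] at h1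
    exact absurd h1 (by simp)
  have hL : L = (v'.reverse ++ [true]) ++ List.replicate m false := by
    have := congrArg List.reverse hv'
    rw [List.reverse_reverse] at this
    rw [this]
    simp
  set U := v'.reverse ++ [true] with hU
  have hUne : U ≠ [] := by simp [hU]
  have htU : true ∈ U := by simp [hU]
  obtain ⟨a, v, hdec⟩ := exists_decomp htU
  have hlenL : L.length = U.length + m := by rw [hL]; simp
  have hUlen : 1 ≤ U.length := by simp [hU]
  -- the rotation by U.length
  have hrot : L.rotate U.length = List.replicate m false ++ U := by
    rw [hL, List.rotate_eq_drop_append_take (by simp), List.drop_left, List.take_left]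
  rw [isLyndon_iff] at h
  have hlt1 : L < L.rotate U.length := h.2 U.length hUlen (by omega)
  have hlt2 : L.rotate U.length < L := by
    rw [hrot, hL, hdec]
    rw [show List.replicate m false ++ (List.replicate a false ++ true :: v) =
      List.replicate a false ++ (List.replicate m false ++ true :: v) by
        rw [← List.append_assoc, ← List.append_assoc, ← List.replicate_add,
          ← List.replicate_add, Nat.add_comm]]
    rw [show (List.replicate a false ++ true :: v) ++ List.replicate m false =
      List.replicate a false ++ (true :: (v ++ List.replicate m false)) by simp]
    apply lex_append_left
    rw [show m = (m - 1) + 1 by omega, List.replicate_succ, List.cons_append]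
    exact List.Lex.rel (by decide)
  exact absurd hlt1 (lt_asymm hlt2)

end Stmt12

namespace Stmt12

/-! ### The cut word -/

def cword (k : ℕ) (w : List Bool) : List Bool :=
  List.replicate k false ++ true :: (w ++ [true])

lemma cword_length (k : ℕ) (w : List Bool) : (cword k w).length = k + w.length + 2 := by
  simp [cword]; omega

lemma cword_ne_nil (k : ℕ) (w : List Bool) : cword k w ≠ [] := by
  intro h
  have := congrArg List.length h
  rw [cword_length] at this
  simp at this

lemma true_mem_cword (k : ℕ) (w : List Bool) : true ∈ cword k w := by simp [cword]

lemma false_mem_cword {k : ℕ} (hk : 1 ≤ k) (w : List Bool) : false ∈ cword k w := by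
  simp [cword]
  omega

lemma pget_cword_lt {k : ℕ} (w : List Bool) {j : ℕ} (hj : j < k) :
    pget (cword k w) j = false := by
  rw [pget_eq_getD (by rw [cword_length]; omega), cword,
    List.getD_append _ _ _ _ (by simpa using hj),
    List.getD_eq_getElem _ _ (by simpa using hj), List.getElem_replicate]

lemma pget_cword_k (k : ℕ) (w : List Bool) : pget (cword k w) k = true := by
  rw [pget_eq_getD (by rw [cword_length]; omega), cword,
    List.getD_append_right _ _ _ _ (by simp), List.length_replicate, Nat.sub_self,
    List.getD_cons_zero]

lemma pget_cword_mid {k : ℕ} (w : List Bool) {j : ℕ} (hj : j < w.length) :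
    pget (cword k w) (k + 1 + j) = w.getD j true := by
  rw [pget_eq_getD (by rw [cword_length]; omega), cword,
    List.getD_append_right _ _ _ _ (by simp; omega), List.length_replicate,
    show k + 1 + j - k = 1 + j by omega, show 1 + j = j + 1 by omega, List.getD_cons_succ,
    List.getD_append _ _ _ _ hj]

lemma pget_cword_last (k : ℕ) (w : List Bool) :
    pget (cword k w) (k + 1 + w.length) = true := by
  rw [pget_eq_getD (by rw [cword_length]; omega), cword,
    List.getD_append_right _ _ _ _ (by simp; omega), List.length_replicate,
    show k + 1 + w.length - k = w.length + 1 by omega, List.getD_cons_succ,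
    List.getD_append_right _ _ _ _ (by omega), Nat.sub_self, List.getD_cons_zero]

lemma skew_cword (k : ℕ) (w : List Bool) :
    skew (cword k w) = (k : ℤ) - 2 + skew w := by
  rw [cword, skew_append, skew_cons, skew_append, skew_replicate_false]
  have : skew [true] = -1 := by simp [skew]
  rw [this]
  norm_num
  ring

/-! ### Window counting in the cut word -/

lemma getD_drop_eq {w : List Bool} {t j : ℕ} (h : t + j < w.length) :
    (w.drop t).getD j true = w.getD (t + j) true := by
  rw [List.getD_eq_getElem _ _ (by simp; omega), List.getD_eq_getElem _ _ (by omega),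
    List.getElem_drop]

lemma mem_cycStarts_cword {k : ℕ} (hk : 1 ≤ k) (w : List Bool) (i : ℕ) :
    i ∈ cycStarts k (cword k w) ↔
      i = 0 ∨ ∃ t, t ≤ w.length ∧ (List.replicate k false <+: w.drop t) ∧ i = t + (k + 1) := by
  set m := w.length with hm
  have hN : (cword k w).length = k + m + 2 := cword_length k w
  rw [mem_cycStarts, hN]
  constructor
  · rintro ⟨hi, hwin⟩
    by_cases h0 : i = 0
    · exact Or.inl h0
    right
    -- i cannot be in [1, k]
    have hik : k + 1 ≤ i := by
      by_contra hik
      push_neg at hik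
      have ht : k - i < k := by omega
      have := hwin (k - i) ht
      rw [show i + (k - i) = k by omega, pget_cword_k] at this
      exact absurd this (by decide)
    -- i + k cannot reach the final 1 or wrap
    have hik2 : i + k ≤ k + m + 1 := by
      by_contra hik2
      push_neg at hik2
      have ht : k + m + 1 - i < k := by omega
      have := hwin (k + m + 1 - i) ht
      rw [show i + (k + m + 1 - i) = k + 1 + m by omega, pget_cword_last] at this
      exact absurd this (by decide)
    refine ⟨i - (k + 1), by omega, ?_, by omega⟩
    rw [replicate_prefix_iff]
    refine ⟨by simp; omega, fun t ht => ?_⟩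
    rw [getD_drop_eq (by omega)]
    have := hwin t ht
    rw [show i + t = k + 1 + (i - (k + 1) + t) by omega,
      pget_cword_mid _ (by omega)] at this
    exact this
  · rintro (rfl | ⟨t, htm, hpre, rfl⟩)
    · exact ⟨by omega, fun t ht => by rw [Nat.zero_add]; exact pget_cword_lt w ht⟩
    · rw [replicate_prefix_iff] at hpre
      have htk : t + k ≤ m := by have := hpre.1; simp at this; omega
      refine ⟨by omega, fun s hs => ?_⟩
      rw [show t + (k + 1) + s = k + 1 + (t + s) by omega, pget_cword_mid _ (by omega)]
      have := hpre.2 s hs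
      rwa [getD_drop_eq (by omega)] at this

lemma occCount_eq_card (k : ℕ) (w : List Bool) :
    occCount k w = ((Finset.range (w.length + 1)).filter
      (fun t => List.replicate k false <+: w.drop t)).card := by
  rfl

lemma card_cycStarts_cword {k : ℕ} (hk : 1 ≤ k) (w : List Bool) :
    (cycStarts k (cword k w)).card = occCount k w + 1 := by
  have hset : cycStarts k (cword k w) =
      insert 0 (Finset.image (fun t => t + (k + 1))
        ((Finset.range (w.length + 1)).filter
          (fun t => List.replicate k false <+: w.drop t))) := by
    ext i
    rw [mem_cycStarts_cword hk]
    simp only [Finset.mem_insert, Finset.mem_image, Finset.mem_filter, Finset.mem_range]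
    constructor
    · rintro (rfl | ⟨t, ht, hp, rfl⟩)
      · exact Or.inl rfl
      · exact Or.inr ⟨t, ⟨by omega, hp⟩, rfl⟩
    · rintro (rfl | ⟨t, ⟨ht, hp⟩, rfl⟩)
      · exact Or.inl rfl
      · exact Or.inr ⟨t, by omega, hp, rfl⟩
  rw [hset, Finset.card_insert_of_notMem (by simp), Finset.card_image_of_injective _
    (add_left_injective _), occCount_eq_card]

/-! ### Rotation invariance of window counts -/

lemma card_cycStarts_rotate_le (j : ℕ) {y : List Bool} (hy : y ≠ []) (r : ℕ) :
    (cycStarts j (y.rotate r)).card ≤ (cycStarts j y).card := by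
  have hpos : 0 < y.length := List.length_pos_iff.mpr hy
  apply Finset.card_le_card_of_injOn (fun i => (i + r) % y.length)
  · intro i hi
    simp only [Finset.mem_coe] at hi ⊢
    rw [mem_cycStarts] at hi ⊢
    rw [List.length_rotate] at hi
    refine ⟨Nat.mod_lt _ hpos, fun t ht => ?_⟩
    rw [pget_mod_add, show i + r + t = (i + t) + r by omega, ← pget_rotate y hy]
    exact hi.2 t ht
  · intro i hi i' hi' heq
    simp only [Finset.coe_filter, Set.mem_setOf_eq, cycStarts, Finset.mem_coe,
      Finset.mem_filter, Finset.mem_range, List.length_rotate] at hi hi'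
    have h1 : (i + r) % y.length = (i' + r) % y.length := heq
    have h2 : i % y.length = i' % y.length := Nat.ModEq.add_right_cancel' r h1
    rw [Nat.mod_eq_of_lt hi.1, Nat.mod_eq_of_lt hi'.1] at h2
    exact h2

lemma card_cycStarts_rotate (j : ℕ) {y : List Bool} (hy : y ≠ []) (r : ℕ) :
    (cycStarts j (y.rotate r)).card = (cycStarts j y).card := by
  refine le_antisymm (card_cycStarts_rotate_le j hy r) ?_
  have hy' : y.rotate r ≠ [] := by
    intro h
    have := congrArg List.length h
    rw [List.length_rotate] at this
    exact hy (List.length_eq_zero_iff.mp (by simpa using this))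
  have := card_cycStarts_rotate_le j hy' (y.length - r % y.length)
  rwa [rotate_inv] at this

end Stmt12

namespace Stmt12

/-! ### Good words and good Lyndon words -/

def GoodW (n k : ℕ) (w : List Bool) : Prop :=
  w.length = n - k - 2 ∧ ¬ hasZeroRun (k + 1) w

def GoodL (n k : ℕ) (L : List Bool) : Prop :=
  L.length = n ∧ IsLyndon L ∧ hasZeroRun k L ∧ ¬ hasZeroRun (k + 1) L

noncomputable def Fmap (k : ℕ) (w : List Bool) : List Bool := lynRot (cword k w)

def wordOf (k : ℕ) (L : List Bool) (i : ℕ) : List Bool := ((L.rotate i).drop (k + 1)).dropLast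

section Main

variable {n k : ℕ}

lemma cword_length' (hkn : k + 2 ≤ n) {w : List Bool} (hw : GoodW n k w) : (cword k w).length = n := by
  rw [cword_length, hw.1]; omega

/-- No cyclic `0^(k+1)` window in the cut word of a good word. -/
lemma cword_no_long_window {w : List Bool} (hw : GoodW n k w) :
    cycStarts (k + 1) (cword k w) = ∅ := by
  have hm : w.length = n - k - 2 := hw.1
  have hN : (cword k w).length = k + w.length + 2 := cword_length k w
  ext i
  simp only [Finset.notMem_empty, iff_false]
  rw [mem_cycStarts, hN]
  rintro ⟨hi, hwin⟩
  rcases Nat.lt_or_ge i (k + 1) with h1 | h1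
  · -- window hits position k
    have := hwin (k - i) (by omega)
    rw [show i + (k - i) = k by omega, pget_cword_k] at this
    exact absurd this (by decide)
  rcases Nat.lt_or_ge (k + w.length) (i + k) with h2 | h2
  · -- window hits the final 1
    have := hwin (k + 1 + w.length - i) (by omega)
    rw [show i + (k + 1 + w.length - i) = k + 1 + w.length by omega, pget_cword_last] at this
    exact absurd this (by decide)
  · -- window lies inside w
    apply hw.2
    rw [hasZeroRun, infix_iff_drop]
    refine ⟨i - (k + 1), by omega, ?_⟩
    rw [replicate_prefix_iff]
    refine ⟨by simp; omega, fun t ht => ?_⟩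
    rw [getD_drop_eq (by omega)]
    have := hwin t ht
    rw [show i + t = k + 1 + (i - (k + 1) + t) by omega, pget_cword_mid _ (by omega)] at this
    exact this

/-! basic facts about good Lyndon words -/

lemma goodL_ne_nil (hkn : k + 2 ≤ n) {L : List Bool} (hL : GoodL n k L) : L ≠ [] := by
  intro h
  have := hL.1
  rw [h] at this
  simp at this
  omega

lemma goodL_false_mem (hk : 1 ≤ k) {L : List Bool} (hL : GoodL n k L) : false ∈ L := by
  have h := hL.2.2.1
  rw [hasZeroRun] at h
  exact h.subset (List.mem_replicate.mpr ⟨by omega, rfl⟩)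

lemma goodL_true_mem (hkn : k + 2 ≤ n) {L : List Bool} (hL : GoodL n k L) : true ∈ L := by
  by_contra ht
  apply hL.2.2.2
  have hrep : L = List.replicate n false := by
    rw [List.eq_replicate_iff]
    refine ⟨hL.1, fun b hb => ?_⟩
    cases b
    · rfl
    · exact absurd hb ht
  rw [hasZeroRun, hrep]
  apply List.IsPrefix.isInfix
  rw [replicate_prefix_iff]
  refine ⟨by simp; omega, fun t htk => ?_⟩
  rw [List.getD_eq_getElem _ _ (by simp; omega), List.getElem_replicate]

lemma goodL_getLast (hkn : k + 2 ≤ n) {L : List Bool} (hL : GoodL n k L) (hne : L ≠ []) :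
    L.getLast hne = true :=
  lyndon_getLast_true hL.2.1 (goodL_true_mem hkn hL) hne

lemma goodL_no_long_window (hkn : k + 2 ≤ n) {L : List Bool} (hL : GoodL n k L) :
    cycStarts (k + 1) L = ∅ := by
  have hne := goodL_ne_nil hkn hL
  ext i
  simp only [Finset.notMem_empty, iff_false]
  rw [mem_cycStarts]
  rintro ⟨hi, hwin⟩
  exact hL.2.2.2 (win_to_hasZeroRun hne (goodL_getLast hkn hL hne)
    (by rw [hL.1]; omega) hi hwin)

lemma goodL_window_nonempty (hk : 1 ≤ k) (hkn : k + 2 ≤ n) {L : List Bool} (hL : GoodL n k L) :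
    (cycStarts k L).Nonempty := by
  have hne := goodL_ne_nil hkn hL
  obtain ⟨s, hs, hwin⟩ := (hasZeroRun_iff_win hne).mp hL.2.2.1
  exact ⟨s, mem_cycStarts.mpr ⟨by rw [hL.1] at hs ⊢; omega, hwin⟩⟩

end Main

end Stmt12

namespace Stmt12

lemma getElem_eq_pget {y : List Bool} {i : ℕ} (h : i < y.length) : y[i] = pget y i :=
  (pget_eq_getElem h).symm

variable {n k : ℕ}

lemma rotation_structure (hkn : k + 2 ≤ n) {L : List Bool} (hL : GoodL n k L)
    {i : ℕ} (hi : i ∈ cycStarts k L) :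
    L.rotate i = cword k (wordOf k L i) ∧ GoodW n k (wordOf k L i) := by
  have hne := goodL_ne_nil hkn hL
  have hlenL : L.length = n := hL.1
  have hnoc := goodL_no_long_window hkn hL
  rw [mem_cycStarts, hlenL] at hi
  obtain ⟨hin, hwin⟩ := hi
  set u := L.rotate i with hu
  have hulen : u.length = n := by rw [hu, List.length_rotate, hlenL]
  have hune : u ≠ [] := by intro h; rw [h] at hulen; simp at hulen; omega
  have hpgetu : ∀ j, pget u j = pget L (i + j) := by
    intro j; rw [hu, pget_rotate L hne, Nat.add_comm]
  have ha : ∀ j < k, pget u j = false := fun j hj => by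
    rw [hpgetu]; exact hwin j hj
  have hb : pget u k = true := by
    by_contra hbc
    rw [Bool.not_eq_true] at hbc
    have hmem : i ∈ cycStarts (k + 1) L := by
      rw [mem_cycStarts, hlenL]
      refine ⟨by omega, fun t ht => ?_⟩
      rcases Nat.lt_or_ge t k with h | h
      · exact hwin t h
      · have htk : t = k := by omega
        subst htk
        rw [← hpgetu]; exact hbc
    rw [hnoc] at hmem; exact absurd hmem (Finset.notMem_empty _)
  have hc : pget u (n - 1) = true := by
    by_contra hcc
    rw [Bool.not_eq_true] at hcc
    have hmem : (i + n - 1) % n ∈ cycStarts (k + 1) L := by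
      rw [mem_cycStarts, hlenL]
      refine ⟨Nat.mod_lt _ (by omega), fun t ht => ?_⟩
      have hM : pget L ((i + n - 1) % n + t) = pget L (i + n - 1 + t) := by
        have := pget_mod_add L (i + n - 1) t
        rwa [hlenL] at this
      rw [hM]
      rcases Nat.eq_zero_or_pos t with rfl | htpos
      · rw [Nat.add_zero, show i + n - 1 = i + (n - 1) by omega, ← hpgetu]
        exact hcc
      · rw [show i + n - 1 + t = i + (t - 1) + n by omega]
        have hal := pget_add_length L (i + (t - 1))
        rw [hlenL] at hal
        rw [hal, ← hpgetu]
        rw [hpgetu]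
        exact hwin (t - 1) (by omega)
    rw [hnoc] at hmem; exact absurd hmem (Finset.notMem_empty _)
  have hdlen : (u.drop (k + 1)).length = n - k - 1 := by
    rw [List.length_drop, hulen]; omega
  have hdne : u.drop (k + 1) ≠ [] := by
    intro h; have := congrArg List.length h; rw [hdlen] at this; simp at this; omega
  have hrecon : u = cword k (wordOf k L i) := by
    have h1 : u.take k = List.replicate k false := by
      apply List.ext_getElem (by simp [hulen]; omega)
      intro j hj1 hj2
      rw [List.getElem_take, List.getElem_replicate, getElem_eq_pget]
      exact ha j (by simp [hulen] at hj1; omega)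
    have h2 : u.drop k = true :: u.drop (k + 1) := by
      rw [List.drop_eq_getElem_cons (by omega : k < u.length)]
      congr 1
      rw [getElem_eq_pget]; exact hb
    have h3 : (u.drop (k + 1)).getLast hdne = true := by
      rw [List.getLast_eq_getElem, List.getElem_drop, getElem_eq_pget]
      rw [hdlen, show k + 1 + (n - k - 1 - 1) = n - 1 by omega]
      exact hc
    have h4 : u.drop (k + 1) = wordOf k L i ++ [true] := by
      rw [wordOf, ← hu]
      conv_lhs => rw [← List.dropLast_append_getLast hdne]
      rw [h3]
    calc u = u.take k ++ u.drop k := (List.take_append_drop k u).symm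
      _ = List.replicate k false ++ (true :: u.drop (k + 1)) := by rw [h1, h2]
      _ = cword k (wordOf k L i) := by rw [h4, cword]
  constructor
  · exact hrecon
  · constructor
    · rw [wordOf, ← hu, List.length_dropLast, hdlen]; omega
    · intro hrun
      have hinf : hasZeroRun (k + 1) u := by
        rw [hasZeroRun] at hrun ⊢
        refine hrun.trans ?_
        refine ⟨List.replicate k false ++ [true], [true], ?_⟩
        rw [hrecon, cword]
        simp
      obtain ⟨s, hs, hwin2⟩ := (hasZeroRun_iff_win hune).mp hinf
      rw [hulen] at hs
      have hmem : (s + i) % n ∈ cycStarts (k + 1) L := by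
        rw [mem_cycStarts, hlenL]
        refine ⟨Nat.mod_lt _ (by omega), fun t ht => ?_⟩
        have hM : pget L ((s + i) % n + t) = pget L (s + i + t) := by
          have := pget_mod_add L (s + i) t
          rwa [hlenL] at this
        rw [hM, show s + i + t = i + (s + t) by omega, ← hpgetu]
        exact hwin2 t ht
      rw [hnoc] at hmem; exact absurd hmem (Finset.notMem_empty _)

lemma Fmap_goodL (hn : n.Prime) (hk : 1 ≤ k) (hkn : k + 2 ≤ n) {w : List Bool}
    (hw : GoodW n k w) :
    GoodL n k (Fmap k w) ∧ ∃ i < n, (cword k w).rotate i = Fmap k w := by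
  have hlen := cword_length' hkn hw
  obtain ⟨i, hin, hLy⟩ := exists_lyndon_rotate hn hlen (true_mem_cword k w)
    (false_mem_cword hk w)
  have hFeq : Fmap k w = (cword k w).rotate i := lynRot_eq hLy rfl
  have hLy' : IsLyndon (Fmap k w) := by rw [hFeq]; exact hLy
  have hFlen : (Fmap k w).length = n := by rw [hFeq, List.length_rotate, hlen]
  have hFne : Fmap k w ≠ [] := by intro h; rw [h] at hFlen; simp at hFlen; omega
  have hcne := cword_ne_nil k w
  have htm : true ∈ Fmap k w := by
    rw [hFeq]; exact ((cword k w).rotate_perm i).mem_iff.mpr (true_mem_cword k w)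
  have hlast : (Fmap k w).getLast hFne = true := lyndon_getLast_true hLy' htm hFne
  have hcard1 : (cycStarts k (Fmap k w)).card = (cycStarts k (cword k w)).card := by
    rw [hFeq]; exact card_cycStarts_rotate k hcne i
  have hnonempty : (cycStarts k (Fmap k w)).Nonempty := by
    rw [← Finset.card_pos, hcard1, card_cycStarts_cword hk]
    omega
  have hrun : hasZeroRun k (Fmap k w) := by
    obtain ⟨s, hs⟩ := hnonempty
    rw [mem_cycStarts] at hs
    exact win_to_hasZeroRun hFne hlast (by rw [hFlen]; omega) hs.1 hs.2
  have hnorun : ¬ hasZeroRun (k + 1) (Fmap k w) := by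
    intro hcon
    obtain ⟨s, hs, hwin⟩ := (hasZeroRun_iff_win hFne).mp hcon
    have hmem : s ∈ cycStarts (k + 1) (Fmap k w) :=
      mem_cycStarts.mpr ⟨by omega, hwin⟩
    have hcard2 : (cycStarts (k + 1) (Fmap k w)).card = 0 := by
      rw [hFeq, card_cycStarts_rotate _ hcne, cword_no_long_window hw, Finset.card_empty]
    rw [Finset.card_eq_zero] at hcard2
    rw [hcard2] at hmem
    exact absurd hmem (Finset.notMem_empty _)
  exact ⟨⟨hFlen, hLy', hrun, hnorun⟩, ⟨i, hin, hFeq.symm⟩⟩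

lemma Fmap_wordOf (hkn : k + 2 ≤ n) {L : List Bool} (hL : GoodL n k L)
    {i : ℕ} (hi : i ∈ cycStarts k L) : Fmap k (wordOf k L i) = L := by
  obtain ⟨hrot, _⟩ := rotation_structure hkn hL hi
  rw [Fmap, ← hrot]
  exact lynRot_eq hL.2.1 (rotate_inv L i)

lemma drop_cword (w : List Bool) : (cword k w).drop (k + 1) = w ++ [true] := by
  rw [cword, show k + 1 = (List.replicate k false).length + 1 by simp, List.drop_append]
  simp

lemma fiber_to_index (hn : n.Prime) (hk : 1 ≤ k) (hkn : k + 2 ≤ n) {w L : List Bool}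
    (hw : GoodW n k w) (hF : Fmap k w = L) :
    ∃ i ∈ cycStarts k L, wordOf k L i = w := by
  obtain ⟨hGL, i, hin, hrot⟩ := Fmap_goodL hn hk hkn hw
  subst hF
  have hclen : (cword k w).length = n := cword_length' hkn hw
  have hFlen : (Fmap k w).length = n := hGL.1
  have hFne : Fmap k w ≠ [] := goodL_ne_nil hkn hGL
  set r := (cword k w).length - i % (cword k w).length with hr
  have hinv : (Fmap k w).rotate r = cword k w := by
    rw [← hrot, rotate_inv]
  have hmodrot : (Fmap k w).rotate (r % n) = cword k w := by
    rw [← hinv]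
    conv_rhs => rw [← List.rotate_mod, hFlen]
  refine ⟨r % n, ?_, ?_⟩
  · rw [mem_cycStarts, hFlen]
    refine ⟨Nat.mod_lt _ (by omega), fun t ht => ?_⟩
    have h1 : pget (Fmap k w) (r % n + t) = pget (Fmap k w) (r + t) := by
      have := pget_mod_add (Fmap k w) r t
      rwa [hFlen] at this
    rw [h1, show r + t = t + r by omega, ← pget_rotate (Fmap k w) hFne, hinv]
    exact pget_cword_lt w ht
  · rw [wordOf, hmodrot, drop_cword, List.dropLast_concat]

lemma index_inj (hn : n.Prime) (hk : 1 ≤ k) (hkn : k + 2 ≤ n) {L : List Bool}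
    (hL : GoodL n k L) {i i' : ℕ} (hi : i ∈ cycStarts k L) (hi' : i' ∈ cycStarts k L)
    (heq : wordOf k L i = wordOf k L i') : i = i' := by
  have h1 := (rotation_structure hkn hL hi).1
  have h2 := (rotation_structure hkn hL hi').1
  rw [heq, ← h2] at h1
  rw [mem_cycStarts, hL.1] at hi hi'
  have hne := goodL_ne_nil hkn hL
  have key : ∀ a b : ℕ, a ≤ b → b < n → L.rotate a = L.rotate b → a = b := by
    intro a b hab hbn hr
    by_contra hcon
    have hd : 1 ≤ b - a := by omega
    have hfix : (L.rotate a).rotate (b - a) = L.rotate a := by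
      rw [List.rotate_rotate, show a + (b - a) = b by omega, hr]
    exact rotate_fix_false hn (by rw [List.length_rotate, hL.1])
      ((L.rotate_perm a).mem_iff.mpr (goodL_true_mem hkn hL))
      ((L.rotate_perm a).mem_iff.mpr (goodL_false_mem hk hL))
      hd (by omega) hfix
  rcases Nat.le_total i i' with hle | hle
  · exact key i i' hle hi'.1 h1
  · exact (key i' i hle hi.1 h1.symm).symm

lemma card_fiber (hn : n.Prime) (hk : 1 ≤ k) (hkn : k + 2 ≤ n)
    (WS : Finset (List Bool)) (hWS : ∀ w, w ∈ WS ↔ GoodW n k w)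
    {L : List Bool} (hL : GoodL n k L) :
    (WS.filter (fun w => Fmap k w = L)).card = (cycStarts k L).card := by
  refine (Finset.card_nbij (wordOf k L) ?_ ?_ ?_).symm
  · intro i hi
    rw [Finset.mem_coe, Finset.mem_filter, hWS]
    exact ⟨(rotation_structure hkn hL hi).2, Fmap_wordOf hkn hL hi⟩
  · intro i hi i' hi' heq
    exact index_inj hn hk hkn hL hi hi' heq
  · intro w hw
    rw [Finset.coe_filter, Set.mem_setOf_eq, hWS] at hw
    obtain ⟨i, hi, hieq⟩ := fiber_to_index hn hk hkn hw.1 hw.2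
    exact ⟨i, hi, hieq⟩

lemma card_cycStarts_Fmap (hn : n.Prime) (hk : 1 ≤ k) (hkn : k + 2 ≤ n) {w : List Bool}
    (hw : GoodW n k w) :
    (cycStarts k (Fmap k w)).card = occCount k w + 1 := by
  obtain ⟨_, i, _, hrot⟩ := Fmap_goodL hn hk hkn hw
  rw [← hrot, card_cycStarts_rotate _ (cword_ne_nil k w), card_cycStarts_cword hk]

lemma skew_Fmap (hn : n.Prime) (hk : 1 ≤ k) (hkn : k + 2 ≤ n) {w : List Bool}
    (hw : GoodW n k w) :
    skew (Fmap k w) = (k : ℤ) - 2 + skew w := by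
  obtain ⟨_, i, _, hrot⟩ := Fmap_goodL hn hk hkn hw
  rw [← hrot, skew_rotate, skew_cword]

end Stmt12

open Stmt12

/-- For `n` prime, `n ≥ 3`, and `1 ≤ k ≤ n − 2`,
`sk(ℓ_k) = Σ_w (k − 2 + sk(w)) / (ρ_k(w) + 1)`, the sum over binary words `w` of
length `n − k − 2` containing no subword `0^{k+1}`, where `ρ_k(w)` is the number of
occurrences of `0^k` in `w`. -/
theorem skew_ell_eq (n k : ℕ) (hn : n.Prime) (hn3 : 3 ≤ n) (hk : 1 ≤ k) (hkn : k + 2 ≤ n) :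
    (skew (ell n k) : ℚ) =
      (((allWords (n - k - 2)).filter (fun w => !decide (hasZeroRun (k + 1) w))).map
        (fun w => ((k : ℚ) - 2 + (skew w : ℚ)) / ((occCount k w : ℚ) + 1))).sum := by
  classical
  set m := n - k - 2 with hm
  set Wlist := (allWords m).filter (fun w => !decide (hasZeroRun (k + 1) w)) with hWlist
  set Llist := (allWords n).filter (fun w =>
    decide (IsLyndon w) && decide (hasZeroRun k w) && !decide (hasZeroRun (k + 1) w)) with hLlist
  set gfun : List Bool → ℚ :=
    fun w => ((k : ℚ) - 2 + (skew w : ℚ)) / ((occCount k w : ℚ) + 1) with hgfun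
  have hnodW : Wlist.Nodup := (nodup_allWords m).filter _
  have hnodL : Llist.Nodup := (nodup_allWords n).filter _
  have memW : ∀ w : List Bool, w ∈ Wlist.toFinset ↔ GoodW n k w := by
    intro w
    rw [hWlist, List.mem_toFinset, List.mem_filter, mem_allWords]
    simp only [Bool.not_eq_true', decide_eq_false_iff_not]
    rfl
  have memL : ∀ L : List Bool, L ∈ Llist.toFinset ↔ GoodL n k L := by
    intro L
    rw [hLlist, List.mem_toFinset, List.mem_filter, mem_allWords]
    simp only [Bool.and_eq_true, Bool.not_eq_true', decide_eq_true_eq,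
      decide_eq_false_iff_not]
    unfold GoodL
    tauto
  -- LHS as a Finset sum
  have hLHS : (skew (ell n k) : ℚ) = ∑ L ∈ Llist.toFinset, (skew L : ℚ) := by
    have h1 : skew (ell n k) = (Llist.map skew).sum := by
      rw [ell, skew_flatten]
      exact ((List.perm_insertionSort lexLe Llist).map skew).sum_eq
    rw [h1, List.sum_toFinset _ hnodL]
    rw [show ((Llist.map skew).sum : ℚ) = ((Llist.map skew).map (fun z : ℤ => (z : ℚ))).sum
      from map_list_sum (Int.castRingHom ℚ) _]
    rw [List.map_map]
    rfl
  -- RHS as a Finset sum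
  have hRHS : (Wlist.map gfun).sum = ∑ w ∈ Wlist.toFinset, gfun w :=
    (List.sum_toFinset _ hnodW).symm
  rw [hLHS, hRHS]
  -- the main correspondence
  set WS := Wlist.toFinset with hWS
  have key : ∀ w ∈ WS, gfun w =
      (fun L => (skew L : ℚ) / ((WS.filter (fun w' => Fmap k w' = L)).card : ℚ)) (Fmap k w) := by
    intro w hw
    have hgw : GoodW n k w := (memW w).mp hw
    have hGL : GoodL n k (Fmap k w) := (Fmap_goodL hn hk hkn hgw).1
    have hskewF : skew (Fmap k w) = (k : ℤ) - 2 + skew w := skew_Fmap hn hk hkn hgw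
    have hcard : (WS.filter (fun w' => Fmap k w' = Fmap k w)).card = occCount k w + 1 := by
      rw [card_fiber hn hk hkn WS memW hGL, card_cycStarts_Fmap hn hk hkn hgw]
    simp only []
    rw [hcard, hskewF, hgfun]
    push_cast
    ring_nf
  have himage : WS.image (Fmap k) = Llist.toFinset := by
    ext L
    rw [Finset.mem_image, memL]
    constructor
    · rintro ⟨w, hw, rfl⟩
      exact (Fmap_goodL hn hk hkn ((memW w).mp hw)).1
    · intro hGL
      obtain ⟨i, hi⟩ := goodL_window_nonempty hk hkn hGL
      refine ⟨wordOf k L i, ?_, Fmap_wordOf hkn hGL hi⟩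
      rw [memW]
      exact (rotation_structure hkn hGL hi).2
  symm
  calc ∑ w ∈ WS, gfun w
      = ∑ w ∈ WS, (fun L => (skew L : ℚ) /
          ((WS.filter (fun w' => Fmap k w' = L)).card : ℚ)) (Fmap k w) :=
        Finset.sum_congr rfl key
    _ = ∑ L ∈ WS.image (Fmap k), (WS.filter (fun w' => Fmap k w' = L)).card •
          ((skew L : ℚ) / ((WS.filter (fun w' => Fmap k w' = L)).card : ℚ)) :=
        Finset.sum_comp (fun L => (skew L : ℚ) / ((WS.filter (fun w' => Fmap k w' = L)).card : ℚ)) (Fmap k)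
    _ = ∑ L ∈ WS.image (Fmap k), (skew L : ℚ) := by
        refine Finset.sum_congr rfl (fun L hL => ?_)
        obtain ⟨w, hw, hwL⟩ := Finset.mem_image.mp hL
        have hpos : 0 < (WS.filter (fun w' => Fmap k w' = L)).card :=
          Finset.card_pos.mpr ⟨w, Finset.mem_filter.mpr ⟨hw, hwL⟩⟩
        rw [nsmul_eq_mul, mul_comm, div_mul_cancel₀]
        exact Nat.cast_ne_zero.mpr (by omega)
    _ = ∑ L ∈ Llist.toFinset, (skew L : ℚ) := by rw [himage]
end

section
/- Let n be a prime with n ≥ 3. Then L_n = 0 · ℓ_{n−1} · ℓ_{n−2} ⋯ ℓ_2 · ℓ_1 · 1, i.e., L_n is the concatenation of the single letter 0, then the words ℓ_k for k = n−1 down to k = 1 in decreasing order of k, and finally the single letter 1. -/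
-- order properties
lemma lexLt_trans {u v w : List Bool} (h1 : lexLt u v) (h2 : lexLt v w) : lexLt u w :=
  (List.lt_iff_lex_lt u w).1 (lt_trans (α := List Bool) (show u < v from (List.lt_iff_lex_lt u v).2 h1)
    (show v < w from (List.lt_iff_lex_lt v w).2 h2))

lemma lexLt_asymm {u v : List Bool} (h : lexLt u v) : ¬ lexLt v u :=
  (inferInstance : Std.Asymm (List.Lex (α := Bool) (·<·))).asymm _ _ h

lemma lexLt_trichotomy (u v : List Bool) : lexLt u v ∨ u = v ∨ lexLt v u :=
  by
    have h := (inferInstance : Std.Trichotomous (List.Lex (α := Bool) (·<·))).trichotomous u v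
    unfold lexLt; tauto

instance : IsTrans (List Bool) lexLe where
  trans u v w h1 h2 := by
    rcases h1 with h1 | rfl
    · rcases h2 with h2 | rfl
      · exact Or.inl (lexLt_trans h1 h2)
      · exact Or.inl h1
    · exact h2

instance : IsTotal (List Bool) lexLe where
  total u v := by
    rcases lexLt_trichotomy u v with h | h | h
    · exact Or.inl (Or.inl h)
    · exact Or.inl (Or.inr h)
    · exact Or.inr (Or.inl h)

instance : IsAntisymm (List Bool) lexLe where
  antisymm u v h1 h2 := by
    rcases h1 with h1 | rfl
    · rcases h2 with h2 | rfl
      · exact absurd h2 (lexLt_asymm h1)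
      · rfl
    · rfl

lemma mem_allWords {n : ℕ} {w : List Bool} : w ∈ allWords n ↔ w.length = n := by
  induction n generalizing w with
  | zero => simp [allWords, List.length_eq_zero_iff]
  | succ n ih =>
    simp only [allWords, List.mem_flatMap, List.mem_cons, List.mem_singleton]
    constructor
    · rintro ⟨u, hu, rfl | h⟩
      · simp [ih.1 hu]
      · rcases h with rfl | h
        · simp [ih.1 hu]
        · simp at h
    · intro hw
      rcases List.eq_nil_or_concat w with rfl | ⟨u, b, rfl⟩
      · simp at hw
      · refine ⟨u, ih.2 ?_, by cases b <;> simp⟩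
        simpa using hw

lemma hasZeroRun_mono {j k : ℕ} {w : List Bool} (h : j ≤ k) (hk : hasZeroRun k w) :
    hasZeroRun j w := by
  refine List.IsInfix.trans ?_ hk
  refine (List.IsPrefix.isInfix ?_)
  exact ⟨List.replicate (k - j) false, by rw [← List.replicate_add, Nat.add_sub_cancel' h]⟩

lemma lex_append_left {s t1 t2 : List Bool} (h : lexLt t1 t2) : lexLt (s ++ t1) (s ++ t2) := by
  induction s with
  | nil => exact h
  | cons a s ih => exact List.Lex.cons ih

lemma lexLe_zeros_prefix : ∀ (k : ℕ) (u t : List Bool), lexLe u (List.replicate k false ++ t) →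
    k ≤ u.length → List.replicate k false <+: u := by
  intro k
  induction k with
  | zero => intro u t _ _; simp
  | succ k ih =>
    intro u t h hlen
    match u with
    | [] => simp at hlen
    | b :: u' =>
      rw [List.replicate_succ, List.cons_append] at h
      rcases h with h | h
      · cases h with
        | rel hb => simp [Bool.lt_iff] at hb
        | cons h' =>
          rw [List.replicate_succ]
          exact (List.cons_prefix_cons).2 ⟨rfl, ih u' t (Or.inl h') (by simpa using hlen)⟩
      · rw [List.replicate_succ]
        injection h with h1 h2
        subst h1
        exact (List.cons_prefix_cons).2 ⟨rfl, ih u' t (Or.inr h2) (by simpa using hlen)⟩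

lemma IsLyndon.not_replicate_false {m : ℕ} (hm : 2 ≤ m) : ¬ IsLyndon (List.replicate m false) := by
  rintro ⟨-, h⟩
  have h1 : (1 : ℕ) ∈ Finset.Ico 1 (List.replicate m false).length := by
    simp; omega
  have := h 1 h1
  rw [List.rotate_replicate] at this
  exact lexLt_asymm this this

lemma IsLyndon.not_replicate_true {m : ℕ} (hm : 2 ≤ m) : ¬ IsLyndon (List.replicate m true) := by
  rintro ⟨-, h⟩
  have h1 : (1 : ℕ) ∈ Finset.Ico 1 (List.replicate m true).length := by
    simp; omega
  have := h 1 h1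
  rw [List.rotate_replicate] at this
  exact lexLt_asymm this this

/-- Key lemma: a Lyndon word starts with its zero run. -/
lemma lyndon_replicate_prefix {w : List Bool} {k : ℕ} (hl : IsLyndon w)
    (hk : hasZeroRun k w) : List.replicate k false <+: w := by
  rcases Nat.eq_zero_or_pos k with rfl | hkpos
  · simp
  obtain ⟨s, t, rfl⟩ := hk
  rcases List.eq_nil_or_concat s with rfl | hs
  · simp
  have hsne : s ≠ [] := by rcases hs with ⟨a, b, rfl⟩; simp
  have hslen : 1 ≤ s.length := List.length_pos_iff.2 hsne
  rw [List.append_assoc] at hl ⊢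
  have hlt : s.length < (s ++ (List.replicate k false ++ t)).length := by
    simp only [List.length_append, List.length_replicate]; omega
  have hmem : s.length ∈ Finset.Ico 1 (s ++ (List.replicate k false ++ t)).length := by
    simp only [Finset.mem_Ico]; exact ⟨hslen, hlt⟩
  have hrot := hl.2 s.length hmem
  rw [List.rotate_append_length_eq s (List.replicate k false ++ t), List.append_assoc] at hrot
  exact lexLe_zeros_prefix k _ _ (Or.inl hrot)
    (by simp only [List.length_append, List.length_replicate]; omega)

/-- Structure: a Lyndon word of zero-run class `k < |w|` is `0^k 1 rest`. -/
lemma lyndon_class_structure {w : List Bool} {k : ℕ} (hl : IsLyndon w)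
    (hk : hasZeroRun k w) (hk1 : ¬ hasZeroRun (k + 1) w) (hlen : k < w.length) :
    ∃ rest, w = List.replicate k false ++ true :: rest := by
  obtain ⟨r, hr⟩ := lyndon_replicate_prefix hl hk
  match hb : r with
  | [] => exfalso; rw [← hr] at hlen; simp at hlen
  | false :: r' =>
    exfalso
    apply hk1
    refine List.IsPrefix.isInfix ?_
    refine ⟨r', ?_⟩
    rw [← hr, List.replicate_succ']
    simp
  | true :: r' => exact ⟨r', hr.symm⟩

lemma lyndon_hasZeroRun_one {w : List Bool} (hl : IsLyndon w) (h2 : 2 ≤ w.length) :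
    hasZeroRun 1 w := by
  by_cases hf : false ∈ w
  · obtain ⟨s, t, rfl⟩ := List.append_of_mem hf
    exact ⟨s, t, by simp⟩
  · exfalso
    have : w = List.replicate w.length true := by
      apply List.eq_replicate_of_mem
      intro b hb
      cases b
      · exact absurd hb hf
      · rfl
    rw [this] at hl
    exact IsLyndon.not_replicate_true (by simpa using h2) hl

lemma not_hasZeroRun_length {w : List Bool} (hl : IsLyndon w) (h2 : 2 ≤ w.length) :
    ¬ hasZeroRun w.length w := by
  intro h
  have hsub := h.sublist
  have := hsub.eq_of_length (by simp)
  rw [← this] at hl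
  exact IsLyndon.not_replicate_false (by simpa using h2) hl

/-- the canonical class of a Lyndon word -/
lemma lyndon_class {w : List Bool} (hl : IsLyndon w) (h2 : 2 ≤ w.length) :
    ∃ k, 1 ≤ k ∧ k < w.length ∧ hasZeroRun k w ∧ ¬ hasZeroRun (k + 1) w := by
  set P : ℕ → Prop := fun k => hasZeroRun k w with hP
  set k0 := Nat.findGreatest P w.length with hk0
  have hP1 : P 1 := lyndon_hasZeroRun_one hl h2
  have h1le : 1 ≤ k0 := Nat.le_findGreatest (by omega) hP1
  have hPk0 : P k0 := Nat.findGreatest_spec (m := 1) (by omega) hP1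
  have hnlen : ¬ P w.length := not_hasZeroRun_length hl h2
  have hk0le : k0 ≤ w.length := Nat.findGreatest_le _
  have hk0lt : k0 < w.length := by
    rcases Nat.lt_or_ge k0 w.length with h | h
    · exact h
    · exfalso; apply hnlen; have : k0 = w.length := le_antisymm hk0le h; rwa [← this]
  refine ⟨k0, h1le, hk0lt, hPk0, ?_⟩
  intro hP1k
  rcases Nat.lt_or_ge w.length (k0 + 1) with h | h
  · have := hP1k.sublist.length_le
    simp [List.length_replicate] at this
    omega
  · exact Nat.findGreatest_is_greatest (Nat.lt_succ_self k0) h hP1k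

lemma class_unique {w : List Bool} {j k : ℕ}
    (hj : hasZeroRun j w ∧ ¬ hasZeroRun (j + 1) w)
    (hk : hasZeroRun k w ∧ ¬ hasZeroRun (k + 1) w) : j = k := by
  by_contra hne
  rcases Nat.lt_or_ge j k with h | h
  · exact hj.2 (hasZeroRun_mono (by omega) hk.1)
  · exact hk.2 (hasZeroRun_mono (by omega) hj.1)

/-- cross class comparison -/
lemma class_lexLt {k j : ℕ} {rw rv : List Bool} (h : j < k) :
    lexLt (List.replicate k false ++ true :: rw) (List.replicate j false ++ true :: rv) := by
  have hk : List.replicate k false = List.replicate j false ++ List.replicate (k - j) false := by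
    rw [← List.replicate_add, Nat.add_sub_cancel' (le_of_lt h)]
  rw [hk, List.append_assoc]
  apply lex_append_left
  obtain ⟨m, hm⟩ : ∃ m, k - j = m + 1 := ⟨k - j - 1, by omega⟩
  rw [hm, List.replicate_succ, List.cons_append]
  exact List.Lex.rel (by decide)

lemma count_filter' {α : Type*} [BEq α] [LawfulBEq α] (p : α → Bool) (a : α) (l : List α) :
    List.count a (l.filter p) = if p a then List.count a l else 0 := by
  split
  · exact List.count_filter ‹_›
  · refine List.count_eq_zero.2 fun h => ?_
    rw [List.mem_filter] at h
    simp_all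

lemma sum_ite_count (k0 c : ℕ) (ks : List ℕ) :
    (ks.map (fun k => if k = k0 then c else 0)).sum = c * ks.count k0 := by
  induction ks with
  | nil => simp
  | cons k ks ih =>
    rw [List.map_cons, List.sum_cons, ih, List.count_cons]
    by_cases h : k = k0
    · subst h; simp [Nat.mul_add, Nat.add_comm]
    · simp [h, Ne.symm h]

lemma flatten_perm_of_forall {f g : ℕ → List (List Bool)} (h : ∀ k, (f k).Perm (g k))
    (ks : List ℕ) : ((ks.map f).flatten).Perm ((ks.map g).flatten) := by
  induction ks with
  | nil => exact List.Perm.refl _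
  | cons k ks ih => simpa using (h k).append ih

lemma flatten_map_flatten (f : ℕ → List (List Bool)) (ks : List ℕ) :
    ((ks.map f).flatten).flatten = (ks.map (fun k => (f k).flatten)).flatten := by
  induction ks with
  | nil => rfl
  | cons k ks ih => simp [ih]

lemma lexLt_singleton_false {t : List Bool} (ht : t ≠ []) : lexLt [false] (false :: t) := by
  match t with
  | b :: t' => exact List.Lex.cons List.Lex.nil

section Main
variable (n : ℕ)

/-- the class-`k` filter predicate from `ell` -/
def Qp (k : ℕ) : List Bool → Bool := fun w =>
  decide (IsLyndon w) && decide (hasZeroRun k w) && !decide (hasZeroRun (k + 1) w)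

def Cl (k : ℕ) : List (List Bool) := (allWords n).filter (Qp k)

def Bl (k : ℕ) : List (List Bool) := List.insertionSort lexLe (Cl n k)

lemma mem_Cl {k : ℕ} {w : List Bool} (hw : w ∈ Cl n k) :
    IsLyndon w ∧ w.length = n ∧ hasZeroRun k w ∧ ¬ hasZeroRun (k + 1) w := by
  rw [Cl, List.mem_filter] at hw
  obtain ⟨hmem, hq⟩ := hw
  simp only [Qp, Bool.and_eq_true, decide_eq_true_eq, Bool.not_eq_true',
    decide_eq_false_iff_not] at hq
  exact ⟨hq.1.1, mem_allWords.1 hmem, hq.1.2, hq.2⟩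

lemma struct_Cl (hn2 : 2 ≤ n) {k : ℕ} {w : List Bool} (hw : w ∈ Cl n k) :
    ∃ r, w = List.replicate k false ++ true :: r := by
  obtain ⟨hl, hlen, hk, hk1⟩ := mem_Cl n hw
  have hkle : k ≤ n := by
    have := hk.sublist.length_le
    simpa [hlen] using this
  have hklt : k < n := by
    rcases Nat.lt_or_ge k n with h | h
    · exact h
    · exfalso
      have : k = n := le_antisymm hkle h
      subst this
      exact not_hasZeroRun_length hl (by omega) (by rwa [hlen])
  exact lyndon_class_structure hl hk hk1 (by omega)

lemma sorted_target (hn2 : 2 ≤ n) :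
    List.Pairwise lexLe ([[false]] ++ (((List.Ico 1 n).reverse.map (Bl n)).flatten ++ [[true]])) := by
  have hstruct : ∀ w ∈ ((List.Ico 1 n).reverse.map (Bl n)).flatten,
      ∃ k r, 1 ≤ k ∧ w = List.replicate k false ++ true :: r := by
    intro w hw
    rw [List.mem_flatten] at hw
    obtain ⟨l, hl, hwl⟩ := hw
    rw [List.mem_map] at hl
    obtain ⟨k, hk, rfl⟩ := hl
    rw [List.mem_reverse, List.Ico.mem] at hk
    rw [Bl, List.mem_insertionSort] at hwl
    obtain ⟨r, hr⟩ := struct_Cl n hn2 hwl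
    exact ⟨k, r, hk.1, hr⟩
  have hfalse_lt : ∀ k r, 1 ≤ k → lexLt [false] (List.replicate k false ++ true :: r) := by
    intro k r hk
    obtain ⟨m, rfl⟩ : ∃ m, k = m + 1 := ⟨k - 1, by omega⟩
    rw [List.replicate_succ, List.cons_append]
    exact lexLt_singleton_false (by simp)
  have hlt_true : ∀ k r, 1 ≤ k → lexLt (List.replicate k false ++ true :: r) [true] := by
    intro k r hk
    obtain ⟨m, rfl⟩ : ∃ m, k = m + 1 := ⟨k - 1, by omega⟩
    rw [List.replicate_succ, List.cons_append]
    exact List.Lex.rel (by decide)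
  rw [List.pairwise_append]
  refine ⟨List.pairwise_singleton _ _, ?_, ?_⟩
  · rw [List.pairwise_append]
    refine ⟨?_, List.pairwise_singleton _ _, ?_⟩
    · -- Pairwise within Big
      rw [List.pairwise_flatten]
      constructor
      · intro l hl
        rw [List.mem_map] at hl
        obtain ⟨k, hk, rfl⟩ := hl
        exact List.pairwise_insertionSort lexLe _
      · rw [List.pairwise_map, List.pairwise_reverse]
        refine (List.Ico.pairwise_lt 1 n).imp ?_
        intro j k hjk x hx y hy
        rw [Bl, List.mem_insertionSort] at hx hy
        obtain ⟨rx, hrx⟩ := struct_Cl n hn2 hx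
        obtain ⟨ry, hry⟩ := struct_Cl n hn2 hy
        rw [hrx, hry]
        exact Or.inl (class_lexLt hjk)
    · -- Big ≤ [true]
      intro a ha b hb
      rw [List.mem_singleton] at hb
      subst hb
      obtain ⟨k, r, hk, rfl⟩ := hstruct a ha
      exact Or.inl (hlt_true k r hk)
  · -- [false] ≤ rest
    intro a ha b hb
    rw [List.mem_singleton] at ha
    subst ha
    rw [List.mem_append] at hb
    rcases hb with hb | hb
    · obtain ⟨k, r, hk, rfl⟩ := hstruct b hb
      exact Or.inl (hfalse_lt k r hk)
    · rw [List.mem_singleton] at hb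
      subst hb
      exact Or.inl (List.Lex.rel (by decide))

end Main

lemma nat_count_eq_one {a : ℕ} {l : List ℕ} (hnd : l.Nodup) (hm : a ∈ l) :
    List.count a l = 1 := by
  induction l with
  | nil => simp at hm
  | cons b l ih =>
    rw [List.count_cons]
    rcases List.mem_cons.1 hm with rfl | hm'
    · have hni : a ∉ l := (List.nodup_cons.1 hnd).1
      simp [List.count_eq_zero.2 hni]
    · have hne : a ≠ b := by rintro rfl; exact (List.nodup_cons.1 hnd).1 hm'
      simp [ih (List.nodup_cons.1 hnd).2 hm', hne, Ne.symm hne]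

lemma count_inst_eq {α : Type*} [BEq α] [LawfulBEq α] [DecidableEq α] (a : α) (l : List α) :
    @List.count α instBEqOfDecidableEq a l = List.count a l := by
  rw [@List.count_eq_countP α instBEqOfDecidableEq]
  rw [List.count_eq_countP]
  apply List.countP_congr
  intro x _
  rw [Bool.eq_iff_iff]
  simp

lemma perm_of_count' {l₁ l₂ : List (List Bool)} (h : ∀ w, List.count w l₁ = List.count w l₂) :
    l₁.Perm l₂ :=
  List.perm_iff_count.2 fun a => by exact h a

lemma F_eq (n : ℕ) (hn : n.Prime) (hn3 : 3 ≤ n) :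
    ((List.range (n + 1)).flatMap allWords).filter
      (fun w => decide (IsLyndon w) && decide (w.length ∣ n)) =
    [[false], [true]] ++ (allWords n).filter (fun w => decide (IsLyndon w)) := by
  set P : List Bool → Bool := fun w => decide (IsLyndon w) && decide (w.length ∣ n) with hP
  rw [List.range_succ, List.flatMap_append, List.filter_append]
  have hlast : ([n].flatMap allWords).filter P = (allWords n).filter
      (fun w => decide (IsLyndon w)) := by
    have : [n].flatMap allWords = allWords n := by simp
    rw [this]
    apply List.filter_congr
    intro w hw
    rw [hP]
    simp [mem_allWords.1 hw, Nat.dvd_refl]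
  rw [hlast]
  congr 1
  rw [List.flatMap_def, List.filter_flatten, List.map_map]
  have hrange : List.range n = List.Ico 0 2 ++ List.Ico 2 n := by
    rw [List.Ico.append_consecutive (by omega) (by omega), List.Ico.zero_bot]
  have h2 : List.Ico 0 2 = [0, 1] := by decide
  have h0 : (allWords 0).filter P = [] := by
    have hnl : ¬ IsLyndon ([] : List Bool) := fun h => h.1 rfl
    simp [allWords, hP, hnl]
  have h1 : (allWords 1).filter P = [[false], [true]] := by
    have hf : IsLyndon [false] := by decide
    have ht : IsLyndon [true] := by decide
    have h1n : (1 : ℕ) ∣ n := Nat.one_dvd n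
    show ([[false], [true]] : List (List Bool)).filter P = [[false], [true]]
    simp [hP, List.filter, hf, ht, h1n]
  have hz : ((List.Ico 2 n).map (fun d => (allWords d).filter P)).flatten = [] := by
    rw [List.flatten_eq_nil_iff]
    intro l hl
    rw [List.mem_map] at hl
    obtain ⟨d, hd, rfl⟩ := hl
    rw [List.Ico.mem] at hd
    rw [List.filter_eq_nil_iff]
    intro w hw
    rw [hP]
    simp only [Bool.and_eq_true, decide_eq_true_eq, not_and]
    rintro -
    rw [mem_allWords.1 hw]
    intro hdvd
    rcases hn.eq_one_or_self_of_dvd d hdvd with h | h <;> omega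
  rw [hrange, List.map_append, List.flatten_append, h2]
  simp only [Function.comp_def]
  simp only [List.map_cons, List.map_nil, List.flatten_cons, List.flatten_nil, hz, h0, h1]
  simp

lemma perm_lemma (n : ℕ) (hn3 : 3 ≤ n) :
    ((allWords n).filter (fun w => decide (IsLyndon w))).Perm
      (((List.Ico 1 n).reverse.map (Bl n)).flatten) := by
  have hB : ∀ k, ((Cl n k) : List (List Bool)).Perm (Bl n k) :=
    fun k => (List.perm_insertionSort _ _).symm
  refine List.Perm.trans ?_ (flatten_perm_of_forall hB _)
  refine perm_of_count' ?_
  intro w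
  rw [List.count_flatten, List.map_map]
  set cnt := List.count w (allWords n) with hcnt
  have hL : List.count w ((allWords n).filter (fun w => decide (IsLyndon w))) =
      if decide (IsLyndon w) then cnt else 0 := count_filter' _ _ _
  have hCk : ∀ k, List.count w (Cl n k) = if Qp k w then cnt else 0 :=
    fun k => count_filter' _ _ _
  rw [hL]
  rcases Nat.eq_zero_or_pos cnt with hc | hc
  · rw [hc]
    have : ∀ x ∈ ((List.Ico 1 n).reverse.map (List.count w ∘ Cl n)), x = 0 := by
      intro x hx
      rw [List.mem_map] at hx
      obtain ⟨k, -, rfl⟩ := hx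
      simp only [Function.comp_apply, hCk k, hc]
      split <;> rfl
    rw [List.sum_eq_zero this]
    split <;> rfl
  · have hwmem : w ∈ allWords n := List.count_pos_iff.1 hc
    have hlen : w.length = n := mem_allWords.1 hwmem
    by_cases hly : IsLyndon w
    · obtain ⟨k0, hk01, hk0lt, hrun, hnrun⟩ := lyndon_class hly (by omega)
      have hQ : ∀ k, Qp k w = true ↔ k = k0 := by
        intro k
        simp only [Qp, Bool.and_eq_true, decide_eq_true_eq, Bool.not_eq_true',
          decide_eq_false_iff_not]
        constructor
        · rintro ⟨⟨-, hr⟩, hnr⟩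
          exact class_unique ⟨hr, hnr⟩ ⟨hrun, hnrun⟩
        · rintro rfl
          exact ⟨⟨hly, hrun⟩, hnrun⟩
      have hmapeq : (List.Ico 1 n).reverse.map (List.count w ∘ Cl n) =
          (List.Ico 1 n).reverse.map (fun k => if k = k0 then cnt else 0) := by
        apply List.map_congr_left
        intro k hk
        simp only [Function.comp_apply, hCk k]
        by_cases h : k = k0
        · simp [h, (hQ k0).2 rfl]
        · have : Qp k w = false := by
            rw [Bool.eq_false_iff]
            intro hcon
            exact h ((hQ k).1 hcon)
          simp [h, this]
      rw [hmapeq, sum_ite_count, List.count_reverse,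
        nat_count_eq_one (List.Ico.nodup 1 n) (List.Ico.mem.2 ⟨hk01, by omega⟩)]
      simp [hly]
    · have : ∀ x ∈ ((List.Ico 1 n).reverse.map (List.count w ∘ Cl n)), x = 0 := by
        intro x hx
        rw [List.mem_map] at hx
        obtain ⟨k, -, rfl⟩ := hx
        have : Qp k w = false := by
          simp [Qp, hly]
        simp [Function.comp_apply, hCk k, this]
      rw [List.sum_eq_zero this]
      simp [hly]


lemma ell_eq (n k : ℕ) : ell n k = (Bl n k).flatten := rfl

/-- For `n` prime, `n ≥ 3`,
`L_n = 0 · ℓ_{n−1} · ℓ_{n−2} ⋯ ℓ_2 · ℓ_1 · 1`. -/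
theorem LWord_decomposition (n : ℕ) (hn : n.Prime) (hn3 : 3 ≤ n) :
    LWord n = false :: (((List.Ico 1 n).reverse.map (ell n)).flatten ++ [true]) := by
  have hsorted₁ := List.pairwise_insertionSort lexLe
    (((List.range (n + 1)).flatMap allWords).filter
      (fun w => decide (IsLyndon w) && decide (w.length ∣ n)))
  have hperm : (List.insertionSort lexLe (((List.range (n + 1)).flatMap allWords).filter
      (fun w => decide (IsLyndon w) && decide (w.length ∣ n)))).Perm
      ([[false]] ++ (((List.Ico 1 n).reverse.map (Bl n)).flatten ++ [[true]])) := by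
    refine (List.perm_insertionSort _ _).trans ?_
    rw [F_eq n hn hn3]
    show (([[false]] : List (List Bool)) ++
      ([[true]] ++ (allWords n).filter (fun w => decide (IsLyndon w)))).Perm _
    refine List.Perm.append_left [[false]] ?_
    refine List.Perm.trans List.perm_append_comm ?_
    exact (perm_lemma n hn3).append_right [[true]]
  have heq := List.Perm.eq_of_pairwise' hsorted₁ (sorted_target n (by omega)) hperm
  rw [LWord, heq]
  rw [List.flatten_append, List.flatten_append, flatten_map_flatten]
  have hell : (List.Ico 1 n).reverse.map (fun k => (Bl n k).flatten) =
      (List.Ico 1 n).reverse.map (ell n) := by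
    apply List.map_congr_left
    intro k _
    exact (ell_eq n k).symm
  rw [hell]
  simp
end

section
/- Let X be a finite set and let P be a random subset of X in which each element x ∈ X is included independently with probability p_x. Let {Z_i : i ∈ I} be a finite family of subsets of X, let A_i be the event Z_i ⊆ P, let μ = Σ_{i ∈ I} P(A_i), and let Δ = Σ P(A_i ∧ A_j), the sum over all ordered pairs (i, j) with i ≠ j and Z_i ∩ Z_j ≠ ∅. If Δ ≥ μ/2, then P(⋀_{i ∈ I} ¬A_i) ≤ e^{−μ²/(3Δ)}. -/
open MeasureTheory
open scoped ENNReal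

set_option linter.unusedSectionVars false

open Finset

section Wgt
variable {X : Type*} [Fintype X] [DecidableEq X]

noncomputable def wgt (q : X → ℝ) (ω : X → Bool) : ℝ :=
  ∏ x, (if ω x then q x else 1 - q x)

noncomputable def pr (q : X → ℝ) (S : Set (X → Bool)) : ℝ :=
  ∑ ω, Set.indicator S (wgt q) ω

lemma wgt_nonneg {q : X → ℝ} (hq0 : ∀ x, 0 ≤ q x) (hq1 : ∀ x, q x ≤ 1) (ω : X → Bool) :
    0 ≤ wgt q ω := by
  apply Finset.prod_nonneg
  intro x _
  by_cases h : ω x <;> simp [h, hq0 x, hq1 x, sub_nonneg]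

lemma pr_nonneg {q : X → ℝ} (hq0 : ∀ x, 0 ≤ q x) (hq1 : ∀ x, q x ≤ 1) (S : Set (X → Bool)) :
    0 ≤ pr q S :=
  Finset.sum_nonneg fun ω _ => Set.indicator_nonneg (fun a _ => wgt_nonneg hq0 hq1 a) ω

lemma pr_mono {q : X → ℝ} (hq0 : ∀ x, 0 ≤ q x) (hq1 : ∀ x, q x ≤ 1)
    {S T : Set (X → Bool)} (h : S ⊆ T) : pr q S ≤ pr q T :=
  Finset.sum_le_sum fun ω _ =>
    Set.indicator_le_indicator_of_subset h (fun a => wgt_nonneg hq0 hq1 a) ω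

lemma sum_wgt {q : X → ℝ} : ∑ ω : X → Bool, wgt q ω = 1 := by
  classical
  have h := Finset.prod_univ_sum (fun _ : X => (Finset.univ : Finset Bool))
    (fun x b => if b then q x else 1 - q x)
  simp only [Fintype.piFinset_univ] at h
  unfold wgt
  rw [← h]
  have : ∀ x : X, (∑ b : Bool, if b then q x else 1 - q x) = 1 := by
    intro x; simp [Fintype.sum_bool]
  simp [this]

lemma pr_univ {q : X → ℝ} : pr q (Set.univ : Set (X → Bool)) = 1 := by
  simp only [pr, Set.indicator_univ]; exact sum_wgt

lemma pr_union_disjoint {q : X → ℝ} {S T : Set (X → Bool)} (h : Disjoint S T) :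
    pr q (S ∪ T) = pr q S + pr q T := by
  simp [pr, ← Finset.sum_add_distrib, Set.indicator_union_of_disjoint h]

lemma pr_inter_add_diff {q : X → ℝ} (S T : Set (X → Bool)) :
    pr q S = pr q (S ∩ T) + pr q (S \ T) := by
  rw [← pr_union_disjoint]
  · congr 1
    rw [Set.inter_union_diff]
  · exact Set.disjoint_sdiff_inter.symm

end Wgt

section Wgt2
variable {X : Type*} [Fintype X] [DecidableEq X]

lemma pr_biUnion_le {q : X → ℝ} (hq0 : ∀ x, 0 ≤ q x) (hq1 : ∀ x, q x ≤ 1)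
    {I : Type*} (D : Finset I) (B : I → Set (X → Bool)) :
    pr q (⋃ j ∈ D, B j) ≤ ∑ j ∈ D, pr q (B j) := by
  classical
  induction D using Finset.induction_on with
  | empty => simp [pr]
  | @insert a s hnot ih =>
    rw [Finset.set_biUnion_insert, Finset.sum_insert hnot]
    calc pr q (B a ∪ ⋃ j ∈ s, B j) ≤ pr q (B a) + pr q (⋃ j ∈ s, B j) := by
          rw [pr_inter_add_diff (B a ∪ ⋃ j ∈ s, B j) (B a)]
          gcongr
          · exact pr_mono hq0 hq1 Set.inter_subset_right
          · exact pr_mono hq0 hq1 (by intro x hx; exact hx.1.resolve_left hx.2)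
      _ ≤ _ := by gcongr

lemma indicator_one_monotone {U : Set (X → Bool)} (hU : IsUpperSet U) :
    Monotone (Set.indicator U (1 : (X → Bool) → ℝ)) := by
  intro a b hab
  by_cases ha : a ∈ U
  · have hb : b ∈ U := hU hab ha
    simp [ha, hb]
  · by_cases hb : b ∈ U <;> simp [ha, hb]

lemma wgt_logmod {q : X → ℝ} (a b : X → Bool) :
    wgt q a * wgt q b = wgt q (a ⊓ b) * wgt q (a ⊔ b) := by
  unfold wgt
  rw [← Finset.prod_mul_distrib, ← Finset.prod_mul_distrib]
  apply Finset.prod_congr rfl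
  intro x _
  have h1 : (a ⊓ b) x = (a x && b x) := rfl
  have h2 : (a ⊔ b) x = (a x || b x) := rfl
  rw [h1, h2]
  cases ha : a x <;> cases hb : b x <;> simp <;> ring

/-- FKG: two upper sets are positively correlated. -/
lemma pr_inter_ge {q : X → ℝ} (hq0 : ∀ x, 0 ≤ q x) (hq1 : ∀ x, q x ≤ 1)
    {U V : Set (X → Bool)} (hU : IsUpperSet U) (hV : IsUpperSet V) :
    pr q U * pr q V ≤ pr q (U ∩ V) := by
  classical
  have key := fkg (μ := wgt q) (f := Set.indicator U (1 : (X → Bool) → ℝ))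
    (g := Set.indicator V (1 : (X → Bool) → ℝ))
    (fun ω => wgt_nonneg hq0 hq1 ω)
    (fun ω => Set.indicator_nonneg (fun _ _ => zero_le_one) ω)
    (fun ω => Set.indicator_nonneg (fun _ _ => zero_le_one) ω)
    (indicator_one_monotone hU) (indicator_one_monotone hV)
    (fun a b => le_of_eq (wgt_logmod a b))
  have e1 : ∀ (W : Set (X → Bool)) ω, wgt q ω * Set.indicator W 1 ω = Set.indicator W (wgt q) ω := by
    intro W ω
    by_cases hω : ω ∈ W <;> simp [hω]
  have e2 : ∀ ω, wgt q ω * (Set.indicator U (1 : (X → Bool) → ℝ) ω * Set.indicator V 1 ω)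
      = Set.indicator (U ∩ V) (wgt q) ω := by
    intro ω
    by_cases h1 : ω ∈ U <;> by_cases h2 : ω ∈ V <;>
      simp [h1, h2, Set.indicator_of_mem, Set.indicator_of_notMem, Set.mem_inter_iff]
  simp only [e1, e2] at key
  calc pr q U * pr q V = (∑ ω, Set.indicator U (wgt q) ω) * ∑ ω, Set.indicator V (wgt q) ω := rfl
    _ ≤ (∑ ω, wgt q ω) * ∑ ω, Set.indicator (U ∩ V) (wgt q) ω := key
    _ = pr q (U ∩ V) := by rw [sum_wgt, one_mul]; rfl

/-- FKG: an upper set and a lower set are negatively correlated. -/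
lemma pr_inter_le {q : X → ℝ} (hq0 : ∀ x, 0 ≤ q x) (hq1 : ∀ x, q x ≤ 1)
    {U D : Set (X → Bool)} (hU : IsUpperSet U) (hD : IsLowerSet D) :
    pr q (U ∩ D) ≤ pr q U * pr q D := by
  have h1 := pr_inter_ge hq0 hq1 hU hD.compl
  have h2 : pr q U = pr q (U ∩ Dᶜ) + pr q (U ∩ D) := by
    rw [pr_inter_add_diff U Dᶜ]
    congr 1
    simp [Set.diff_eq]
  have h3 : pr q D = 1 - pr q Dᶜ := by
    have : pr q D + pr q Dᶜ = 1 := by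
      rw [← pr_union_disjoint (disjoint_compl_right), Set.union_compl_self, pr_univ]
    linarith
  have hUn : 0 ≤ pr q U := pr_nonneg hq0 hq1 U
  nlinarith [pr_nonneg hq0 hq1 (U ∩ D), pr_nonneg hq0 hq1 Dᶜ]

end Wgt2

section Wgt3
variable {X : Type*} [Fintype X] [DecidableEq X]

/-- generic: sum over boolean functions of a product -/
lemma sum_prod_bool {Y : Type*} [Fintype Y] [DecidableEq Y] (g : Y → Bool → ℝ) :
    ∑ σ : Y → Bool, ∏ s, g s (σ s) = ∏ s, (g s true + g s false) := by
  classical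
  have h := Finset.prod_univ_sum (fun _ : Y => (Finset.univ : Finset Bool))
    (fun s b => g s b)
  simp only [Fintype.piFinset_univ] at h
  rw [← h]
  apply Finset.prod_congr rfl
  intro s _
  simp [Fintype.sum_bool]

lemma wgt_split (q : X → ℝ) (T : Finset X)
    (σ : {x : X // x ∈ T} → Bool) (τ : {x : X // ¬ x ∈ T} → Bool) :
    wgt q ((Equiv.piEquivPiSubtypeProd (fun x => x ∈ T) (fun _ => Bool)).symm (σ, τ)) =
      (∏ s : {x : X // x ∈ T}, (if σ s then q s.1 else 1 - q s.1)) *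
      (∏ s : {x : X // ¬ x ∈ T}, (if τ s then q s.1 else 1 - q s.1)) := by
  classical
  unfold wgt
  rw [← Fintype.prod_subtype_mul_prod_subtype (fun x => x ∈ T)
    (fun x => if (Equiv.piEquivPiSubtypeProd (fun x => x ∈ T) (fun _ => Bool)).symm (σ, τ) x
      then q x else 1 - q x)]
  simp only [Equiv.piEquivPiSubtypeProd_symm_apply]
  congr 1
  · exact Finset.prod_congr (by congr!) fun s _ => by simp [s.2]
  · exact Finset.prod_congr (by congr!) fun s _ => by simp [s.2]

/-- Independence: the event `∀ x ∈ T, ω x = true` is independent of any event `D`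
depending only on coordinates outside `T`. -/
lemma pr_cyl_inter {q : X → ℝ} (T : Finset X) (D : Set (X → Bool))
    (hD : ∀ ω ω' : X → Bool, (∀ x, x ∉ T → ω x = ω' x) → (ω ∈ D ↔ ω' ∈ D)) :
    pr q ({ω | ∀ x ∈ T, ω x = true} ∩ D) = (∏ x ∈ T, q x) * pr q D := by
  classical
  set E := Equiv.piEquivPiSubtypeProd (fun x => x ∈ T) (fun _ => Bool) with hE
  set c : X → Bool → ℝ := fun x b => if b then q x else 1 - q x with hc
  set Dind : ({x : X // ¬ x ∈ T} → Bool) → ℝ :=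
    fun τ => if E.symm (fun _ => true, τ) ∈ D then 1 else 0 with hDind
  have hmemD : ∀ σ τ, (E.symm (σ, τ) ∈ D) ↔ (E.symm (fun _ => true, τ) ∈ D) := by
    intro σ τ
    apply hD
    intro x hx
    simp [hE, Equiv.piEquivPiSubtypeProd_symm_apply, hx]
  -- rewrite both pr's as double sums
  have hsum : ∀ S : Set (X → Bool),
      pr q S = ∑ σ : {x : X // x ∈ T} → Bool, ∑ τ : {x : X // ¬ x ∈ T} → Bool,
        Set.indicator S (wgt q) (E.symm (σ, τ)) := by
    intro S
    rw [pr, ← E.symm.sum_comp (Set.indicator S (wgt q)), Fintype.sum_prod_type]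
  have key1 : ∀ σ τ, Set.indicator ({ω : X → Bool | ∀ x ∈ T, ω x = true} ∩ D) (wgt q)
      (E.symm (σ, τ)) =
      (∏ s : {x : X // x ∈ T}, (if σ s then q s.1 else 0)) *
      (Dind τ * ∏ s : {x : X // ¬ x ∈ T}, c s.1 (τ s)) := by
    intro σ τ
    by_cases hσ : ∀ s, σ s = true
    · have hσ' : σ = fun _ => true := funext hσ
      have hmem1 : E.symm (σ, τ) ∈ {ω : X → Bool | ∀ x ∈ T, ω x = true} := by
        intro x hx
        simp [hE, Equiv.piEquivPiSubtypeProd_symm_apply, hx, hσ ⟨x, hx⟩]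
      by_cases hmem2 : E.symm (σ, τ) ∈ D
      · rw [Set.indicator_of_mem (Set.mem_inter hmem1 hmem2), wgt_split]
        have : Dind τ = 1 := by
          simp only [hDind, if_pos ((hmemD σ τ).1 hmem2)]
        rw [this, one_mul]
        congr 1
        apply Finset.prod_congr rfl
        intro s _
        simp [hσ s]
      · rw [Set.indicator_of_notMem (fun hmem => hmem2 hmem.2)]
        have : Dind τ = 0 := by
          simp only [hDind, if_neg (fun hh => hmem2 ((hmemD σ τ).2 hh))]
        rw [this]; ring
    · push_neg at hσ
      obtain ⟨s0, hs0⟩ := hσ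
      have hnot : E.symm (σ, τ) ∉ ({ω : X → Bool | ∀ x ∈ T, ω x = true} ∩ D) := by
        intro hmem
        have h1 := hmem.1 s0.1 s0.2
        rw [show (E.symm (σ, τ)) s0.1 = σ s0 by
          simp [hE, Equiv.piEquivPiSubtypeProd_symm_apply, s0.2]] at h1
        exact hs0 h1
      rw [Set.indicator_of_notMem hnot]
      have hz : (∏ s : {x : X // x ∈ T}, (if σ s then q s.1 else 0)) = 0 :=
        Finset.prod_eq_zero (Finset.mem_univ s0) (by simp [hs0])
      rw [hz, zero_mul]
  have key2 : ∀ σ τ, Set.indicator D (wgt q) (E.symm (σ, τ)) =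
      (∏ s : {x : X // x ∈ T}, c s.1 (σ s)) *
      (Dind τ * ∏ s : {x : X // ¬ x ∈ T}, c s.1 (τ s)) := by
    intro σ τ
    by_cases hmem2 : E.symm (σ, τ) ∈ D
    · rw [Set.indicator_of_mem hmem2, wgt_split]
      have : Dind τ = 1 := by
        simp only [hDind, if_pos ((hmemD σ τ).1 hmem2)]
      rw [this, one_mul]
    · rw [Set.indicator_of_notMem hmem2]
      have : Dind τ = 0 := by
        simp only [hDind, if_neg (fun hh => hmem2 ((hmemD σ τ).2 hh))]
      rw [this]; ring
  rw [hsum, hsum]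
  simp only [key1, key2]
  rw [← Finset.sum_mul_sum, ← Finset.sum_mul_sum]
  have h1 : (∑ σ : {x : X // x ∈ T} → Bool, ∏ s, (if σ s then q s.1 else 0)) = ∏ x ∈ T, q x := by
    rw [sum_prod_bool (fun (s : {x : X // x ∈ T}) b => if b then q s.1 else 0),
      ← Finset.prod_coe_sort T q]
    exact Finset.prod_congr rfl fun s _ => by simp
  have h2 : (∑ σ : {x : X // x ∈ T} → Bool, ∏ s, c s.1 (σ s)) = 1 := by
    rw [sum_prod_bool (fun (s : {x : X // x ∈ T}) b => c s.1 b)]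
    simp [hc]
  rw [h1, h2, one_mul]

lemma pr_cyl {q : X → ℝ} (T : Finset X) :
    pr q {ω : X → Bool | ∀ x ∈ T, ω x = true} = ∏ x ∈ T, q x := by
  have := pr_cyl_inter (q := q) T Set.univ (by intro ω ω' _; simp)
  simpa [pr_univ] using this

end Wgt3

section Wgt4
variable {X : Type*} [Fintype X] [DecidableEq X]

lemma isUpperSet_cyl (T : Finset X) : IsUpperSet {ω : X → Bool | ∀ x ∈ T, ω x = true} := by
  intro a b hab ha x hx
  have h1 := hab x
  have h2 := ha x hx
  rw [h2] at h1
  exact le_antisymm (Bool.le_true _) h1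

lemma isLowerSet_iInterCompl {I : Type*} (E : Finset I) (B : I → Set (X → Bool))
    (hB : ∀ j, IsUpperSet (B j)) : IsLowerSet (⋂ j ∈ E, (B j)ᶜ) := by
  intro a b hba ha
  simp only [Set.mem_iInter] at ha ⊢
  intro j hj hmem
  exact ha j hj (hB j hba hmem)

variable {q : X → ℝ}

/-- The key correlation step in Janson's inequality. -/
lemma janson_key (hq0 : ∀ x, 0 ≤ q x) (hq1 : ∀ x, q x ≤ 1)
    {I : Type*} [DecidableEq I] (Z : I → Finset X) (i : I) (S' : Finset I) :
    (pr q {ω : X → Bool | ∀ x ∈ Z i, ω x = true}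
      - ∑ j ∈ S', if (Z i ∩ Z j).Nonempty then
          pr q ({ω : X → Bool | ∀ x ∈ Z i, ω x = true} ∩ {ω | ∀ x ∈ Z j, ω x = true}) else 0)
      * pr q (⋂ j ∈ S'.filter (fun j => ¬ (Z i ∩ Z j).Nonempty),
          {ω : X → Bool | ∀ x ∈ Z j, ω x = true}ᶜ)
    ≤ pr q ({ω : X → Bool | ∀ x ∈ Z i, ω x = true} ∩
        ⋂ j ∈ S', {ω : X → Bool | ∀ x ∈ Z j, ω x = true}ᶜ) := by
  classical
  set A : I → Set (X → Bool) := fun j => {ω : X → Bool | ∀ x ∈ Z j, ω x = true} with hA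
  set D : Finset I := S'.filter (fun j => (Z i ∩ Z j).Nonempty) with hDdef
  set E : Finset I := S'.filter (fun j => ¬ (Z i ∩ Z j).Nonempty) with hEdef
  set CE : Set (X → Bool) := ⋂ j ∈ E, (A j)ᶜ with hCE
  set C : Set (X → Bool) := ⋂ j ∈ S', (A j)ᶜ with hC
  have hCsub : C ⊆ CE := by
    apply Set.iInter₂_mono'
    intro j hj
    exact ⟨j, Finset.mem_filter.1 hj |>.1, subset_rfl⟩
  -- Step 1 : union bound
  have step1 : pr q (A i ∩ CE) - ∑ j ∈ D, pr q (A i ∩ A j ∩ CE) ≤ pr q (A i ∩ C) := by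
    have hsplit : A i ∩ C = (A i ∩ CE) \ (⋃ j ∈ D, A j) := by
      ext ω
      simp only [hC, hCE, Set.mem_inter_iff, Set.mem_iInter, Set.mem_diff, Set.mem_iUnion,
        Set.mem_compl_iff, hDdef, hEdef, Finset.mem_filter, not_exists]
      constructor
      · rintro ⟨h1, h2⟩
        exact ⟨⟨h1, fun j hj => h2 j hj.1⟩, fun j hj => h2 j hj.1⟩
      · rintro ⟨⟨h1, h2⟩, h3⟩
        refine ⟨h1, fun j hj => ?_⟩
        by_cases hm : (Z i ∩ Z j).Nonempty
        · exact fun hmem => h3 j ⟨hj, hm⟩ hmem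
        · exact h2 j ⟨hj, hm⟩
    rw [hsplit]
    have hdiff : pr q ((A i ∩ CE) \ (⋃ j ∈ D, A j))
        = pr q (A i ∩ CE) - pr q ((A i ∩ CE) ∩ ⋃ j ∈ D, A j) := by
      have := pr_inter_add_diff (q := q) (A i ∩ CE) (⋃ j ∈ D, A j)
      linarith
    rw [hdiff]
    have hub : pr q ((A i ∩ CE) ∩ ⋃ j ∈ D, A j) ≤ ∑ j ∈ D, pr q (A i ∩ A j ∩ CE) := by
      have h1 : (A i ∩ CE) ∩ ⋃ j ∈ D, A j ⊆ ⋃ j ∈ D, (A i ∩ A j ∩ CE) := by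
        rintro ω ⟨⟨h1, h2⟩, h3⟩
        simp only [Set.mem_iUnion] at h3 ⊢
        obtain ⟨j, hj, hmem⟩ := h3
        exact ⟨j, hj, ⟨h1, hmem⟩, h2⟩
      calc pr q ((A i ∩ CE) ∩ ⋃ j ∈ D, A j) ≤ pr q (⋃ j ∈ D, (A i ∩ A j ∩ CE)) :=
            pr_mono hq0 hq1 h1
        _ ≤ ∑ j ∈ D, pr q (A i ∩ A j ∩ CE) := pr_biUnion_le hq0 hq1 _ _
    linarith
  -- upper/lower set facts
  have hAup : ∀ j, IsUpperSet (A j) := fun j => isUpperSet_cyl (Z j)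
  have hCElow : IsLowerSet CE := isLowerSet_iInterCompl E A hAup
  -- Step 2 : independence
  have step2 : pr q (A i ∩ CE) = pr q (A i) * pr q CE := by
    have := pr_cyl_inter (q := q) (Z i) CE ?_
    · rw [hA, this, pr_cyl]
    · intro ω ω' hagree
      simp only [hCE, Set.mem_iInter, Set.mem_compl_iff, hA, Set.mem_setOf_eq]
      constructor
      · intro hh j hj hmem
        refine hh j hj fun x hx => ?_
        rw [hagree x ?_]
        · exact hmem x hx
        · intro hxi
          have hne : (Z i ∩ Z j).Nonempty := ⟨x, Finset.mem_inter.2 ⟨hxi, hx⟩⟩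
          exact (Finset.mem_filter.1 hj).2 hne
      · intro hh j hj hmem
        refine hh j hj fun x hx => ?_
        rw [← hagree x ?_]
        · exact hmem x hx
        · intro hxi
          have hne : (Z i ∩ Z j).Nonempty := ⟨x, Finset.mem_inter.2 ⟨hxi, hx⟩⟩
          exact (Finset.mem_filter.1 hj).2 hne
  -- Step 3 : FKG
  have step3 : ∀ j ∈ D, pr q (A i ∩ A j ∩ CE) ≤ pr q (A i ∩ A j) * pr q CE := by
    intro j _
    exact pr_inter_le hq0 hq1 ((hAup i).inter (hAup j)) hCElow
  have hsum : ∑ j ∈ D, pr q (A i ∩ A j ∩ CE)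
      ≤ (∑ j ∈ S', if (Z i ∩ Z j).Nonempty then pr q (A i ∩ A j) else 0) * pr q CE := by
    rw [Finset.sum_mul, hDdef, Finset.sum_filter]
    apply Finset.sum_le_sum
    intro j hj
    by_cases hm : (Z i ∩ Z j).Nonempty
    · simpa [hm] using step3 j (Finset.mem_filter.2 ⟨hj, hm⟩)
    · simp [hm]
  have hfin : (pr q (A i) - ∑ j ∈ S', if (Z i ∩ Z j).Nonempty then pr q (A i ∩ A j) else 0)
      * pr q CE ≤ pr q (A i ∩ C) := by
    have expand : (pr q (A i) - ∑ j ∈ S', if (Z i ∩ Z j).Nonempty then pr q (A i ∩ A j) else 0)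
        * pr q CE = pr q (A i) * pr q CE
          - (∑ j ∈ S', if (Z i ∩ Z j).Nonempty then pr q (A i ∩ A j) else 0) * pr q CE := by
      ring
    rw [expand, ← step2]
    linarith
  exact hfin

end Wgt4

section Wgt5
variable {X : Type*} [Fintype X] [DecidableEq X] {q : X → ℝ}

lemma janson_core (hq0 : ∀ x, 0 ≤ q x) (hq1 : ∀ x, q x ≤ 1)
    {I : Type*} [DecidableEq I] (Z : I → Finset X) (S : Finset I) :
    pr q (⋂ j ∈ S, {ω : X → Bool | ∀ x ∈ Z j, ω x = true}ᶜ)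
      ≤ Real.exp (-(∑ i ∈ S, pr q {ω : X → Bool | ∀ x ∈ Z i, ω x = true})
        + (∑ i ∈ S, ∑ j ∈ S, if i ≠ j ∧ (Z i ∩ Z j).Nonempty then
            pr q ({ω : X → Bool | ∀ x ∈ Z i, ω x = true}
              ∩ {ω : X → Bool | ∀ x ∈ Z j, ω x = true}) else 0) / 2) := by
  classical
  set A : I → Set (X → Bool) := fun j => {ω : X → Bool | ∀ x ∈ Z j, ω x = true} with hA
  set f : I → I → ℝ := fun i j => if i ≠ j ∧ (Z i ∩ Z j).Nonempty then pr q (A i ∩ A j) else 0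
    with hf
  induction S using Finset.induction_on with
  | empty => simp [pr_univ]
  | @insert a S' ha ih =>
    set C : Set (X → Bool) := ⋂ j ∈ S', (A j)ᶜ with hC
    set CE : Set (X → Bool) := ⋂ j ∈ S'.filter (fun j => ¬ (Z a ∩ Z j).Nonempty), (A j)ᶜ
      with hCE
    set s : ℝ := ∑ j ∈ S', if (Z a ∩ Z j).Nonempty then pr q (A a ∩ A j) else 0 with hs
    have hCsub : C ⊆ CE := by
      apply Set.iInter₂_mono'
      intro j hj
      exact ⟨j, (Finset.mem_filter.1 hj).1, subset_rfl⟩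
    have hs0 : 0 ≤ s := by
      apply Finset.sum_nonneg
      intro j _
      by_cases hm : (Z a ∩ Z j).Nonempty <;>
        simp [hm, pr_nonneg hq0 hq1]
    have hprC0 : 0 ≤ pr q C := pr_nonneg hq0 hq1 C
    have hAa1 : pr q (A a) ≤ 1 := by
      rw [← pr_univ (q := q)]
      exact pr_mono hq0 hq1 (Set.subset_univ _)
    set r : ℝ := max 0 (pr q (A a) - s) with hr
    have hr1 : r ≤ 1 := by
      rw [hr]
      apply max_le zero_le_one
      linarith
    have hrge : pr q (A a) - s ≤ r := le_max_right _ _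
    have claim1 : r * pr q C ≤ pr q (A a ∩ C) := by
      have hkey := janson_key hq0 hq1 Z a S'
      by_cases hsign : 0 ≤ pr q (A a) - s
      · have : r = pr q (A a) - s := max_eq_right hsign
        rw [this]
        calc (pr q (A a) - s) * pr q C ≤ (pr q (A a) - s) * pr q CE := by
              apply mul_le_mul_of_nonneg_left (pr_mono hq0 hq1 hCsub) hsign
          _ ≤ pr q (A a ∩ C) := hkey
      · have : r = 0 := max_eq_left (by linarith)
        rw [this, zero_mul]
        exact pr_nonneg hq0 hq1 _
    have hsetins : (⋂ j ∈ insert a S', (A j)ᶜ) = C \ A a := by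
      rw [Finset.set_biInter_insert]
      ext ω
      simp only [Set.mem_inter_iff, Set.mem_compl_iff, Set.mem_diff]
      tauto
    have hprdiff : pr q (C \ A a) = pr q C - pr q (A a ∩ C) := by
      have h1 := pr_inter_add_diff (q := q) C (A a)
      have h2 : C ∩ A a = A a ∩ C := Set.inter_comm _ _
      rw [h2] at h1
      linarith
    have hmain : pr q (⋂ j ∈ insert a S', (A j)ᶜ) ≤ (1 - r) * pr q C := by
      rw [hsetins, hprdiff]
      nlinarith
    -- exponent bookkeeping
    have hΔ : ∑ i ∈ insert a S', ∑ j ∈ insert a S', f i j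
        = (∑ i ∈ S', ∑ j ∈ S', f i j) + 2 * s := by
      rw [Finset.sum_insert ha]
      have h1 : ∑ j ∈ insert a S', f a j = s := by
        rw [Finset.sum_insert ha]
        have : f a a = 0 := by simp [hf]
        rw [this, zero_add, hs]
        apply Finset.sum_congr rfl
        intro j hj
        have hne : a ≠ j := fun he => ha (he ▸ hj)
        simp [hf, hne]
      have h2 : ∀ i ∈ S', ∑ j ∈ insert a S', f i j = f i a + ∑ j ∈ S', f i j := by
        intro i _
        rw [Finset.sum_insert ha]
      rw [h1, Finset.sum_congr rfl h2, Finset.sum_add_distrib]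
      have h3 : ∑ i ∈ S', f i a = s := by
        rw [hs]
        apply Finset.sum_congr rfl
        intro j hj
        have hne : j ≠ a := fun he => ha (he ▸ hj)
        have h4 : (Z j ∩ Z a).Nonempty ↔ (Z a ∩ Z j).Nonempty := by
          rw [Finset.inter_comm]
        have h5 : A j ∩ A a = A a ∩ A j := Set.inter_comm _ _
        simp [hf, hne, h4, h5]
      rw [h3]
      ring
    have hμ : ∑ i ∈ insert a S', pr q (A i) = pr q (A a) + ∑ i ∈ S', pr q (A i) :=
      Finset.sum_insert ha
    rw [hμ, hΔ]
    have hfinal : (1 - r) * pr q C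
        ≤ Real.exp (-(pr q (A a) + ∑ i ∈ S', pr q (A i))
          + ((∑ i ∈ S', ∑ j ∈ S', f i j) + 2 * s) / 2) := by
      have e1 : (1 - r) * pr q C
          ≤ (1 - r) * Real.exp (-(∑ i ∈ S', pr q (A i)) + (∑ i ∈ S', ∑ j ∈ S', f i j) / 2) := by
        apply mul_le_mul_of_nonneg_left ih (by linarith)
      have e2 : (1 - r) ≤ Real.exp (-r) := by
        have := Real.add_one_le_exp (-r)
        linarith
      have e3 : Real.exp (-r) ≤ Real.exp (-(pr q (A a) - s)) := by
        apply Real.exp_le_exp.2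
        linarith
      calc (1 - r) * pr q C
          ≤ (1 - r) * Real.exp (-(∑ i ∈ S', pr q (A i)) + (∑ i ∈ S', ∑ j ∈ S', f i j) / 2) := e1
        _ ≤ Real.exp (-(pr q (A a) - s))
            * Real.exp (-(∑ i ∈ S', pr q (A i)) + (∑ i ∈ S', ∑ j ∈ S', f i j) / 2) := by
            apply mul_le_mul_of_nonneg_right (le_trans e2 e3) (Real.exp_pos _).le
        _ = Real.exp (-(pr q (A a) + ∑ i ∈ S', pr q (A i))
            + ((∑ i ∈ S', ∑ j ∈ S', f i j) + 2 * s) / 2) := by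
            rw [← Real.exp_add]
            congr 1
            ring
    exact le_trans hmain hfinal

end Wgt5

section Avg
open Finset
variable {I : Type*} [Fintype I] [DecidableEq I]

private noncomputable def Wt (t : ℝ) (S : Finset I) : ℝ :=
  (∏ _i ∈ S, t) * ∏ _i ∈ (Finset.univ : Finset I) \ S, (1 - t)

private lemma Wt_nonneg {t : ℝ} (h0 : 0 ≤ t) (h1 : t ≤ 1) (S : Finset I) : 0 ≤ Wt t S :=
  mul_nonneg (Finset.prod_nonneg fun _ _ => h0)
    (Finset.prod_nonneg fun _ _ => by linarith)

private lemma Wt_pos {t : ℝ} (h0 : 0 < t) (h1 : t < 1) (S : Finset I) : 0 < Wt t S :=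
  mul_pos (Finset.prod_pos fun _ _ => h0) (Finset.prod_pos fun _ _ => by linarith)

private lemma Wt_sum (t : ℝ) :
    ∑ S ∈ (Finset.univ : Finset I).powerset, Wt t S = 1 := by
  have h := Finset.prod_add (fun _ : I => t) (fun _ : I => 1 - t) (Finset.univ : Finset I)
  simp only [add_sub_cancel, Finset.prod_const_one] at h
  refine Eq.trans ?_ h.symm
  rfl

private lemma Wt_sum_mem (t : ℝ) (i : I) :
    ∑ S ∈ (Finset.univ : Finset I).powerset, (if i ∈ S then Wt t S else 0) = t := by
  classical
  have h := Finset.prod_add (fun _ : I => t) (fun j : I => if j = i then 0 else 1 - t)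
    (Finset.univ : Finset I)
  have hL : ∏ j : I, (t + if j = i then 0 else 1 - t) = t := by
    rw [Finset.prod_eq_single i]
    · simp
    · intro j _ hj; simp [hj]
    · simp
  rw [hL] at h
  refine Eq.trans ?_ h.symm
  apply Finset.sum_congr rfl
  intro S hS
  by_cases hi : i ∈ S
  · rw [if_pos hi, Wt]
    congr 1
    apply Finset.prod_congr rfl
    intro j hj
    have : j ≠ i := by
      intro he; subst he
      exact (Finset.mem_sdiff.1 hj).2 hi
    simp [this]
  · rw [if_neg hi]
    have hiin : i ∈ (Finset.univ : Finset I) \ S := Finset.mem_sdiff.2 ⟨Finset.mem_univ i, hi⟩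
    rw [Finset.prod_eq_zero hiin (by simp), mul_zero]

private lemma Wt_sum_mem_pair (t : ℝ) (i j : I) (hij : i ≠ j) :
    ∑ S ∈ (Finset.univ : Finset I).powerset,
      (if i ∈ S ∧ j ∈ S then Wt t S else 0) = t ^ 2 := by
  classical
  have h := Finset.prod_add (fun _ : I => t) (fun k : I => if k = i ∨ k = j then 0 else 1 - t)
    (Finset.univ : Finset I)
  have hL : ∏ k : I, (t + if k = i ∨ k = j then 0 else 1 - t) = t ^ 2 := by
    rw [show ((Finset.univ : Finset I) = insert i (Finset.univ.erase i)) by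
      rw [Finset.insert_erase (Finset.mem_univ i)]]
    rw [Finset.prod_insert (Finset.notMem_erase i _)]
    rw [Finset.prod_eq_single j]
    · simp [hij.symm]; ring
    · intro k hk hkj
      have hki : k ≠ i := Finset.ne_of_mem_erase hk
      simp [hki, hkj]
    · intro hj'
      exact absurd (Finset.mem_erase.2 ⟨hij.symm, Finset.mem_univ j⟩) hj'
  rw [hL] at h
  refine Eq.trans ?_ h.symm
  apply Finset.sum_congr rfl
  intro S hS
  by_cases hi : i ∈ S ∧ j ∈ S
  · rw [if_pos hi, Wt]
    congr 1
    apply Finset.prod_congr rfl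
    intro k hk
    have h1 : k ≠ i := fun he => (Finset.mem_sdiff.1 hk).2 (he ▸ hi.1)
    have h2 : k ≠ j := fun he => (Finset.mem_sdiff.1 hk).2 (he ▸ hi.2)
    simp [h1, h2]
  · rw [if_neg hi]
    rw [not_and_or] at hi
    obtain hi | hi := hi
    · have hiin : i ∈ (Finset.univ : Finset I) \ S := Finset.mem_sdiff.2 ⟨Finset.mem_univ i, hi⟩
      rw [Finset.prod_eq_zero hiin (by simp), mul_zero]
    · have hiin : j ∈ (Finset.univ : Finset I) \ S := Finset.mem_sdiff.2 ⟨Finset.mem_univ j, hi⟩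
      rw [Finset.prod_eq_zero hiin (by simp), mul_zero]

private lemma Wt_avg_lin (t : ℝ) (v : I → ℝ) :
    ∑ S ∈ (Finset.univ : Finset I).powerset, Wt t S * (∑ i ∈ S, v i)
      = t * ∑ i, v i := by
  classical
  have h1 : ∀ S : Finset I,
      Wt t S * (∑ i ∈ S, v i) = ∑ i : I, (if i ∈ S then Wt t S else 0) * v i := by
    intro S
    calc Wt t S * ∑ i ∈ S, v i = ∑ i ∈ S, Wt t S * v i := Finset.mul_sum _ _ _
      _ = ∑ i : I, if i ∈ S then Wt t S * v i else 0 := by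
          rw [Finset.sum_ite_mem, Finset.univ_inter]
      _ = ∑ i : I, (if i ∈ S then Wt t S else 0) * v i := by
          apply Finset.sum_congr rfl
          intro i _
          by_cases hi : i ∈ S <;> simp [hi]
  calc ∑ S ∈ (Finset.univ : Finset I).powerset, Wt t S * (∑ i ∈ S, v i)
      = ∑ S ∈ (Finset.univ : Finset I).powerset, ∑ i : I, (if i ∈ S then Wt t S else 0) * v i :=
        Finset.sum_congr rfl fun S _ => h1 S
    _ = ∑ i : I, ∑ S ∈ (Finset.univ : Finset I).powerset, (if i ∈ S then Wt t S else 0) * v i :=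
        Finset.sum_comm
    _ = ∑ i : I, (∑ S ∈ (Finset.univ : Finset I).powerset, (if i ∈ S then Wt t S else 0)) * v i :=
        Finset.sum_congr rfl fun i _ => (Finset.sum_mul _ _ _).symm
    _ = ∑ i : I, t * v i := Finset.sum_congr rfl fun i _ => by rw [Wt_sum_mem]
    _ = t * ∑ i, v i := (Finset.mul_sum _ _ _).symm

private lemma Wt_avg_quad (t : ℝ) (c : I → I → ℝ) (hdiag : ∀ i, c i i = 0) :
    ∑ S ∈ (Finset.univ : Finset I).powerset, Wt t S * (∑ i ∈ S, ∑ j ∈ S, c i j)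
      = t ^ 2 * ∑ i : I, ∑ j : I, c i j := by
  classical
  have h1 : ∀ S : Finset I,
      Wt t S * (∑ i ∈ S, ∑ j ∈ S, c i j)
        = ∑ i : I, ∑ j : I, (if i ∈ S ∧ j ∈ S then Wt t S else 0) * c i j := by
    intro S
    have e1 : ∑ i : I, ∑ j : I, (if i ∈ S ∧ j ∈ S then c i j else 0)
        = ∑ i ∈ S, ∑ j ∈ S, c i j := by
      have e2 : ∀ i : I, ∑ j : I, (if i ∈ S ∧ j ∈ S then c i j else 0)
          = if i ∈ S then ∑ j ∈ S, c i j else 0 := by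
        intro i
        by_cases hi : i ∈ S
        · rw [if_pos hi]
          simp only [hi, true_and]
          rw [Finset.sum_ite_mem, Finset.univ_inter]
        · simp [hi]
      rw [Finset.sum_congr rfl (fun i _ => e2 i), Finset.sum_ite_mem, Finset.univ_inter]
    calc Wt t S * (∑ i ∈ S, ∑ j ∈ S, c i j)
        = ∑ i : I, ∑ j : I, Wt t S * (if i ∈ S ∧ j ∈ S then c i j else 0) := by
          rw [← e1, Finset.mul_sum]
          exact Finset.sum_congr rfl fun i _ => Finset.mul_sum _ _ _
      _ = ∑ i : I, ∑ j : I, (if i ∈ S ∧ j ∈ S then Wt t S else 0) * c i j := by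
          refine Finset.sum_congr rfl fun i _ => Finset.sum_congr rfl fun j _ => ?_
          by_cases h : i ∈ S ∧ j ∈ S <;> simp [h]
  calc ∑ S ∈ (Finset.univ : Finset I).powerset, Wt t S * (∑ i ∈ S, ∑ j ∈ S, c i j)
      = ∑ S ∈ (Finset.univ : Finset I).powerset,
          ∑ i : I, ∑ j : I, (if i ∈ S ∧ j ∈ S then Wt t S else 0) * c i j :=
        Finset.sum_congr rfl fun S _ => h1 S
    _ = ∑ i : I, ∑ S ∈ (Finset.univ : Finset I).powerset,
          ∑ j : I, (if i ∈ S ∧ j ∈ S then Wt t S else 0) * c i j := Finset.sum_comm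
    _ = ∑ i : I, ∑ j : I, ∑ S ∈ (Finset.univ : Finset I).powerset,
          (if i ∈ S ∧ j ∈ S then Wt t S else 0) * c i j :=
        Finset.sum_congr rfl fun i _ => Finset.sum_comm
    _ = ∑ i : I, ∑ j : I,
          (∑ S ∈ (Finset.univ : Finset I).powerset, (if i ∈ S ∧ j ∈ S then Wt t S else 0))
            * c i j :=
        Finset.sum_congr rfl fun i _ => Finset.sum_congr rfl fun j _ => (Finset.sum_mul _ _ _).symm
    _ = ∑ i : I, ∑ j : I, t ^ 2 * c i j := by
        refine Finset.sum_congr rfl fun i _ => Finset.sum_congr rfl fun j _ => ?_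
        by_cases hij : i = j
        · subst hij
          rw [hdiag i, mul_zero, mul_zero]
        · rw [Wt_sum_mem_pair t i j hij]
    _ = t ^ 2 * ∑ i : I, ∑ j : I, c i j := by
        rw [Finset.mul_sum]
        exact Finset.sum_congr rfl fun i _ => (Finset.mul_sum _ _ _).symm

lemma exists_good_subset (v : I → ℝ) (c : I → I → ℝ)
    (hdiag : ∀ i, c i i = 0)
    {t : ℝ} (h0 : 0 < t) (h1 : t < 1) :
    ∃ S : Finset I, (∑ i ∈ S, ∑ j ∈ S, c i j) / 2 - ∑ i ∈ S, v i
      ≤ t ^ 2 * (∑ i : I, ∑ j : I, c i j) / 2 - t * ∑ i, v i := by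
  classical
  by_contra hcon
  push_neg at hcon
  have hlt : ∑ S ∈ (Finset.univ : Finset I).powerset,
      Wt t S * (t ^ 2 * (∑ i : I, ∑ j : I, c i j) / 2 - t * ∑ i, v i)
      < ∑ S ∈ (Finset.univ : Finset I).powerset,
        Wt t S * ((∑ i ∈ S, ∑ j ∈ S, c i j) / 2 - ∑ i ∈ S, v i) := by
    apply Finset.sum_lt_sum_of_nonempty
    · exact ⟨∅, Finset.empty_mem_powerset _⟩
    · intro S _
      have hc := hcon S
      have hw := Wt_pos h0 h1 S
      exact mul_lt_mul_of_pos_left hc hw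
  have eL : ∑ S ∈ (Finset.univ : Finset I).powerset,
      Wt t S * (t ^ 2 * (∑ i : I, ∑ j : I, c i j) / 2 - t * ∑ i, v i)
      = t ^ 2 * (∑ i : I, ∑ j : I, c i j) / 2 - t * ∑ i, v i := by
    rw [← Finset.sum_mul, Wt_sum, one_mul]
  have eR : ∑ S ∈ (Finset.univ : Finset I).powerset,
      Wt t S * ((∑ i ∈ S, ∑ j ∈ S, c i j) / 2 - ∑ i ∈ S, v i)
      = t ^ 2 * (∑ i : I, ∑ j : I, c i j) / 2 - t * ∑ i, v i := by
    have : ∀ S ∈ (Finset.univ : Finset I).powerset,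
        Wt t S * ((∑ i ∈ S, ∑ j ∈ S, c i j) / 2 - ∑ i ∈ S, v i)
          = Wt t S * (∑ i ∈ S, ∑ j ∈ S, c i j) / 2 - Wt t S * (∑ i ∈ S, v i) := by
      intro S _; ring
    rw [Finset.sum_congr rfl this, Finset.sum_sub_distrib, ← Finset.sum_div,
      Wt_avg_lin, Wt_avg_quad t c hdiag]
  rw [eL, eR] at hlt
  exact lt_irrefl _ hlt

end Avg

section Bridge
open MeasureTheory
open scoped ENNReal

lemma measure_toReal_eq_pr {X : Type*} [Fintype X] [DecidableEq X]
    (p : X → ℝ≥0∞) (hp : ∀ x, p x ≤ 1) (S : Set (X → Bool)) :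
    ((Measure.pi fun x => (PMF.bernoulli (p x).toNNReal
      (by simpa using ENNReal.toNNReal_mono ENNReal.one_ne_top (hp x))).toMeasure) S).toReal
      = pr (fun x => (p x).toReal) S := by
  classical
  set P : Measure (X → Bool) := Measure.pi fun x => (PMF.bernoulli (p x).toNNReal
      (by simpa using ENNReal.toNNReal_mono ENNReal.one_ne_top (hp x))).toMeasure
    with hPdef
  haveI : IsProbabilityMeasure P := by
    rw [hPdef]
    infer_instance
  have hsingle : ∀ ω : X → Bool, P {ω} = ∏ x, (if ω x then p x else 1 - p x) := by
    intro ω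
    have hset : ({ω} : Set (X → Bool)) = Set.univ.pi fun x => ({ω x} : Set Bool) := by
      ext ω'
      simp [Set.mem_pi, funext_iff, eq_comm]
    rw [hset, hPdef, Measure.pi_pi]
    apply Finset.prod_congr rfl
    intro x _
    rw [PMF.toMeasure_apply_singleton _ _ (measurableSet_singleton _)]
    cases hωx : ω x <;> simp [PMF.bernoulli_apply, hωx,
      ENNReal.coe_toNNReal (ne_top_of_le_ne_top ENNReal.one_ne_top (hp x))] <;>
      erw [PMF.bernoulli_apply] <;>
      simp [ENNReal.coe_sub, ENNReal.coe_toNNReal (ne_top_of_le_ne_top ENNReal.one_ne_top (hp x))]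
  have hfin : ∀ ω : X → Bool, P {ω} ≠ ⊤ := fun ω => measure_ne_top P _
  set F : Finset (X → Bool) := Finset.univ.filter (fun ω => ω ∈ S) with hF
  have hSdecomp : S = ⋃ ω ∈ F, ({ω} : Set (X → Bool)) := by
    ext ω
    simp [hF]
  have hPS : P S = ∑ ω ∈ F, P {ω} := by
    rw [hSdecomp]
    rw [measure_biUnion_finset]
    · intro a _ b _ hab
      simp [Function.onFun, Set.disjoint_singleton, hab]
    · intro ω _
      exact measurableSet_singleton ω
  rw [hPS, ENNReal.toReal_sum (fun ω _ => hfin ω)]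
  have hterm : ∀ ω : X → Bool, (P {ω}).toReal = wgt (fun x => (p x).toReal) ω := by
    intro ω
    rw [hsingle, ENNReal.toReal_prod, wgt]
    apply Finset.prod_congr rfl
    intro x _
    cases hωx : ω x
    · rw [if_neg (by simp [hωx]), if_neg (by simp [hωx]),
        ENNReal.toReal_sub_of_le (hp x) (by norm_num)]
      simp
    · simp [hωx]
  rw [Finset.sum_congr rfl (fun ω _ => hterm ω)]
  rw [pr, hF]
  rw [Finset.sum_filter]
  apply Finset.sum_congr rfl
  intro ω _
  by_cases hω : ω ∈ S <;> simp [hω]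

end Bridge


/-- **Janson's inequality, upper bound.** Let `P` be a random subset of a
finite set `X`, each element `x` included independently with probability `p x`; here the
random subset is modeled by the product of Bernoulli measures on `X → Bool`.  For a finite
family of subsets `Z i ⊆ X`, let `A i` be the event `Z i ⊆ P`, let `μ = Σ_i P(A i)`, and let
`Δ` be the sum of `P(A i ∧ A j)` over ordered pairs `i ≠ j` with `Z i ∩ Z j ≠ ∅`.
If `Δ ≥ μ/2`, then `P(⋀_i ¬ A i) ≤ exp (−μ²/(3Δ))`. -/
theorem janson_upper {X : Type*} [Fintype X] [DecidableEq X] {I : Type*} [Fintype I]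
    [DecidableEq I]
    (p : X → ℝ≥0∞) (hp : ∀ x, p x ≤ 1)
    (P : Measure (X → Bool))
    (hP : P = Measure.pi (fun x => (PMF.bernoulli (p x).toNNReal
      (by simpa using ENNReal.toNNReal_mono ENNReal.one_ne_top (hp x))).toMeasure))
    (Z : I → Finset X)
    (A : I → Set (X → Bool))
    (hA : ∀ i, A i = {ω | ∀ x ∈ Z i, ω x = true})
    (mu Delta : ℝ)
    (hmu : mu = ∑ i : I, (P (A i)).toReal)
    (hDelta : Delta = ∑ i : I, ∑ j : I,
      if i ≠ j ∧ (Z i ∩ Z j).Nonempty then (P (A i ∩ A j)).toReal else 0)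
    (h : mu / 2 ≤ Delta) :
    (P (⋂ i : I, (A i)ᶜ)).toReal ≤ Real.exp (-mu ^ 2 / (3 * Delta)) := by
  classical
  have hq0 : ∀ x, 0 ≤ (p x).toReal := fun x => ENNReal.toReal_nonneg
  have hq1 : ∀ x, (p x).toReal ≤ 1 := by
    intro x
    have h1 : (p x).toReal ≤ (1 : ℝ≥0∞).toReal :=
      ENNReal.toReal_mono (by norm_num) (hp x)
    simpa using h1
  set q : X → ℝ := fun x => (p x).toReal with hqdef
  have hbridge : ∀ S : Set (X → Bool), (P S).toReal = pr q S := by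
    intro S; rw [hP]; exact measure_toReal_eq_pr p hp S
  have hmu' : mu = ∑ i : I, pr q {ω : X → Bool | ∀ x ∈ Z i, ω x = true} := by
    rw [hmu]; exact Finset.sum_congr rfl fun i _ => by rw [hA, hbridge]
  have hDelta' : Delta = ∑ i : I, ∑ j : I, (if i ≠ j ∧ (Z i ∩ Z j).Nonempty then
      pr q ({ω : X → Bool | ∀ x ∈ Z i, ω x = true}
        ∩ {ω : X → Bool | ∀ x ∈ Z j, ω x = true}) else 0) := by
    rw [hDelta]
    refine Finset.sum_congr rfl fun i _ => Finset.sum_congr rfl fun j _ => ?_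
    by_cases hc : i ≠ j ∧ (Z i ∩ Z j).Nonempty
    · rw [if_pos hc, if_pos hc, hA, hA, hbridge]
    · rw [if_neg hc, if_neg hc]
  have hmu0 : 0 ≤ mu := by
    rw [hmu']; exact Finset.sum_nonneg fun i _ => pr_nonneg hq0 hq1 _
  have hgoalset : (⋂ i : I, (A i)ᶜ)
      = ⋂ i : I, ({ω : X → Bool | ∀ x ∈ Z i, ω x = true})ᶜ :=
    Set.iInter_congr fun i => by rw [hA]
  rw [hgoalset, hbridge]
  have main : ∀ S : Finset I,
      pr q (⋂ i : I, ({ω : X → Bool | ∀ x ∈ Z i, ω x = true})ᶜ)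
      ≤ Real.exp (-(∑ i ∈ S, pr q {ω : X → Bool | ∀ x ∈ Z i, ω x = true})
        + (∑ i ∈ S, ∑ j ∈ S, if i ≠ j ∧ (Z i ∩ Z j).Nonempty then
            pr q ({ω : X → Bool | ∀ x ∈ Z i, ω x = true}
              ∩ {ω : X → Bool | ∀ x ∈ Z j, ω x = true}) else 0) / 2) := by
    intro S
    refine le_trans (pr_mono hq0 hq1 ?_) (janson_core hq0 hq1 Z S)
    intro ω hω
    simp only [Set.mem_iInter] at hω ⊢
    intro j _
    exact hω j
  by_cases hmuz : mu = 0
  · rw [hmuz]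
    norm_num
    calc pr q (⋂ i : I, ({ω : X → Bool | ∀ x ∈ Z i, ω x = true})ᶜ)
        ≤ pr q Set.univ := pr_mono hq0 hq1 (Set.subset_univ _)
      _ = 1 := pr_univ
  · have hmu_pos : 0 < mu := lt_of_le_of_ne hmu0 (Ne.symm hmuz)
    have hDpos : 0 < Delta := lt_of_lt_of_le (by linarith) h
    have h3D : (0 : ℝ) < 3 * Delta := by linarith
    by_cases hDle : Delta ≤ mu
    · -- take S = univ
      have hbound := main Finset.univ
      rw [← hmu', ← hDelta'] at hbound
      refine le_trans hbound (Real.exp_le_exp.2 ?_)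
      have hsuff : mu ^ 2 / (3 * Delta) ≤ mu - Delta / 2 := by
        rw [div_le_iff₀ h3D]
        nlinarith [mul_nonneg (by linarith : (0:ℝ) ≤ Delta - mu / 2)
          (by linarith : (0:ℝ) ≤ mu - Delta), sq_nonneg Delta]
      have hneg : -mu ^ 2 / (3 * Delta) = -(mu ^ 2 / (3 * Delta)) := neg_div _ _
      rw [hneg]
      linarith
    · push_neg at hDle
      set t : ℝ := mu / Delta with htdef
      have ht0 : 0 < t := div_pos hmu_pos hDpos
      have ht1 : t < 1 := (div_lt_one hDpos).2 hDle
      obtain ⟨S, hS⟩ := exists_good_subset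
        (fun i => pr q {ω : X → Bool | ∀ x ∈ Z i, ω x = true})
        (fun i j => if i ≠ j ∧ (Z i ∩ Z j).Nonempty then
          pr q ({ω : X → Bool | ∀ x ∈ Z i, ω x = true}
            ∩ {ω : X → Bool | ∀ x ∈ Z j, ω x = true}) else 0)
        (fun i => by simp) ht0 ht1
      rw [← hmu', ← hDelta'] at hS
      have hval : t ^ 2 * Delta / 2 - t * mu = -(mu ^ 2 / (2 * Delta)) := by
        rw [htdef]
        field_simp
        ring
      rw [hval] at hS
      refine le_trans (main S) (Real.exp_le_exp.2 ?_)
      have hcmp : mu ^ 2 / (3 * Delta) ≤ mu ^ 2 / (2 * Delta) := by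
        rw [div_le_div_iff₀ h3D (by linarith)]
        nlinarith [sq_nonneg mu, hDpos]
      have hneg : -mu ^ 2 / (3 * Delta) = -(mu ^ 2 / (3 * Delta)) := neg_div _ _
      rw [hneg]
      linarith
end
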